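/- arXiv:2505.01550 — 4 statements merged into one kernel-verified Lean document; each statement's English description precedes it below -/
import Mathlib

section
/- For every integer c ≥ 1, the exponential generating function of the numbers r_n^{(c)} of colored involutions is ∑_{n≥0} r_n^{(c)} · x^n/n! = exp( ( ((−1)^c + 3)·x + c·x^2 ) / 2 ), as an identity of formal power series over the rational numbers. -/
open Finset

/-- The inversion number of a permutation of `Fin n`:
`inv(π) = #{(i,j) : i < j, π(i) > π(j)}`. -/
def invNum {n : ℕ} (π : Equiv.Perm (Fin n)) : ℕ :=
  ((Finset.univ : Finset (Fin n × Fin n)).filter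
    (fun p => p.1 < p.2 ∧ π p.2 < π p.1)).card

/-- The colored inversion statistic on a colored permutation `σ = (π, f)`:
`inv_c(σ) = inv(π) + ∑ f(j) + c·#{(i,j) : i < j, π(i) < π(j), f(j) ≠ 0}`. -/
def invC (c : ℕ) {n : ℕ} (σ : Equiv.Perm (Fin n) × (Fin n → Fin c)) : ℕ :=
  invNum σ.1 + (∑ j, (σ.2 j : ℕ)) +
    c * ((Finset.univ : Finset (Fin n × Fin n)).filter
      (fun p => p.1 < p.2 ∧ σ.1 p.1 < σ.1 p.2 ∧ (σ.2 p.2 : ℕ) ≠ 0)).card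

/-- The colored Mahonian number `i_c(n,k)`: the number of colored permutations
of size `n` with exactly `k` colored inversions. -/
noncomputable def mahonianC (c n k : ℕ) : ℕ :=
  Nat.card {σ : Equiv.Perm (Fin n) × (Fin n → Fin c) // invC c σ = k}

/-- A colored involution: a colored permutation `σ = (π, f)` with `π ∘ π = id`
and `f(i) + f(π(i)) ≡ 0 (mod c)` for every `i`. -/
def IsColoredInvolution {c n : ℕ} (σ : Equiv.Perm (Fin n) × (Fin n → Fin c)) : Prop :=
  σ.1 * σ.1 = 1 ∧ ∀ i, ((σ.2 i : ℕ) + (σ.2 (σ.1 i) : ℕ)) % c = 0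

/-- `r_n^{(c)}`: the number of colored involutions of size `n`. -/
noncomputable def involutionCountC (c n : ℕ) : ℕ :=
  Nat.card {σ : Equiv.Perm (Fin n) × (Fin n → Fin c) // IsColoredInvolution σ}

/-- The formal exponential `exp(F) = ∑_{m ≥ 0} F^m / m!` of a power series `F`
over `ℚ` with zero constant term: since `F` has zero constant term, the
coefficient of `x^n` in `F^m` vanishes for `m > n`, so the `n`-th coefficient
of `exp F` is the finite sum `∑_{m=0}^{n} (coeff n of F^m) / m!`. -/
noncomputable def expPS (F : PowerSeries ℚ) : PowerSeries ℚ :=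
  PowerSeries.mk fun n =>
    ∑ m ∈ Finset.range (n + 1), (PowerSeries.coeff n) (F ^ m) / (m.factorial : ℚ)

section Anal
open PowerSeries

private lemma dF_eq (A B : ℚ) :
    d⁄dX ℚ (C A * X + C B * X ^ 2) = C A + C (2 * B) * X := by
  have h2 : (2 : ℚ⟦X⟧) = C 2 := (map_ofNat (C) 2).symm
  ext n
  simp [map_add, Derivation.leibniz, coeff_derivative, h2, ← map_mul, mul_comm, mul_assoc]

private lemma key (A B : ℚ) (n m : ℕ) :
    ((n:ℚ)+2) * coeff (n+2) ((C A * X + C B * X^2)^m) =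
      (m:ℚ) * coeff (n+1) ((C A * X + C B * X^2)^(m-1) * (C A + C (2*B) * X)) := by
  have h1 := coeff_derivative ((C A * X + C B * X^2)^m) (n+1)
  rw [Derivation.leibniz_pow, dF_eq] at h1
  simp only [smul_eq_mul, map_nsmul, nsmul_eq_mul] at h1
  rw [← map_natCast (C) m, coeff_C_mul] at h1
  push_cast at h1
  rw [show ((n:ℚ)+1+1) = (n:ℚ)+2 by ring] at h1
  rw [mul_comm ((n:ℚ)+2), h1]

private noncomputable def gco (F : PowerSeries ℚ) (n : ℕ) : ℚ :=
  ∑ m ∈ Finset.range (n + 1), (PowerSeries.coeff n) (F ^ m) / (m.factorial : ℚ)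

private lemma coeff_pow_eq_zero' {F : PowerSeries ℚ} (hF : constantCoeff F = 0) {k m : ℕ}
    (h : k < m) : coeff k (F ^ m) = 0 := by
  have : (X : PowerSeries ℚ) ^ m ∣ F ^ m := pow_dvd_pow_of_dvd (X_dvd_iff.2 hF) m
  exact (X_pow_dvd_iff.1 this) k h

private lemma coeff_mul_lin (A B : ℚ) (G : ℚ⟦X⟧) (n : ℕ) :
    coeff (n+1) (G * (C A + C (2*B) * X)) =
      A * coeff (n+1) G + 2*B * coeff n G := by
  rw [mul_add, map_add, mul_comm G, coeff_C_mul,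
    show G * (C (2*B) * X) = C (2*B) * (G * X) by ring,
    coeff_C_mul, coeff_succ_mul_X]

private lemma gco_rec (A B : ℚ) (n : ℕ) :
    ((n:ℚ)+2) * gco (C A * X + C B * X^2) (n+2) =
      A * gco (C A * X + C B * X^2) (n+1) + 2*B * gco (C A * X + C B * X^2) n := by
  have hF0 : constantCoeff (C A * X + C B * X^2) = 0 := by simp
  unfold gco
  rw [Finset.mul_sum]
  have step1 : ∀ m ∈ Finset.range (n+3),
      ((n:ℚ)+2) * (coeff (n+2) ((C A * X + C B * X^2) ^ m) / (m.factorial : ℚ))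
      = (m:ℚ) * coeff (n+1) ((C A * X + C B * X^2)^(m-1) * (C A + C (2*B) * X))
          / (m.factorial : ℚ) := by
    intro m _
    rw [← mul_div_assoc, key A B n m, mul_div_assoc]
  rw [Finset.sum_congr rfl step1]
  rw [show n+2+1 = n+3 from rfl, Finset.sum_range_succ']
  simp only [Nat.cast_zero, zero_mul, zero_div, add_zero]
  have step2 : ∀ k ∈ Finset.range (n+2),
      ((k+1:ℕ):ℚ) * coeff (n+1) ((C A * X + C B * X^2)^(k+1-1) * (C A + C (2*B) * X))
          / ((k+1).factorial : ℚ)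
      = (A * coeff (n+1) ((C A * X + C B * X^2)^k)
         + 2*B * coeff n ((C A * X + C B * X^2)^k)) / (k.factorial : ℚ) := by
    intro k _
    rw [show k+1-1 = k from rfl, coeff_mul_lin, Nat.factorial_succ]
    have hk : ((k.factorial : ℚ)) ≠ 0 := by positivity
    push_cast
    field_simp
  calc ∑ k ∈ Finset.range (n+2), ((k+1:ℕ):ℚ) * coeff (n+1) ((C A * X + C B * X^2)^(k+1-1) * (C A + C (2*B) * X)) / ((k+1).factorial : ℚ)
      = ∑ k ∈ Finset.range (n+2), (A * coeff (n+1) ((C A * X + C B * X^2)^k)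
         + 2*B * coeff n ((C A * X + C B * X^2)^k)) / (k.factorial : ℚ) := by
        refine Finset.sum_congr rfl step2
    _ = A * ∑ k ∈ Finset.range (n+2), coeff (n+1) ((C A * X + C B * X^2)^k) / (k.factorial : ℚ)
        + 2*B * ∑ k ∈ Finset.range (n+2), coeff n ((C A * X + C B * X^2)^k) / (k.factorial : ℚ) := by
        rw [Finset.mul_sum, Finset.mul_sum, ← Finset.sum_add_distrib]
        refine Finset.sum_congr rfl fun k _ => by ring
    _ = A * ∑ k ∈ Finset.range (n+2), coeff (n+1) ((C A * X + C B * X^2)^k) / (k.factorial : ℚ)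
        + 2*B * ∑ k ∈ Finset.range (n+1), coeff n ((C A * X + C B * X^2)^k) / (k.factorial : ℚ) := by
        congr 1
        congr 1
        rw [Finset.sum_range_succ, coeff_pow_eq_zero' hF0 (Nat.lt_succ_self n), zero_div, add_zero]

private lemma gco_zero (A B : ℚ) : gco (C A * X + C B * X^2) 0 = 1 := by
  simp [gco]

private lemma gco_one (A B : ℚ) : gco (C A * X + C B * X^2) 1 = A := by
  rw [gco, Finset.sum_range_succ, Finset.sum_range_succ, Finset.sum_range_zero]
  simp [coeff_one, coeff_X_pow]

end Anal

section Comb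
open Equiv

set_option linter.unusedSectionVars false

variable {c : ℕ}

def CI (c : ℕ) (α : Type) : Type :=
  {σ : Equiv.Perm α × (α → Fin c) //
    σ.1 * σ.1 = 1 ∧ ∀ i, ((σ.2 i : ℕ) + (σ.2 (σ.1 i) : ℕ)) % c = 0}

lemma invol_apply {α : Type} {π : Equiv.Perm α} (h : π * π = 1) (x : α) : π (π x) = x := by
  have := Equiv.ext_iff.1 h x
  simpa [Equiv.Perm.mul_apply] using this

def CIcongr {α β : Type} (e : α ≃ β) : CI c α ≃ CI c β where
  toFun σ := ⟨⟨e.permCongr σ.1.1, σ.1.2 ∘ e.symm⟩, by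
      ext b
      simp [Equiv.Perm.mul_apply, Equiv.permCongr_apply, invol_apply σ.2.1], by
      intro b
      simpa [Equiv.permCongr_apply] using σ.2.2 (e.symm b)⟩
  invFun σ := ⟨⟨e.symm.permCongr σ.1.1, σ.1.2 ∘ e⟩, by
      ext b
      simp [Equiv.Perm.mul_apply, Equiv.permCongr_apply, invol_apply σ.2.1], by
      intro b
      simpa [Equiv.permCongr_apply] using σ.2.2 (e b)⟩
  left_inv σ := by
    apply Subtype.ext
    refine Prod.ext ?_ ?_
    · ext x; simp [Equiv.permCongr_apply]
    · funext x; simp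
  right_inv σ := by
    apply Subtype.ext
    refine Prod.ext ?_ ?_
    · ext x; simp [Equiv.permCongr_apply]
    · funext x; simp

section A
variable {α : Type}

/-- restriction of an involution of `Option α` fixing `none` -/
def resPerm (π : Equiv.Perm (Option α)) (hπ : π * π = 1) (h0 : π none = none) :
    Equiv.Perm α :=
  Function.Involutive.toPerm
    (fun a => (π (some a)).get (by
      rw [Option.isSome_iff_ne_none]
      intro hn
      have : some a = none := by
        have := invol_apply hπ (some a); rw [hn, h0] at this; exact this.symm
      exact Option.some_ne_none a this))
    (by
      intro a
      apply Option.some_injective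
      rw [Option.some_get, Option.some_get]
      exact invol_apply hπ (some a))

lemma resPerm_apply (π : Equiv.Perm (Option α)) (hπ : π * π = 1) (h0 : π none = none) (a : α) :
    some (resPerm π hπ h0 a) = π (some a) := Option.some_get _

lemma optionCongr_resPerm (π : Equiv.Perm (Option α)) (hπ : π * π = 1) (h0 : π none = none) :
    Equiv.optionCongr (resPerm π hπ h0) = π := by
  apply Equiv.ext; intro o
  cases o with
  | none => simpa using h0.symm
  | some a => simpa using resPerm_apply π hπ h0 a

def equivA : {σ : CI c (Option α) // σ.1.1 none = none} ≃
    ({v : Fin c // ((v : ℕ) + (v : ℕ)) % c = 0} × CI c α) where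
  toFun σ :=
    ⟨⟨σ.1.1.2 none, by have := σ.1.2.2 none; rwa [σ.2] at this⟩,
     ⟨⟨resPerm σ.1.1.1 σ.1.2.1 σ.2, fun a => σ.1.1.2 (some a)⟩, by
        constructor
        · apply Equiv.ext
          intro a
          apply Option.some_injective
          rw [Equiv.Perm.mul_apply, resPerm_apply, resPerm_apply]
          rw [invol_apply σ.1.2.1 (some a)]
          rfl
        · intro a
          have h := σ.1.2.2 (some a)
          rwa [← resPerm_apply σ.1.1.1 σ.1.2.1 σ.2 a] at h⟩⟩
  invFun x :=
    ⟨⟨⟨Equiv.optionCongr x.2.1.1, fun o => o.elim x.1.1 x.2.1.2⟩, by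
        constructor
        · apply Equiv.ext
          intro o
          cases o with
          | none => simp
          | some a => simp [invol_apply x.2.2.1]
        · intro o
          cases o with
          | none => simpa using x.1.2
          | some a => simpa using x.2.2.2 a⟩, by simp⟩
  left_inv σ := by
    apply Subtype.ext
    apply Subtype.ext
    refine Prod.ext ?_ ?_
    · exact optionCongr_resPerm σ.1.1.1 σ.1.2.1 σ.2
    · funext o
      cases o <;> simp
  right_inv x := by
    refine Prod.ext (Subtype.ext ?_) (Subtype.ext (Prod.ext ?_ ?_))
    · simp
    · apply Equiv.ext
      intro a
      apply Option.some_injective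
      rw [resPerm_apply]
      simp
    · funext a
      simp

end A

section B
variable [NeZero c] {α : Type} [DecidableEq α]

lemma neg_add_self_mod (v : Fin c) : ((v : ℕ) + ((-v : Fin c) : ℕ)) % c = 0 := by
  have hv : (v : ℕ) < c := v.isLt
  rcases Nat.eq_zero_or_pos (v : ℕ) with h | h
  · rw [Fin.coe_neg, h]
    simp
  · have h2 : ((-v : Fin c) : ℕ) = c - (v : ℕ) := by
      rw [Fin.coe_neg]
      exact Nat.mod_eq_of_lt (by omega)
    rw [h2, Nat.add_sub_cancel' (le_of_lt hv), Nat.mod_self]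

lemma neg_add_self_mod' (v : Fin c) : (((-v : Fin c) : ℕ) + (v : ℕ)) % c = 0 := by
  rw [Nat.add_comm]; exact neg_add_self_mod v

lemma eq_neg_of_add_mod {v w : Fin c} (h : ((v : ℕ) + (w : ℕ)) % c = 0) : w = -v := by
  have hc : 0 < c := Nat.pos_of_ne_zero (NeZero.ne c)
  have hv : (v : ℕ) < c := v.isLt
  have hw : (w : ℕ) < c := w.isLt
  obtain ⟨k, hk⟩ := Nat.dvd_of_mod_eq_zero h
  have hk2 : k = 0 ∨ k = 1 := by
    rcases k with _ | _ | k
    · left; rfl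
    · right; rfl
    · exfalso; nlinarith
  apply Fin.ext
  rw [Fin.coe_neg]
  rcases hk2 with rfl | rfl
  · simp only [Nat.mul_zero] at hk
    have hv0 : (v : ℕ) = 0 := by omega
    have hw0 : (w : ℕ) = 0 := by omega
    rw [hv0, hw0]
    simp
  · simp only [Nat.mul_one] at hk
    have hvpos : 0 < (v : ℕ) := by omega
    rw [Nat.mod_eq_of_lt (by omega)]
    omega

def mkPermB (j : α) (τ : Equiv.Perm {x : α // x ≠ j}) (hτ : τ * τ = 1) :
    Equiv.Perm (Option α) :=
  Function.Involutive.toPerm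
    (fun o => Option.elim o (some j)
      (fun x => if h : x = j then none else some ((τ ⟨x, h⟩ : {x : α // x ≠ j}) : α)))
    (by
      intro o
      cases o with
      | none => simp
      | some x =>
        by_cases h : x = j
        · subst h; simp
        · simp only [Option.elim, dif_neg h]
          rw [dif_neg (τ ⟨x, h⟩).2, Subtype.coe_eta]
          rw [show τ (τ ⟨x, h⟩) = ((τ * τ) ⟨x, h⟩ : {x : α // x ≠ j}) from rfl, hτ]
          rfl)

lemma mkPermB_none (j : α) (τ : Equiv.Perm {x : α // x ≠ j}) (hτ : τ * τ = 1) :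
    mkPermB j τ hτ none = some j := rfl

lemma mkPermB_some_j (j : α) (τ : Equiv.Perm {x : α // x ≠ j}) (hτ : τ * τ = 1) :
    mkPermB j τ hτ (some j) = none := by
  simp [mkPermB, Function.Involutive.coe_toPerm]

lemma mkPermB_some (j : α) (τ : Equiv.Perm {x : α // x ≠ j}) (hτ : τ * τ = 1)
    (x : α) (h : x ≠ j) :
    mkPermB j τ hτ (some x) = some ((τ ⟨x, h⟩ : {x : α // x ≠ j}) : α) := by
  simp [mkPermB, Function.Involutive.coe_toPerm, dif_neg h]

lemma mkPermB_invol (j : α) (τ : Equiv.Perm {x : α // x ≠ j}) (hτ : τ * τ = 1) :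
    mkPermB j τ hτ * mkPermB j τ hτ = 1 := by
  apply Equiv.ext
  intro o
  rw [Equiv.Perm.mul_apply, Equiv.Perm.one_apply]
  cases o with
  | none => rw [mkPermB_none, mkPermB_some_j]
  | some x =>
    by_cases h : x = j
    · subst h
      rw [mkPermB_some_j, mkPermB_none]
    · rw [mkPermB_some j τ hτ x h, mkPermB_some j τ hτ _ (τ ⟨x, h⟩).2, Subtype.coe_eta,
        show τ (τ ⟨x, h⟩) = ((τ * τ) ⟨x, h⟩ : {x : α // x ≠ j}) from rfl, hτ]
      rfl

variable {π : Equiv.Perm (Option α)}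

def getJ (π : Equiv.Perm (Option α)) (hne : π none ≠ none) : α :=
  (π none).get (Option.isSome_iff_ne_none.2 hne)

lemma getJ_spec (hne : π none ≠ none) : π none = some (getJ π hne) :=
  (Option.some_get _).symm

lemma pi_some_getJ (hπ : π * π = 1) (hne : π none ≠ none) :
    π (some (getJ π hne)) = none := by
  conv_lhs => rw [← getJ_spec hne]
  exact invol_apply hπ none

lemma pi_some_ne_none (hπ : π * π = 1) (hne : π none ≠ none) {x : α}
    (hx : x ≠ getJ π hne) : π (some x) ≠ none := by
  intro h
  have h2 : π (π (some x)) = π none := by rw [h]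
  rw [invol_apply hπ, getJ_spec hne] at h2
  exact hx (Option.some_injective _ h2)

lemma pi_some_ne_getJ (hπ : π * π = 1) (hne : π none ≠ none) {x : α}
    (hx : x ≠ getJ π hne) :
    (π (some x)).get (Option.isSome_iff_ne_none.2 (pi_some_ne_none hπ hne hx)) ≠ getJ π hne := by
  intro h
  have h2 : π (some x) = some (getJ π hne) := by rw [← h, Option.some_get]
  have h3 : π (π (some x)) = π (some (getJ π hne)) := by rw [h2]
  rw [invol_apply hπ, pi_some_getJ hπ hne] at h3
  exact Option.some_ne_none x h3

def resPermB (π : Equiv.Perm (Option α)) (hπ : π * π = 1) (hne : π none ≠ none) :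
    Equiv.Perm {x : α // x ≠ getJ π hne} :=
  Function.Involutive.toPerm
    (fun y => ⟨(π (some y.1)).get (Option.isSome_iff_ne_none.2 (pi_some_ne_none hπ hne y.2)),
      pi_some_ne_getJ hπ hne y.2⟩)
    (by
      intro y
      apply Subtype.ext
      apply Option.some_injective
      rw [Option.some_get, Option.some_get]
      exact invol_apply hπ (some y.1))

lemma resPermB_apply (hπ : π * π = 1) (hne : π none ≠ none) (y : {x : α // x ≠ getJ π hne}) :
    some ((resPermB π hπ hne y : {x : α // x ≠ getJ π hne}) : α) = π (some y.1) :=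
  Option.some_get _

lemma resPermB_invol (hπ : π * π = 1) (hne : π none ≠ none) :
    resPermB π hπ hne * resPermB π hπ hne = 1 := by
  apply Equiv.ext
  intro y
  apply Subtype.ext
  apply Option.some_injective
  rw [Equiv.Perm.mul_apply, resPermB_apply hπ hne, resPermB_apply hπ hne]
  rw [invol_apply hπ (some y.1)]
  rfl

set_option maxHeartbeats 2000000 in
noncomputable def equivB : {σ : CI c (Option α) // σ.1.1 none ≠ none} ≃
    (Σ j : α, Fin c × CI c {x : α // x ≠ j}) where
  toFun σ :=
    ⟨getJ σ.1.1.1 σ.2, σ.1.1.2 none,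
      ⟨⟨resPermB σ.1.1.1 σ.1.2.1 σ.2, fun y => σ.1.1.2 (some y.1)⟩,
        resPermB_invol σ.1.2.1 σ.2, by
          intro y
          have h := σ.1.2.2 (some y.1)
          rwa [← resPermB_apply σ.1.2.1 σ.2 y] at h⟩⟩
  invFun x :=
    ⟨⟨⟨mkPermB x.1 x.2.2.1.1 x.2.2.2.1,
        fun o => Option.elim o x.2.1 (fun y => if h : y = x.1 then -x.2.1 else x.2.2.1.2 ⟨y, h⟩)⟩,
      by
        refine ⟨mkPermB_invol x.1 x.2.2.1.1 x.2.2.2.1, ?_⟩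
        intro o
        cases o with
        | none =>
          rw [show mkPermB x.1 x.2.2.1.1 x.2.2.2.1 none = some x.1 from mkPermB_none _ _ _]
          show ((x.2.1 : ℕ)
            + ((if h : x.1 = x.1 then -x.2.1 else x.2.2.1.2 ⟨x.1, h⟩ : Fin c) : ℕ)) % c = 0
          rw [dif_pos rfl]
          exact neg_add_self_mod x.2.1
        | some y =>
          by_cases h : y = x.1
          · rw [show mkPermB x.1 x.2.2.1.1 x.2.2.2.1 (some y) = none from by
              rw [h]; exact mkPermB_some_j _ _ _]
            show (((if hh : y = x.1 then -x.2.1 else x.2.2.1.2 ⟨y, hh⟩ : Fin c) : ℕ)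
              + (x.2.1 : ℕ)) % c = 0
            rw [dif_pos h]
            exact neg_add_self_mod' x.2.1
          · rw [mkPermB_some x.1 x.2.2.1.1 x.2.2.2.1 y h]
            show (((if hh : y = x.1 then -x.2.1 else x.2.2.1.2 ⟨y, hh⟩ : Fin c) : ℕ)
              + ((if h2 : ((x.2.2.1.1 ⟨y, h⟩ : {z : α // z ≠ x.1}) : α) = x.1 then -x.2.1
                  else x.2.2.1.2 ⟨_, h2⟩ : Fin c) : ℕ)) % c = 0
            rw [dif_neg h, dif_neg (x.2.2.1.1 ⟨y, h⟩).2, Subtype.coe_eta]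
            exact x.2.2.2.2 ⟨y, h⟩⟩,
      by
        show mkPermB x.1 x.2.2.1.1 x.2.2.2.1 none ≠ none
        rw [mkPermB_none]
        exact Option.some_ne_none _⟩
  left_inv σ := by
    apply Subtype.ext
    apply Subtype.ext
    refine Prod.ext ?_ ?_
    · apply Equiv.ext
      intro o
      cases o with
      | none =>
        rw [show (mkPermB (getJ σ.1.1.1 σ.2) (resPermB σ.1.1.1 σ.1.2.1 σ.2)
            (resPermB_invol σ.1.2.1 σ.2)) none = _ from mkPermB_none _ _ _]
        exact (getJ_spec σ.2).symm
      | some y =>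
        by_cases h : y = getJ σ.1.1.1 σ.2
        · rw [show (mkPermB (getJ σ.1.1.1 σ.2) (resPermB σ.1.1.1 σ.1.2.1 σ.2)
              (resPermB_invol σ.1.2.1 σ.2)) (some y) = none from by
              rw [h]; exact mkPermB_some_j _ _ _]
          rw [h, pi_some_getJ σ.1.2.1 σ.2]
        · rw [mkPermB_some _ _ _ y h]
          exact resPermB_apply σ.1.2.1 σ.2 ⟨y, h⟩
    · funext o
      cases o with
      | none => rfl
      | some y =>
        by_cases h : y = getJ σ.1.1.1 σ.2
        · show (if hh : y = getJ σ.1.1.1 σ.2 then -(σ.1.1.2 none)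
            else σ.1.1.2 (some (⟨y, hh⟩ : {x : α // x ≠ getJ σ.1.1.1 σ.2}).1)) = σ.1.1.2 (some y)
          rw [dif_pos h]
          have h2 := σ.1.2.2 none
          rw [getJ_spec σ.2] at h2
          rw [show σ.1.1.2 (some y) = σ.1.1.2 (some (getJ σ.1.1.1 σ.2)) from by rw [h]]
          exact (eq_neg_of_add_mod h2).symm
        · show (if hh : y = getJ σ.1.1.1 σ.2 then -(σ.1.1.2 none)
            else σ.1.1.2 (some (⟨y, hh⟩ : {x : α // x ≠ getJ σ.1.1.1 σ.2}).1)) = σ.1.1.2 (some y)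
          rw [dif_neg h]
  right_inv x := by
    refine congrArg (Sigma.mk x.1) ?_
    refine Prod.ext rfl ?_
    apply Subtype.ext
    refine Prod.ext ?_ ?_
    · apply Equiv.ext
      intro y
      apply Subtype.ext
      apply Option.some_injective
      rw [resPermB_apply]
      exact mkPermB_some x.1 x.2.2.1.1 x.2.2.2.1 y.1 y.2
    · funext y
      show (if h : y.1 = x.1 then -x.2.1 else x.2.2.1.2 ⟨y.1, h⟩) = x.2.2.1.2 y
      have hy : (y : α) ≠ x.1 := y.2
      exact (dif_neg hy).trans rfl

end B

section Count

lemma cardR_odd (hodd : c % 2 = 1) [NeZero c] :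
    Nat.card {v : Fin c // ((v : ℕ) + (v : ℕ)) % c = 0} = 1 := by
  have hc : 0 < c := Nat.pos_of_ne_zero (NeZero.ne c)
  have hiff : ∀ v : Fin c, ((v : ℕ) + (v : ℕ)) % c = 0 ↔ v = 0 := by
    intro v
    constructor
    · intro h
      obtain ⟨k, hk⟩ := Nat.dvd_of_mod_eq_zero h
      have hv : (v : ℕ) < c := v.isLt
      have hk2 : k = 0 ∨ k = 1 := by
        rcases k with _ | _ | k
        · left; rfl
        · right; rfl
        · exfalso; nlinarith
      rcases hk2 with rfl | rfl
      · apply Fin.ext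
        simp only [Nat.mul_zero] at hk
        rw [Fin.val_zero]
        omega
      · exfalso
        simp only [Nat.mul_one] at hk
        omega
    · rintro rfl
      simp
  rw [Nat.card_congr (Equiv.subtypeEquivRight hiff), Nat.card_eq_fintype_card,
    Fintype.card_subtype_eq]

lemma cardR_even (heven : c % 2 = 0) [NeZero c] :
    Nat.card {v : Fin c // ((v : ℕ) + (v : ℕ)) % c = 0} = 2 := by
  have hc : 0 < c := Nat.pos_of_ne_zero (NeZero.ne c)
  obtain ⟨d, hd⟩ : ∃ d, c = 2 * d := ⟨c / 2, by omega⟩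
  have hdpos : 0 < d := by omega
  have hdc : d < c := by omega
  have hiff : ∀ v : Fin c, ((v : ℕ) + (v : ℕ)) % c = 0 ↔ (v = 0 ∨ v = ⟨d, hdc⟩) := by
    intro v
    constructor
    · intro h
      obtain ⟨k, hk⟩ := Nat.dvd_of_mod_eq_zero h
      have hv : (v : ℕ) < c := v.isLt
      have hk2 : k = 0 ∨ k = 1 := by
        rcases k with _ | _ | k
        · left; rfl
        · right; rfl
        · exfalso; nlinarith
      rcases hk2 with rfl | rfl
      · left
        apply Fin.ext
        simp only [Nat.mul_zero] at hk
        rw [Fin.val_zero]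
        omega
      · right
        apply Fin.ext
        simp only [Nat.mul_one] at hk
        show (v : ℕ) = d
        omega
    · rintro (rfl | rfl)
      · simp
      · show ((d : ℕ) + (d : ℕ)) % c = 0
        rw [hd, show d + d = 2 * d by omega, Nat.mod_self]
  rw [Nat.card_congr (Equiv.subtypeEquivRight hiff), Nat.card_eq_fintype_card,
    Fintype.card_subtype]
  rw [show Finset.univ.filter (fun v : Fin c => v = 0 ∨ v = ⟨d, hdc⟩) = {0, ⟨d, hdc⟩} from by
    ext v; simp [Finset.mem_filter]]
  rw [Finset.card_insert_of_notMem (by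
    simp only [Finset.mem_singleton]
    intro h
    have := congrArg Fin.val h
    simp [Fin.val_zero] at this
    omega), Finset.card_singleton]

instance CI.finite {α : Type} [Finite α] : Finite (CI c α) := by
  unfold CI; infer_instance

lemma count_eq (c n : ℕ) : involutionCountC c n = Nat.card (CI c (Fin n)) := rfl

lemma card_zero (c : ℕ) : involutionCountC c 0 = 1 := by
  rw [count_eq, Nat.card_eq_one_iff_unique]
  constructor
  · constructor
    intro σ τ
    apply Subtype.ext
    refine Prod.ext ?_ ?_
    · apply Equiv.ext; intro i; exact i.elim0
    · funext i; exact i.elim0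
  · exact ⟨⟨(1, Fin.elim0), by rw [one_mul], fun i => i.elim0⟩⟩

lemma card_one (c : ℕ) [NeZero c] :
    involutionCountC c 1 = Nat.card {v : Fin c // ((v : ℕ) + (v : ℕ)) % c = 0} := by
  rw [count_eq]
  apply Nat.card_congr
  exact {
    toFun := fun σ => ⟨σ.1.2 0, by
      have h := σ.2.2 0
      rwa [show σ.1.1 0 = 0 from Subsingleton.elim _ _] at h⟩
    invFun := fun v => ⟨(1, fun _ => v.1), by rw [one_mul], fun i => by
      simpa using v.2⟩
    left_inv := fun σ => by
      apply Subtype.ext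
      refine Prod.ext ?_ ?_
      · apply Equiv.ext; intro i; exact Subsingleton.elim _ _
      · funext i; exact congrArg σ.1.2 (Subsingleton.elim _ _)
    right_inv := fun v => rfl }


lemma card_rec (c n : ℕ) [NeZero c] :
    involutionCountC c (n + 2) =
      Nat.card {v : Fin c // ((v : ℕ) + (v : ℕ)) % c = 0} * involutionCountC c (n + 1)
        + (n + 1) * (c * involutionCountC c n) := by
  classical
  rw [count_eq, Nat.card_congr (CIcongr (finSuccEquivLast :
    Fin (n + 2) ≃ Option (Fin (n + 1))))]
  rw [Nat.card_congr (Equiv.sumCompl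
    (fun σ : CI c (Option (Fin (n + 1))) => σ.1.1 none = none)).symm, Nat.card_sum]
  congr 1
  · rw [Nat.card_congr (equivA (c := c) (α := Fin (n + 1))), Nat.card_prod, count_eq]
  · rw [Nat.card_congr (equivB (c := c) (α := Fin (n + 1)))]
    have ejn : ∀ j : Fin (n + 1), {x : Fin (n + 1) // x ≠ j} ≃ Fin n := fun j =>
      Fintype.equivFinOfCardEq (by
        rw [Fintype.card_subtype_compl, Fintype.card_subtype_eq, Fintype.card_fin]
        omega)
    rw [Nat.card_congr (Equiv.sigmaCongrRight (fun j =>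
      Equiv.prodCongr (Equiv.refl (Fin c)) (CIcongr (ejn j))))]
    rw [Nat.card_congr (Equiv.sigmaEquivProd (Fin (n + 1)) (Fin c × CI c (Fin n)))]
    rw [Nat.card_prod, Nat.card_prod, Nat.card_eq_fintype_card (α := Fin (n+1)),
      Nat.card_eq_fintype_card (α := Fin c), Fintype.card_fin, Fintype.card_fin, count_eq]

end Count

end Comb

open Equiv PowerSeries in
lemma cardR_val (c : ℕ) [NeZero c] :
    ((Nat.card {v : Fin c // ((v : ℕ) + (v : ℕ)) % c = 0} : ℕ) : ℚ) = ((-1 : ℚ)^c + 3)/2 := by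
  rcases Nat.even_or_odd c with he | ho
  · rw [cardR_even (Nat.even_iff.1 he), he.neg_one_pow]
    norm_num
  · rw [cardR_odd (Nat.odd_iff.1 ho), ho.neg_one_pow]
    norm_num

open PowerSeries in
lemma main_eq (c : ℕ) [NeZero c] : ∀ n : ℕ,
    (involutionCountC c n : ℚ) =
      (n.factorial : ℚ) * gco (C (((-1:ℚ)^c + 3)/2) * X + C ((c:ℚ)/2) * X^2) n := by
  intro n
  induction n using Nat.strong_induction_on with
  | _ n ih =>
    match n, ih with
    | 0, _ =>
      rw [card_zero, gco_zero]
      norm_num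
    | 1, _ =>
      rw [card_one, gco_one, cardR_val]
      simp [Nat.factorial]
    | (m+2), ih =>
      have h1 := ih (m+1) (by omega)
      have h0 := ih m (by omega)
      have hg := gco_rec (((-1:ℚ)^c + 3)/2) ((c:ℚ)/2) m
      rw [card_rec]
      push_cast
      rw [h1, h0, cardR_val]
      have hfact : (((m+2) : ℕ).factorial : ℚ) = ((m:ℚ)+2) * (((m+1) : ℕ).factorial : ℚ) := by
        rw [Nat.factorial_succ]; push_cast; ring
      have hfact1 : (((m+1) : ℕ).factorial : ℚ) = ((m:ℚ)+1) * ((m : ℕ).factorial : ℚ) := by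
        rw [Nat.factorial_succ]; push_cast; ring
      rw [hfact, hfact1]
      linear_combination (-((m:ℚ)+1) * ((m : ℕ).factorial : ℚ)) * hg

/-- The exponential generating function of the colored involution numbers:
`∑_{n≥0} r_n^{(c)} x^n/n! = exp( (((−1)^c + 3)x + c x²) / 2 )`. -/
theorem involutionCountC_egf (c : ℕ) (hc : 1 ≤ c) :
    PowerSeries.mk (fun n => (involutionCountC c n : ℚ) / (n.factorial : ℚ)) =
      expPS (PowerSeries.C (((-1 : ℚ) ^ c + 3) / 2) * PowerSeries.X +
             PowerSeries.C ((c : ℚ) / 2) * PowerSeries.X ^ 2) := by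
  haveI : NeZero c := ⟨by omega⟩
  apply PowerSeries.ext
  intro n
  rw [show expPS (PowerSeries.C (((-1 : ℚ) ^ c + 3) / 2) * PowerSeries.X +
        PowerSeries.C ((c : ℚ) / 2) * PowerSeries.X ^ 2) =
      PowerSeries.mk (gco (PowerSeries.C (((-1 : ℚ) ^ c + 3) / 2) * PowerSeries.X +
        PowerSeries.C ((c : ℚ) / 2) * PowerSeries.X ^ 2)) from rfl]
  rw [PowerSeries.coeff_mk, PowerSeries.coeff_mk, main_eq c n]
  exact mul_div_cancel_left₀ _ (by positivity)
end

section
/- For every integer n ≥ 4, the total number of inversions over all involutions of {1,…,n} satisfies i_n = C(n,2)·r_{n−2} + 2·C(n,3)·r_{n−3} + 6·C(n,4)·r_{n−4}, where r_m denotes the number of involutions of {1,…,m}. -/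
open Finset

/-- `i_n`: the total number of inversions over all involutions of `{1,…,n}`. -/
def totalInvInvolution (n : ℕ) : ℕ :=
  ∑ π ∈ Finset.univ.filter (fun π : Equiv.Perm (Fin n) => π * π = 1), invNum π

/-- `r_m`: the number of involutions of `{1,…,m}`. -/
def involutionCount (m : ℕ) : ℕ :=
  (Finset.univ.filter (fun π : Equiv.Perm (Fin m) => π * π = 1)).card

namespace TotalInvAux

open Equiv

/-! ### counting involutions with a prescribed pattern -/

lemma invoCount_congr {α β : Type*} [Fintype α] [Fintype β] [DecidableEq α] [DecidableEq β]
    (e : α ≃ β) :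
    (univ.filter (fun π : Perm α => π * π = 1)).card
      = (univ.filter (fun π : Perm β => π * π = 1)).card := by
  apply Finset.card_nbij' (fun π => e.permCongr π) (fun τ => e.symm.permCongr τ)
  · intro π hπ
    simp only [mem_coe, mem_filter, mem_univ, true_and] at hπ ⊢
    ext x
    simp [Perm.mul_apply, ← Perm.mul_apply π π, hπ]
  · intro τ hτ
    simp only [mem_coe, mem_filter, mem_univ, true_and] at hτ ⊢
    ext x
    simp [Perm.mul_apply, ← Perm.mul_apply τ τ, hτ]
  · intro π _; ext x; simp
  · intro τ _; ext x; simp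

lemma key_count {n : ℕ} (s : Finset (Fin n)) (σ : Perm (Fin n)) (hσ : σ * σ = 1)
    (hfix : ∀ x, x ∉ s → σ x = x) :
    (univ.filter (fun π : Perm (Fin n) => π * π = 1 ∧ ∀ x ∈ s, π x = σ x)).card
      = involutionCount (n - s.card) := by
  have hσ2 : ∀ x, σ (σ x) = x := fun x => by
    rw [← Perm.mul_apply, hσ]; rfl
  have hσs : ∀ x ∈ s, σ x ∈ s := by
    intro x hx
    by_contra h
    have := hfix _ h
    rw [← hσ2 x, this] at hx
    exact h hx
  have hofs : ∀ (τ : Perm {x : Fin n // x ∉ s}) (x : Fin n), x ∈ s → Perm.ofSubtype τ x = x :=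
    fun τ x hx => Perm.ofSubtype_apply_of_not_mem τ (not_not_intro hx)
  have hofm : ∀ (τ : Perm {x : Fin n // x ∉ s}) (x : Fin n) (hx : x ∉ s),
      Perm.ofSubtype τ x = τ ⟨x, hx⟩ :=
    fun τ x hx => Perm.ofSubtype_apply_of_mem τ hx
  have step1 : (univ.filter (fun π : Perm (Fin n) => π * π = 1 ∧ ∀ x ∈ s, π x = σ x)).card
      = (univ.filter (fun τ : Perm {x : Fin n // x ∉ s} => τ * τ = 1)).card := by
    refine Finset.card_bij'
      (i := fun π hπ => π.subtypePerm (p := fun x => x ∉ s) (by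
        have hπ' := (mem_filter.mp hπ).2
        intro x
        refine Iff.symm ?_
        constructor
        · intro hx hc
          have h2 : π (π x) = x := by rw [← Perm.mul_apply, hπ'.1]; rfl
          have : π (π x) = σ (π x) := hπ'.2 _ hc
          rw [h2] at this
          exact hx (this ▸ hσs _ hc)
        · intro hx hc
          exact hx ((hπ'.2 _ hc) ▸ hσs _ hc)))
      (j := fun τ _ => Perm.ofSubtype τ * σ) ?_ ?_ ?_ ?_
    · intro π hπ
      have hπ' := (mem_filter.mp hπ).2
      simp only [mem_filter, mem_univ, true_and]
      apply Equiv.ext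
      intro x
      have h2 : π (π (x : Fin n)) = x := by rw [← Perm.mul_apply, hπ'.1]; rfl
      apply Subtype.ext
      simp [Perm.mul_apply, Perm.subtypePerm_apply, h2, -Perm.subtypePerm_mul]
    · intro τ hτ
      have hτ' := (mem_filter.mp hτ).2
      simp only [mem_filter, mem_univ, true_and]
      have hττ : ∀ z, Perm.ofSubtype τ (Perm.ofSubtype τ z) = z := by
        intro z
        rw [← Perm.mul_apply, ← map_mul, hτ']
        simp
      have hcomm : ∀ x, Perm.ofSubtype τ (σ x) = σ (Perm.ofSubtype τ x) := by
        intro x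
        by_cases hx : x ∈ s
        · rw [hofs τ _ (hσs x hx), hofs τ _ hx]
        · rw [hfix x hx, hofm τ x hx, hfix _ (τ ⟨x, hx⟩).2]
      constructor
      · apply Equiv.ext
        intro x
        simp only [Perm.mul_apply, Perm.one_apply]
        rw [hcomm (Perm.ofSubtype τ (σ x)), hττ, hσ2]
      · intro x hx
        simp only [Perm.mul_apply]
        rw [hofs τ _ (hσs x hx)]
    · intro π hπ
      have hπ' := (mem_filter.mp hπ).2
      apply Equiv.ext
      intro x
      simp only [Perm.mul_apply]
      by_cases hx : x ∈ s
      · rw [hofs _ _ (hσs x hx)]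
        exact (hπ'.2 x hx).symm
      · rw [hfix x hx, hofm _ x hx]
        simp [Perm.subtypePerm_apply]
    · intro τ hτ
      apply Equiv.ext
      intro x
      apply Subtype.ext
      simp only [Perm.subtypePerm_apply, Perm.mul_apply]
      rw [hfix _ x.2, hofm τ _ x.2]
  rw [step1]
  have hcard : Fintype.card {x : Fin n // x ∉ s} = n - s.card := by
    simp [Fintype.card_subtype_compl]
  rw [invoCount_congr (Fintype.equivFinOfCardEq hcard)]
  rfl

/-! ### counting tuples -/

variable {m : ℕ}

lemma sorted2_ext {a b c d : Fin m} (h1 : a < b) (h2 : c < d)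
    (h : ({a, b} : Finset (Fin m)) = {c, d}) : a = c ∧ b = d := by
  have ha : a ∈ ({c, d} : Finset (Fin m)) := h ▸ (by simp)
  have hb : b ∈ ({c, d} : Finset (Fin m)) := h ▸ (by simp)
  have hc : c ∈ ({a, b} : Finset (Fin m)) := h ▸ (by simp)
  have hd : d ∈ ({a, b} : Finset (Fin m)) := h ▸ (by simp)
  simp only [mem_insert, mem_singleton] at ha hb hc hd
  simp only [Fin.ext_iff, Fin.lt_def] at *
  omega

lemma sorted3_ext {a b c d e f : Fin m} (h1 : a < b) (h2 : b < c) (h3 : d < e) (h4 : e < f)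
    (h : ({a, b, c} : Finset (Fin m)) = {d, e, f}) : a = d ∧ b = e ∧ c = f := by
  have ha : a ∈ ({d, e, f} : Finset (Fin m)) := h ▸ (by simp)
  have hb : b ∈ ({d, e, f} : Finset (Fin m)) := h ▸ (by simp)
  have hc : c ∈ ({d, e, f} : Finset (Fin m)) := h ▸ (by simp)
  have hd : d ∈ ({a, b, c} : Finset (Fin m)) := h ▸ (by simp)
  have he : e ∈ ({a, b, c} : Finset (Fin m)) := h ▸ (by simp)
  have hf : f ∈ ({a, b, c} : Finset (Fin m)) := h ▸ (by simp)
  simp only [mem_insert, mem_singleton] at ha hb hc hd he hf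
  simp only [Fin.ext_iff, Fin.lt_def] at *
  omega

lemma card_sortedPairs (t : Finset (Fin m)) :
    (univ.filter (fun p : Fin m × Fin m => p.1 ∈ t ∧ p.2 ∈ t ∧ p.1 < p.2)).card
      = t.card.choose 2 := by
  rw [← Finset.card_powersetCard 2 t]
  refine Finset.card_bij (fun p _ => ({p.1, p.2} : Finset (Fin m))) ?_ ?_ ?_
  · intro p hp
    simp only [mem_filter, mem_univ, true_and] at hp
    rw [mem_powersetCard]
    exact ⟨by simp [insert_subset_iff, hp.1, hp.2.1],
      Finset.card_pair (ne_of_lt hp.2.2)⟩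
  · intro p hp q hq hpq
    simp only [mem_filter, mem_univ, true_and] at hp hq
    obtain ⟨h1, h2⟩ := sorted2_ext hp.2.2 hq.2.2 hpq
    exact Prod.ext h1 h2
  · intro u hu
    rw [mem_powersetCard] at hu
    obtain ⟨x, y, hxy, rfl⟩ := Finset.card_eq_two.mp hu.2
    have hx : x ∈ t := hu.1 (by simp)
    have hy : y ∈ t := hu.1 (by simp)
    rcases lt_or_gt_of_ne hxy with h | h
    · exact ⟨(x, y), by simp [hx, hy, h], rfl⟩
    · exact ⟨(y, x), by simp [hx, hy, h], by rw [Finset.pair_comm]⟩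

lemma card_sortedPairs_univ :
    (univ.filter (fun p : Fin m × Fin m => p.1 < p.2)).card = m.choose 2 := by
  have h := card_sortedPairs (univ : Finset (Fin m))
  simp only [mem_univ, true_and, card_univ, Fintype.card_fin] at h
  exact h

lemma card_sortedTriples :
    (univ.filter (fun p : Fin m × Fin m × Fin m => p.1 < p.2.1 ∧ p.2.1 < p.2.2)).card
      = m.choose 3 := by
  have : m.choose 3 = (univ : Finset (Fin m)).card.choose 3 := by simp
  rw [this, ← Finset.card_powersetCard 3 univ]
  refine Finset.card_bij (fun p _ => ({p.1, p.2.1, p.2.2} : Finset (Fin m))) ?_ ?_ ?_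
  · intro p hp
    simp only [mem_filter, mem_univ, true_and] at hp
    rw [mem_powersetCard]
    refine ⟨subset_univ _, Finset.card_eq_three.mpr
      ⟨p.1, p.2.1, p.2.2, ne_of_lt hp.1, ne_of_lt (hp.1.trans hp.2), ne_of_lt hp.2, rfl⟩⟩
  · intro p hp q hq hpq
    simp only [mem_filter, mem_univ, true_and] at hp hq
    obtain ⟨h1, h2, h3⟩ := sorted3_ext hp.1 hp.2 hq.1 hq.2 hpq
    exact Prod.ext h1 (Prod.ext h2 h3)
  · intro u hu
    rw [mem_powersetCard] at hu
    obtain ⟨x, y, z, hxy, hxz, hyz, rfl⟩ := Finset.card_eq_three.mp hu.2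
    clear hu
    rcases lt_trichotomy x y with h1 | h1 | h1
    · rcases lt_trichotomy y z with h2 | h2 | h2
      · exact ⟨(x, y, z), by simp [h1, h2], rfl⟩
      · exact absurd h2 hyz
      · rcases lt_trichotomy x z with h3 | h3 | h3
        · exact ⟨(x, z, y), by simp [h3, h2], by ext w; simp; tauto⟩
        · exact absurd h3 hxz
        · exact ⟨(z, x, y), by simp [h3, h1], by ext w; simp; tauto⟩
    · exact absurd h1 hxy
    · rcases lt_trichotomy x z with h2 | h2 | h2
      · exact ⟨(y, x, z), by simp [h1, h2], by ext w; simp; tauto⟩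
      · exact absurd h2 hxz
      · rcases lt_trichotomy y z with h3 | h3 | h3
        · exact ⟨(y, z, x), by simp [h3, h2], by ext w; simp; tauto⟩
        · exact absurd h3 hyz
        · exact ⟨(z, y, x), by simp [h3, h1], by ext w; simp; tauto⟩

lemma card_Q {n : ℕ} :
    (univ.filter (fun q : (Fin n × Fin n) × Fin n × Fin n =>
      q.1.1 < q.1.2 ∧ q.2.1 < q.2.2 ∧ q.1.1 ≠ q.2.1 ∧ q.1.1 ≠ q.2.2 ∧ q.1.2 ≠ q.2.1 ∧
        q.1.2 ≠ q.2.2)).card = n.choose 2 * (n - 2).choose 2 := by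
  rw [Finset.card_eq_sum_card_fiberwise
    (f := fun q => q.1) (t := univ.filter (fun p : Fin n × Fin n => p.1 < p.2))
    (fun q hq => by simp only [mem_coe, mem_filter, mem_univ, true_and] at hq ⊢; exact hq.1)]
  have hfib : ∀ p ∈ univ.filter (fun p : Fin n × Fin n => p.1 < p.2),
      ((univ.filter (fun q : (Fin n × Fin n) × Fin n × Fin n =>
        q.1.1 < q.1.2 ∧ q.2.1 < q.2.2 ∧ q.1.1 ≠ q.2.1 ∧ q.1.1 ≠ q.2.2 ∧ q.1.2 ≠ q.2.1 ∧
          q.1.2 ≠ q.2.2)).filter (fun q => q.1 = p)).card = (n - 2).choose 2 := by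
    intro p hp
    simp only [mem_filter, mem_univ, true_and] at hp
    have ht : (univ \ {p.1, p.2} : Finset (Fin n)).card = n - 2 := by
      rw [Finset.card_sdiff_of_subset (subset_univ _), Finset.card_pair (ne_of_lt hp), card_univ,
        Fintype.card_fin]
    rw [← ht, ← card_sortedPairs (univ \ {p.1, p.2})]
    refine Finset.card_nbij' (fun q => q.2) (fun r => (p, r)) ?_ ?_ ?_ ?_
    · intro q hq
      simp only [mem_coe, mem_filter, mem_univ, true_and, mem_sdiff, mem_insert, mem_singleton,
        not_or] at hq ⊢
      obtain ⟨⟨h1, h2, h3, h4, h5, h6⟩, rfl⟩ := hq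
      exact ⟨⟨Ne.symm h3, Ne.symm h5⟩, ⟨Ne.symm h4, Ne.symm h6⟩, h2⟩
    · intro r hr
      simp only [mem_coe, mem_filter, mem_univ, true_and, mem_sdiff, mem_insert, mem_singleton,
        not_or] at hr ⊢
      obtain ⟨⟨h1, h2⟩, ⟨h3, h4⟩, h5⟩ := hr
      exact ⟨⟨hp, h5, Ne.symm h1, Ne.symm h3, Ne.symm h2, Ne.symm h4⟩, trivial⟩
    · intro q hq
      simp only [mem_coe, mem_filter] at hq
      rw [← hq.2]
    · intro r _
      rfl
  rw [Finset.sum_congr rfl hfib, Finset.sum_const, smul_eq_mul, card_sortedPairs_univ]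


/-! ### the four classes -/

variable {n : ℕ}

/-- the base set: triples (π, (i,j)) with π an involution and (i,j) an inversion of π -/
def TT (n : ℕ) : Finset (Perm (Fin n) × (Fin n × Fin n)) :=
  univ.filter (fun q => q.1 * q.1 = 1 ∧ q.2.1 < q.2.2 ∧ q.1 q.2.2 < q.1 q.2.1)

lemma mem_TT {q : Perm (Fin n) × (Fin n × Fin n)} :
    q ∈ TT n ↔ q.1 * q.1 = 1 ∧ q.2.1 < q.2.2 ∧ q.1 q.2.2 < q.1 q.2.1 := by
  simp [TT]

lemma classA_card :
    ((TT n).filter (fun q => q.1 q.2.1 = q.2.2)).card = n.choose 2 * involutionCount (n - 2) := by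
  rw [Finset.card_eq_sum_card_fiberwise
    (f := fun q => q.2) (t := univ.filter (fun p : Fin n × Fin n => p.1 < p.2))
    (fun q hq => by
      simp only [mem_coe, mem_filter, mem_univ, true_and, mem_TT] at hq ⊢
      exact hq.1.2.1)]
  have hfib : ∀ p ∈ univ.filter (fun p : Fin n × Fin n => p.1 < p.2),
      (((TT n).filter (fun q => q.1 q.2.1 = q.2.2)).filter (fun q => q.2 = p)).card
        = involutionCount (n - 2) := by
    intro p hp
    simp only [mem_filter, mem_univ, true_and] at hp
    have hne : p.1 ≠ p.2 := ne_of_lt hp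
    have hkey := key_count ({p.1, p.2} : Finset (Fin n)) (Equiv.swap p.1 p.2)
      (Equiv.swap_mul_self _ _)
      (fun x hx => by
        simp only [mem_insert, mem_singleton, not_or] at hx
        exact Equiv.swap_apply_of_ne_of_ne hx.1 hx.2)
    rw [Finset.card_pair hne] at hkey
    rw [← hkey]
    refine Finset.card_nbij' (fun q => q.1) (fun π => (π, p)) ?_ ?_ ?_ ?_
    · intro q hq
      simp only [mem_coe, mem_filter, mem_TT] at hq
      obtain ⟨⟨⟨hinv, hlt, hltπ⟩, hA⟩, rfl⟩ := hq
      simp only [mem_coe, mem_filter, mem_univ, true_and]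
      refine ⟨hinv, ?_⟩
      intro x hx
      have h2 : ∀ y, q.1 (q.1 y) = y := fun y => by
        rw [← Perm.mul_apply, hinv]; rfl
      simp only [mem_insert, mem_singleton] at hx
      rcases hx with rfl | rfl
      · rw [hA, Equiv.swap_apply_left]
      · rw [Equiv.swap_apply_right, ← hA, h2]
    · intro π hπ
      simp only [mem_coe, mem_filter, mem_univ, true_and] at hπ
      obtain ⟨hinv, hval⟩ := hπ
      have h1 : π p.1 = p.2 := by
        rw [hval p.1 (by simp), Equiv.swap_apply_left]
      have h2 : π p.2 = p.1 := by
        rw [hval p.2 (by simp), Equiv.swap_apply_right]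
      simp only [mem_coe, mem_filter, mem_TT]
      exact ⟨⟨⟨hinv, hp, by rw [h1, h2]; exact hp⟩, h1⟩, trivial⟩
    · intro q hq
      simp only [mem_coe, mem_filter] at hq
      exact Prod.ext rfl hq.2.symm
    · intro π _
      rfl
  rw [Finset.sum_congr rfl hfib, Finset.sum_const, smul_eq_mul, card_sortedPairs_univ]

lemma classB1_card :
    ((TT n).filter (fun q => ¬ q.1 q.2.1 = q.2.2 ∧ q.1 q.2.1 = q.2.1)).card
      = n.choose 3 * involutionCount (n - 3) := by
  rw [Finset.card_eq_sum_card_fiberwise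
    (f := fun q => (q.1 q.2.2, q.2.1, q.2.2))
    (t := univ.filter (fun p : Fin n × Fin n × Fin n => p.1 < p.2.1 ∧ p.2.1 < p.2.2))
    (fun q hq => by
      simp only [mem_coe, mem_filter, mem_univ, true_and, mem_TT] at hq ⊢
      obtain ⟨⟨hinv, hlt, hltπ⟩, hA, hB1⟩ := hq
      rw [hB1] at hltπ
      exact ⟨hltπ, hlt⟩)]
  have hfib : ∀ t ∈ univ.filter (fun p : Fin n × Fin n × Fin n => p.1 < p.2.1 ∧ p.2.1 < p.2.2),
      (((TT n).filter (fun q => ¬ q.1 q.2.1 = q.2.2 ∧ q.1 q.2.1 = q.2.1)).filter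
        (fun q => (q.1 q.2.2, q.2.1, q.2.2) = t)).card = involutionCount (n - 3) := by
    intro t ht
    obtain ⟨a, b, c⟩ := t
    simp only [mem_filter, mem_univ, true_and] at ht
    obtain ⟨hab, hbc⟩ := ht
    have hac : a < c := hab.trans hbc
    have hcard3 : ({a, b, c} : Finset (Fin n)).card = 3 :=
      Finset.card_eq_three.mpr ⟨a, b, c, ne_of_lt hab, ne_of_lt hac, ne_of_lt hbc, rfl⟩
    have hkey := key_count ({a, b, c} : Finset (Fin n)) (Equiv.swap a c)
      (Equiv.swap_mul_self _ _)
      (fun x hx => by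
        simp only [mem_insert, mem_singleton, not_or] at hx
        exact Equiv.swap_apply_of_ne_of_ne hx.1 hx.2.2)
    rw [hcard3] at hkey
    rw [← hkey]
    refine Finset.card_nbij' (fun q => q.1) (fun π => (π, (b, c))) ?_ ?_ ?_ ?_
    · intro q hq
      simp only [mem_coe, mem_filter, mem_TT] at hq
      obtain ⟨⟨⟨hinv, hlt, hltπ⟩, hA, hB1⟩, heq⟩ := hq
      have h2 : ∀ y, q.1 (q.1 y) = y := fun y => by
        rw [← Perm.mul_apply, hinv]; rfl
      have ha' : a = q.1 q.2.2 := (congrArg (fun r => r.1) heq).symm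
      have hb' : b = q.2.1 := (congrArg (fun r => r.2.1) heq).symm
      have hc' : c = q.2.2 := (congrArg (fun r => r.2.2) heq).symm
      simp only [mem_coe, mem_filter, mem_univ, true_and]
      refine ⟨hinv, ?_⟩
      intro x hx
      simp only [mem_insert, mem_singleton] at hx
      rcases hx with rfl | rfl | rfl
      · rw [Equiv.swap_apply_left, ha', hc', h2]
      · rw [Equiv.swap_apply_of_ne_of_ne (Ne.symm (ne_of_lt hab)) (ne_of_lt hbc), hb', hB1]
      · rw [Equiv.swap_apply_right, hc', ha']
    · intro π hπ
      simp only [mem_coe, mem_filter, mem_univ, true_and] at hπ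
      obtain ⟨hinv, hval⟩ := hπ
      have hπa : π a = c := by rw [hval a (by simp), Equiv.swap_apply_left]
      have hπb : π b = b := by
        rw [hval b (by simp), Equiv.swap_apply_of_ne_of_ne (Ne.symm (ne_of_lt hab))
          (ne_of_lt hbc)]
      have hπc : π c = a := by rw [hval c (by simp), Equiv.swap_apply_right]
      simp only [mem_coe, mem_filter, mem_TT]
      refine ⟨⟨⟨hinv, hbc, ?_⟩, ?_, hπb⟩, ?_⟩
      · rw [hπb, hπc]; exact hab
      · rw [hπb]; exact ne_of_lt hbc
      · rw [hπc]
    · intro q hq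
      simp only [mem_coe, mem_filter] at hq
      have hb' : b = q.2.1 := (congrArg (fun r => r.2.1) hq.2).symm
      have hc' : c = q.2.2 := (congrArg (fun r => r.2.2) hq.2).symm
      rw [hb', hc']
    · intro π _
      rfl
  rw [Finset.sum_congr rfl hfib, Finset.sum_const, smul_eq_mul, card_sortedTriples]

lemma classB2_card :
    ((TT n).filter (fun q => ¬ q.1 q.2.1 = q.2.2 ∧ ¬ q.1 q.2.1 = q.2.1 ∧
      q.1 q.2.2 = q.2.2)).card = n.choose 3 * involutionCount (n - 3) := by
  rw [Finset.card_eq_sum_card_fiberwise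
    (f := fun q => (q.2.1, q.2.2, q.1 q.2.1))
    (t := univ.filter (fun p : Fin n × Fin n × Fin n => p.1 < p.2.1 ∧ p.2.1 < p.2.2))
    (fun q hq => by
      simp only [mem_coe, mem_filter, mem_univ, true_and, mem_TT] at hq ⊢
      obtain ⟨⟨hinv, hlt, hltπ⟩, hA, hB1, hB2⟩ := hq
      rw [hB2] at hltπ
      exact ⟨hlt, hltπ⟩)]
  have hfib : ∀ t ∈ univ.filter (fun p : Fin n × Fin n × Fin n => p.1 < p.2.1 ∧ p.2.1 < p.2.2),
      (((TT n).filter (fun q => ¬ q.1 q.2.1 = q.2.2 ∧ ¬ q.1 q.2.1 = q.2.1 ∧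
        q.1 q.2.2 = q.2.2)).filter
        (fun q => (q.2.1, q.2.2, q.1 q.2.1) = t)).card = involutionCount (n - 3) := by
    intro t ht
    obtain ⟨a, b, c⟩ := t
    simp only [mem_filter, mem_univ, true_and] at ht
    obtain ⟨hab, hbc⟩ := ht
    have hac : a < c := hab.trans hbc
    have hcard3 : ({a, b, c} : Finset (Fin n)).card = 3 :=
      Finset.card_eq_three.mpr ⟨a, b, c, ne_of_lt hab, ne_of_lt hac, ne_of_lt hbc, rfl⟩
    have hkey := key_count ({a, b, c} : Finset (Fin n)) (Equiv.swap a c)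
      (Equiv.swap_mul_self _ _)
      (fun x hx => by
        simp only [mem_insert, mem_singleton, not_or] at hx
        exact Equiv.swap_apply_of_ne_of_ne hx.1 hx.2.2)
    rw [hcard3] at hkey
    rw [← hkey]
    refine Finset.card_nbij' (fun q => q.1) (fun π => (π, (a, b))) ?_ ?_ ?_ ?_
    · intro q hq
      simp only [mem_coe, mem_filter, mem_TT] at hq
      obtain ⟨⟨⟨hinv, hlt, hltπ⟩, hA, hB1, hB2⟩, heq⟩ := hq
      have h2 : ∀ y, q.1 (q.1 y) = y := fun y => by
        rw [← Perm.mul_apply, hinv]; rfl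
      have ha' : a = q.2.1 := (congrArg (fun r => r.1) heq).symm
      have hb' : b = q.2.2 := (congrArg (fun r => r.2.1) heq).symm
      have hc' : c = q.1 q.2.1 := (congrArg (fun r => r.2.2) heq).symm
      simp only [mem_coe, mem_filter, mem_univ, true_and]
      refine ⟨hinv, ?_⟩
      intro x hx
      simp only [mem_insert, mem_singleton] at hx
      rcases hx with rfl | rfl | rfl
      · rw [Equiv.swap_apply_left, ha', hc']
      · rw [Equiv.swap_apply_of_ne_of_ne (Ne.symm (ne_of_lt hab)) (ne_of_lt hbc), hb', hB2]
      · rw [Equiv.swap_apply_right, hc', ha', h2]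
    · intro π hπ
      simp only [mem_coe, mem_filter, mem_univ, true_and] at hπ
      obtain ⟨hinv, hval⟩ := hπ
      have hπa : π a = c := by rw [hval a (by simp), Equiv.swap_apply_left]
      have hπb : π b = b := by
        rw [hval b (by simp), Equiv.swap_apply_of_ne_of_ne (Ne.symm (ne_of_lt hab))
          (ne_of_lt hbc)]
      have hπc : π c = a := by rw [hval c (by simp), Equiv.swap_apply_right]
      simp only [mem_coe, mem_filter, mem_TT]
      refine ⟨⟨⟨hinv, hab, ?_⟩, ?_, ?_, hπb⟩, ?_⟩
      · rw [hπa, hπb]; exact hbc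
      · rw [hπa]; exact Ne.symm (ne_of_lt hbc)
      · rw [hπa]; exact Ne.symm (ne_of_lt hac)
      · rw [hπa]
    · intro q hq
      simp only [mem_coe, mem_filter] at hq
      have ha' : a = q.2.1 := (congrArg (fun r => r.1) hq.2).symm
      have hb' : b = q.2.2 := (congrArg (fun r => r.2.1) hq.2).symm
      rw [ha', hb']
    · intro π _
      rfl
  rw [Finset.sum_congr rfl hfib, Finset.sum_const, smul_eq_mul, card_sortedTriples]

lemma classC_card :
    ((TT n).filter (fun q => ¬ q.1 q.2.1 = q.2.2 ∧ ¬ q.1 q.2.1 = q.2.1 ∧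
      ¬ q.1 q.2.2 = q.2.2)).card
      = n.choose 2 * (n - 2).choose 2 * involutionCount (n - 4) := by
  rw [Finset.card_eq_sum_card_fiberwise
    (f := fun q => (q.2, (q.1 q.2.2, q.1 q.2.1)))
    (t := univ.filter (fun r : (Fin n × Fin n) × Fin n × Fin n =>
      r.1.1 < r.1.2 ∧ r.2.1 < r.2.2 ∧ r.1.1 ≠ r.2.1 ∧ r.1.1 ≠ r.2.2 ∧ r.1.2 ≠ r.2.1 ∧
        r.1.2 ≠ r.2.2))
    (fun q hq => by
      simp only [mem_coe, mem_filter, mem_univ, true_and, mem_TT] at hq ⊢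
      obtain ⟨⟨hinv, hlt, hltπ⟩, hA, hB1, hB2⟩ := hq
      have h2 : ∀ y, q.1 (q.1 y) = y := fun y => by
        rw [← Perm.mul_apply, hinv]; rfl
      refine ⟨hlt, hltπ, ?_, Ne.symm hB1, Ne.symm hB2, Ne.symm hA⟩
      intro h
      exact hA (by rw [h, h2]))]
  have hfib : ∀ r ∈ univ.filter (fun r : (Fin n × Fin n) × Fin n × Fin n =>
      r.1.1 < r.1.2 ∧ r.2.1 < r.2.2 ∧ r.1.1 ≠ r.2.1 ∧ r.1.1 ≠ r.2.2 ∧ r.1.2 ≠ r.2.1 ∧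
        r.1.2 ≠ r.2.2),
      (((TT n).filter (fun q => ¬ q.1 q.2.1 = q.2.2 ∧ ¬ q.1 q.2.1 = q.2.1 ∧
        ¬ q.1 q.2.2 = q.2.2)).filter
        (fun q => (q.2, (q.1 q.2.2, q.1 q.2.1)) = r)).card = involutionCount (n - 4) := by
    intro r hr
    obtain ⟨⟨i, j⟩, l, k⟩ := r
    simp only [mem_filter, mem_univ, true_and] at hr
    obtain ⟨hij, hlk, hil, hik, hjl, hjk⟩ := hr
    -- σ is the product of the two disjoint swaps (i k) and (j l)
    set σ : Perm (Fin n) := Equiv.swap i k * Equiv.swap j l with hσdef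
    have hσi : σ i = k := by
      rw [hσdef, Perm.mul_apply, Equiv.swap_apply_of_ne_of_ne (ne_of_lt hij) hil,
        Equiv.swap_apply_left]
    have hσj : σ j = l := by
      rw [hσdef, Perm.mul_apply, Equiv.swap_apply_left,
        Equiv.swap_apply_of_ne_of_ne (Ne.symm hil) (ne_of_lt hlk)]
    have hσl : σ l = j := by
      rw [hσdef, Perm.mul_apply, Equiv.swap_apply_right,
        Equiv.swap_apply_of_ne_of_ne (Ne.symm (ne_of_lt hij)) hjk]
    have hσk : σ k = i := by
      rw [hσdef, Perm.mul_apply, Equiv.swap_apply_of_ne_of_ne (Ne.symm hjk)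
        (Ne.symm (ne_of_lt hlk)), Equiv.swap_apply_right]
    have hσfix : ∀ x, x ∉ ({i, j, l, k} : Finset (Fin n)) → σ x = x := by
      intro x hx
      simp only [mem_insert, mem_singleton, not_or] at hx
      rw [hσdef, Perm.mul_apply, Equiv.swap_apply_of_ne_of_ne hx.2.1 hx.2.2.1,
        Equiv.swap_apply_of_ne_of_ne hx.1 hx.2.2.2]
    have hσσ : σ * σ = 1 := by
      apply Equiv.ext
      intro x
      by_cases h1 : x = i
      · subst h1; simp only [Perm.mul_apply, Perm.one_apply, hσi, hσk]
      by_cases h2 : x = j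
      · subst h2; simp only [Perm.mul_apply, Perm.one_apply, hσj, hσl]
      by_cases h3 : x = l
      · subst h3; simp only [Perm.mul_apply, Perm.one_apply, hσl, hσj]
      by_cases h4 : x = k
      · subst h4; simp only [Perm.mul_apply, Perm.one_apply, hσk, hσi]
      have hmem : x ∉ ({i, j, l, k} : Finset (Fin n)) := by
        simp only [mem_insert, mem_singleton, not_or]
        exact ⟨h1, h2, h3, h4⟩
      have hfx := hσfix x hmem
      simp only [Perm.mul_apply, Perm.one_apply, hfx]
    have hcard4 : ({i, j, l, k} : Finset (Fin n)).card = 4 := by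
      rw [card_insert_of_notMem (by
          simp only [mem_insert, mem_singleton, not_or]
          exact ⟨ne_of_lt hij, hil, hik⟩),
        card_insert_of_notMem (by
          simp only [mem_insert, mem_singleton, not_or]
          exact ⟨hjl, hjk⟩),
        card_insert_of_notMem (by
          simp only [mem_singleton]
          exact ne_of_lt hlk),
        card_singleton]
    have hkey := key_count ({i, j, l, k} : Finset (Fin n)) σ hσσ hσfix
    rw [hcard4] at hkey
    rw [← hkey]
    refine Finset.card_nbij' (fun q => q.1) (fun π => (π, (i, j))) ?_ ?_ ?_ ?_
    · intro q hq
      simp only [mem_coe, mem_filter, mem_TT] at hq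
      obtain ⟨⟨⟨hinv, hlt, hltπ⟩, hA, hB1, hB2⟩, heq⟩ := hq
      have h2 : ∀ y, q.1 (q.1 y) = y := fun y => by
        rw [← Perm.mul_apply, hinv]; rfl
      have hi' : i = q.2.1 := (congrArg (fun r => r.1.1) heq).symm
      have hj' : j = q.2.2 := (congrArg (fun r => r.1.2) heq).symm
      have hl' : l = q.1 q.2.2 := (congrArg (fun r => r.2.1) heq).symm
      have hk' : k = q.1 q.2.1 := (congrArg (fun r => r.2.2) heq).symm
      simp only [mem_coe, mem_filter, mem_univ, true_and]
      refine ⟨hinv, ?_⟩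
      intro x hx
      simp only [mem_insert, mem_singleton] at hx
      rcases hx with rfl | rfl | rfl | rfl
      · rw [hσi, hi', hk']
      · rw [hσj, hj', hl']
      · rw [hσl, hl', hj', h2]
      · rw [hσk, hk', hi', h2]
    · intro π hπ
      simp only [mem_coe, mem_filter, mem_univ, true_and] at hπ
      obtain ⟨hinv, hval⟩ := hπ
      have hπi : π i = k := by rw [hval i (by simp), hσi]
      have hπj : π j = l := by rw [hval j (by simp), hσj]
      simp only [mem_coe, mem_filter, mem_TT]
      refine ⟨⟨⟨hinv, hij, ?_⟩, ?_, ?_, ?_⟩, ?_⟩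
      · rw [hπi, hπj]; exact hlk
      · rw [hπi]; exact Ne.symm hjk
      · rw [hπi]; exact Ne.symm hik
      · rw [hπj]; exact Ne.symm hjl
      · rw [hπi, hπj]
    · intro q hq
      simp only [mem_coe, mem_filter] at hq
      have hi' : i = q.2.1 := (congrArg (fun r => r.1.1) hq.2).symm
      have hj' : j = q.2.2 := (congrArg (fun r => r.1.2) hq.2).symm
      rw [hi', hj']
    · intro π _
      rfl
  rw [Finset.sum_congr rfl hfib, Finset.sum_const, smul_eq_mul, card_Q]

lemma totalInv_eq_TT : totalInvInvolution n = (TT n).card := by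
  rw [totalInvInvolution, TT]
  rw [Finset.card_eq_sum_card_fiberwise (f := fun q => q.1)
    (t := univ.filter (fun π : Perm (Fin n) => π * π = 1))
    (fun q hq => by
      simp only [mem_coe, mem_filter, mem_univ, true_and] at hq ⊢
      exact hq.1)]
  apply Finset.sum_congr rfl
  intro π hπ
  simp only [mem_filter, mem_univ, true_and] at hπ
  rw [invNum]
  refine Finset.card_nbij' (fun p => (π, p)) (fun q => q.2) ?_ ?_ ?_ ?_
  · intro p hp
    simp only [mem_coe, mem_filter, mem_univ, true_and] at hp ⊢
    exact ⟨⟨hπ, hp.1, hp.2⟩, trivial⟩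
  · intro q hq
    simp only [mem_coe, mem_filter, mem_univ, true_and] at hq ⊢
    obtain ⟨⟨hinv, h1, h2⟩, hq1⟩ := hq
    rw [hq1] at h2
    exact ⟨h1, h2⟩
  · intro p _
    rfl
  · intro q hq
    simp only [mem_coe, mem_filter] at hq
    exact Prod.ext hq.2.symm rfl

end TotalInvAux

/-- `i_n = C(n,2)·r_{n−2} + 2·C(n,3)·r_{n−3} + 6·C(n,4)·r_{n−4}` for `n ≥ 4`. -/
theorem totalInvInvolution_formula (n : ℕ) (hn : 4 ≤ n) :
    totalInvInvolution n =
      n.choose 2 * involutionCount (n - 2) + 2 * n.choose 3 * involutionCount (n - 3) +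
        6 * n.choose 4 * involutionCount (n - 4) := by
  have c1 : ((TotalInvAux.TT n).filter (fun q => q.1 q.2.1 = q.2.2)).card
      + ((TotalInvAux.TT n).filter (fun q => ¬ q.1 q.2.1 = q.2.2)).card = (TotalInvAux.TT n).card :=
    Finset.card_filter_add_card_filter_not _
  have c2 : (((TotalInvAux.TT n).filter (fun q => ¬ q.1 q.2.1 = q.2.2)).filter
        (fun q => q.1 q.2.1 = q.2.1)).card
      + (((TotalInvAux.TT n).filter (fun q => ¬ q.1 q.2.1 = q.2.2)).filter
        (fun q => ¬ q.1 q.2.1 = q.2.1)).card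
      = ((TotalInvAux.TT n).filter (fun q => ¬ q.1 q.2.1 = q.2.2)).card :=
    Finset.card_filter_add_card_filter_not _
  have c3 : (((TotalInvAux.TT n).filter (fun q => ¬ q.1 q.2.1 = q.2.2 ∧ ¬ q.1 q.2.1 = q.2.1)).filter
        (fun q => q.1 q.2.2 = q.2.2)).card
      + (((TotalInvAux.TT n).filter (fun q => ¬ q.1 q.2.1 = q.2.2 ∧ ¬ q.1 q.2.1 = q.2.1)).filter
        (fun q => ¬ q.1 q.2.2 = q.2.2)).card
      = ((TotalInvAux.TT n).filter (fun q => ¬ q.1 q.2.1 = q.2.2 ∧ ¬ q.1 q.2.1 = q.2.1)).card :=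
    Finset.card_filter_add_card_filter_not _
  rw [Finset.filter_filter, Finset.filter_filter] at c2
  rw [Finset.filter_filter, Finset.filter_filter] at c3
  have e1 : ((TotalInvAux.TT n).filter (fun q => (¬ q.1 q.2.1 = q.2.2 ∧ ¬ q.1 q.2.1 = q.2.1)
        ∧ q.1 q.2.2 = q.2.2))
      = ((TotalInvAux.TT n).filter (fun q => ¬ q.1 q.2.1 = q.2.2 ∧ ¬ q.1 q.2.1 = q.2.1 ∧
        q.1 q.2.2 = q.2.2)) :=
    Finset.filter_congr (fun q _ => by tauto)
  have e2 : ((TotalInvAux.TT n).filter (fun q => (¬ q.1 q.2.1 = q.2.2 ∧ ¬ q.1 q.2.1 = q.2.1)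
        ∧ ¬ q.1 q.2.2 = q.2.2))
      = ((TotalInvAux.TT n).filter (fun q => ¬ q.1 q.2.1 = q.2.2 ∧ ¬ q.1 q.2.1 = q.2.1 ∧
        ¬ q.1 q.2.2 = q.2.2)) :=
    Finset.filter_congr (fun q _ => by tauto)
  rw [e1, e2] at c3
  have h6 : n.choose 2 * (n - 2).choose 2 = 6 * n.choose 4 := by
    have h := Nat.choose_mul (n := n) (show 2 ≤ 4 by norm_num)
    norm_num at h
    have h42 : Nat.choose 4 2 = 6 := rfl
    rw [h42] at h
    omega
  have := TotalInvAux.classA_card (n := n)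
  have := TotalInvAux.classB1_card (n := n)
  have := TotalInvAux.classB2_card (n := n)
  have := TotalInvAux.classC_card (n := n)
  rw [TotalInvAux.totalInv_eq_TT, ← c1, ← c2, ← c3, TotalInvAux.classA_card, TotalInvAux.classB1_card, TotalInvAux.classB2_card, TotalInvAux.classC_card,
    h6]
  ring
end

section
/- For all integers c ≥ 1 and n ≥ 4, the total number of colored inversions over all colored involutions of size n is given, as an equality of rational numbers, by i_n^{(c)} = ( n·c·((−1)^c + 1)/4 )·r_{n−1}^{(c)} + c·(c + 1 + (−1)^c)·C(n,2)·r_{n−2}^{(c)} + 2·c^2·((−1)^c + 2)·C(n,3)·r_{n−3}^{(c)} + 6·c^3·C(n,4)·r_{n−4}^{(c)}. -/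
open Finset

/-- `i_n^{(c)}`: the total number of colored inversions over all colored
involutions of size `n`. -/
def totalInvCInvolution (c n : ℕ) : ℕ :=
  ∑ σ ∈ Finset.univ.filter
      (fun σ : Equiv.Perm (Fin n) × (Fin n → Fin c) =>
        σ.1 * σ.1 = 1 ∧ ∀ i, ((σ.2 i : ℕ) + (σ.2 (σ.1 i) : ℕ)) % c = 0),
    invC c σ

namespace CIAux


/-- Generalized colored-involution predicate over any type. -/
def PCI (c : ℕ) {α : Type*} (σ : Equiv.Perm α × (α → Fin c)) : Prop :=
  σ.1 * σ.1 = 1 ∧ ∀ i, ((σ.2 i : ℕ) + (σ.2 (σ.1 i) : ℕ)) % c = 0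

instance {α : Type*} [DecidableEq α] [Fintype α] (c : ℕ) (σ : Equiv.Perm α × (α → Fin c)) :
    Decidable (PCI c σ) :=
  decidable_of_iff (σ.1 * σ.1 = 1 ∧ ∀ i, ((σ.2 i : ℕ) + (σ.2 (σ.1 i) : ℕ)) % c = 0) Iff.rfl

lemma sq_apply {α : Type*} {π : Equiv.Perm α} (h : π * π = 1) (x : α) : π (π x) = x := by
  have := congrArg (fun p => p x) h
  simpa using this

/-- Number of colored involutions on a finite type. -/
def cnt (c : ℕ) (α : Type*) [Fintype α] [DecidableEq α] : ℕ :=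
  (Finset.univ.filter (PCI c (α := α))).card

lemma cnt_congr (c : ℕ) {α β : Type*} [Fintype α] [DecidableEq α] [Fintype β] [DecidableEq β]
    (e : α ≃ β) : cnt c α = cnt c β := by
  unfold cnt
  rw [← Fintype.card_subtype, ← Fintype.card_subtype]
  apply Fintype.card_congr
  refine ⟨fun σ => ⟨(e.permCongr σ.1.1, σ.1.2 ∘ e.symm), ?_⟩,
          fun τ => ⟨(e.symm.permCongr τ.1.1, τ.1.2 ∘ e), ?_⟩, ?_, ?_⟩
  · obtain ⟨⟨π, f⟩, h1, h2⟩ := σ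
    constructor
    · ext x
      simp [Equiv.permCongr_apply, sq_apply h1]
    · intro i
      simpa [Equiv.permCongr_apply] using h2 (e.symm i)
  · obtain ⟨⟨π, f⟩, h1, h2⟩ := τ
    constructor
    · ext x
      simp [Equiv.permCongr_apply, sq_apply h1]
    · intro i
      simpa [Equiv.permCongr_apply] using h2 (e i)
  · rintro ⟨⟨π, f⟩, h⟩
    apply Subtype.ext
    refine Prod.ext ?_ ?_
    · ext x; simp [Equiv.permCongr_apply]
    · funext x; simp
  · rintro ⟨⟨π, f⟩, h⟩
    apply Subtype.ext
    refine Prod.ext ?_ ?_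
    · ext x; simp [Equiv.permCongr_apply]
    · funext x; simp

lemma cnt_fin (c m : ℕ) : cnt c (Fin m) = Nat.card
    {σ : Equiv.Perm (Fin m) × (Fin m → Fin c) //
      σ.1 * σ.1 = 1 ∧ ∀ i, ((σ.2 i : ℕ) + (σ.2 (σ.1 i) : ℕ)) % c = 0} := by
  classical
  rw [Nat.card_eq_fintype_card]
  unfold cnt
  rw [← Fintype.card_subtype]
  exact Fintype.card_congr (Equiv.subtypeEquivRight (fun _ => Iff.rfl))

lemma cnt_card (c m : ℕ) {α : Type*} [Fintype α] [DecidableEq α] (h : Fintype.card α = m) :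
    cnt c α = Nat.card
    {σ : Equiv.Perm (Fin m) × (Fin m → Fin c) //
      σ.1 * σ.1 = 1 ∧ ∀ i, ((σ.2 i : ℕ) + (σ.2 (σ.1 i) : ℕ)) % c = 0} := by
  rw [← cnt_fin]
  exact cnt_congr c (Fintype.equivFinOfCardEq h)

section Master

variable {c n : ℕ}

lemma notmem_iff {s : Finset (Fin n)} {G : Fin n → Fin n} {π : Equiv.Perm (Fin n)}
    (hsq : π * π = 1) (hQ : ∀ x ∈ s, π x = G x) (hGs : ∀ x ∈ s, G x ∈ s) :
    ∀ x : Fin n, x ∉ s ↔ π x ∉ s := by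
  intro x
  constructor
  · intro hx hmem
    have h1 : π (π x) = G (π x) := hQ _ hmem
    rw [sq_apply hsq] at h1
    exact hx (h1 ▸ hGs _ hmem)
  · intro hx hmem
    rw [hQ x hmem] at hx
    exact hx (hGs x hmem)

def extFun (s : Finset (Fin n)) (G : Fin n → Fin n) (π' : Equiv.Perm {x : Fin n // x ∉ s}) :
    Fin n → Fin n :=
  fun x => if h : x ∈ s then G x else (π' ⟨x, h⟩ : {x : Fin n // x ∉ s})

lemma extFun_mem {s : Finset (Fin n)} {G : Fin n → Fin n} (π' : Equiv.Perm {x : Fin n // x ∉ s})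
    {x : Fin n} (hx : x ∈ s) : extFun s G π' x = G x := dif_pos hx

lemma extFun_notmem {s : Finset (Fin n)} {G : Fin n → Fin n}
    (π' : Equiv.Perm {x : Fin n // x ∉ s}) {x : Fin n} (hx : x ∉ s) :
    extFun s G π' x = (π' ⟨x, hx⟩ : {x : Fin n // x ∉ s}) := dif_neg hx

def extCol (s : Finset (Fin n)) (H : Fin n → Fin c) (f' : {x : Fin n // x ∉ s} → Fin c) :
    Fin n → Fin c :=
  fun x => if h : x ∈ s then H x else f' ⟨x, h⟩

lemma extCol_mem {s : Finset (Fin n)} {H : Fin n → Fin c} (f' : {x : Fin n // x ∉ s} → Fin c)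
    {x : Fin n} (hx : x ∈ s) : extCol s H f' x = H x := dif_pos hx

lemma extCol_notmem {s : Finset (Fin n)} {H : Fin n → Fin c} (f' : {x : Fin n // x ∉ s} → Fin c)
    {x : Fin n} (hx : x ∉ s) : extCol s H f' x = f' ⟨x, hx⟩ := dif_neg hx

lemma extFun_involutive {s : Finset (Fin n)} {G : Fin n → Fin n}
    {π' : Equiv.Perm {x : Fin n // x ∉ s}}
    (hGs : ∀ x ∈ s, G x ∈ s) (hGG : ∀ x ∈ s, G (G x) = x) (hsq : π' * π' = 1) :
    Function.Involutive (extFun s G π') := by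
  intro x
  by_cases hx : x ∈ s
  · rw [extFun_mem _ hx, extFun_mem _ (hGs x hx), hGG x hx]
  · rw [extFun_notmem _ hx]
    have hy : ((π' ⟨x, hx⟩ : {x : Fin n // x ∉ s}) : Fin n) ∉ s := (π' ⟨x, hx⟩).2
    rw [extFun_notmem _ hy]
    rw [Subtype.coe_eta, sq_apply hsq]

lemma master (s : Finset (Fin n)) (G : Fin n → Fin n) (H : Fin n → Fin c)
    (hGs : ∀ x ∈ s, G x ∈ s) (hGG : ∀ x ∈ s, G (G x) = x)
    (hH : ∀ x ∈ s, ((H x : ℕ) + (H (G x) : ℕ)) % c = 0) :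
    (univ.filter (fun σ : Equiv.Perm (Fin n) × (Fin n → Fin c) =>
       PCI c σ ∧ ∀ x ∈ s, σ.1 x = G x ∧ σ.2 x = H x)).card
      = cnt c {x : Fin n // x ∉ s} := by
  unfold cnt
  refine Finset.card_bij'
    (fun σ hσ => (σ.1.subtypePerm
        (fun x => (notmem_iff (Finset.mem_filter.mp hσ).2.1.1
          (fun x hx => ((Finset.mem_filter.mp hσ).2.2 x hx).1) hGs x).symm),
      fun x => σ.2 x.1))
    (fun τ hτ => (Function.Involutive.toPerm (extFun s G τ.1)
        (extFun_involutive hGs hGG (Finset.mem_filter.mp hτ).2.1),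
      extCol s H τ.2))
    ?_ ?_ ?_ ?_
  · intro σ hσ
    simp only [Finset.mem_filter, Finset.mem_univ, true_and] at hσ ⊢
    obtain ⟨⟨h1, h2⟩, hQ⟩ := hσ
    constructor
    · apply Equiv.ext
      intro x
      apply Subtype.ext
      simp [Equiv.Perm.mul_apply, Equiv.Perm.subtypePerm_apply, sq_apply h1]
    · intro i
      simpa [Equiv.Perm.subtypePerm_apply] using h2 i.1
  · intro τ hτ
    simp only [Finset.mem_filter, Finset.mem_univ, true_and] at hτ
    obtain ⟨h1, h2⟩ := hτ
    simp only [Finset.mem_filter, Finset.mem_univ, true_and]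
    refine ⟨⟨?_, ?_⟩, ?_⟩
    · apply Equiv.ext
      intro x
      simp only [Equiv.Perm.mul_apply, Function.Involutive.coe_toPerm, Equiv.Perm.one_apply]
      exact extFun_involutive hGs hGG h1 x
    · intro x
      simp only [Function.Involutive.coe_toPerm]
      by_cases hx : x ∈ s
      · rw [extFun_mem _ hx, extCol_mem _ hx, extCol_mem _ (hGs x hx)]
        exact hH x hx
      · have hy : ((τ.1 ⟨x, hx⟩ : {x : Fin n // x ∉ s}) : Fin n) ∉ s := (τ.1 ⟨x, hx⟩).2
        rw [extFun_notmem _ hx, extCol_notmem _ hx, extCol_notmem _ hy, Subtype.coe_eta]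
        exact h2 ⟨x, hx⟩
    · intro x hx
      constructor
      · simp only [Function.Involutive.coe_toPerm]
        exact extFun_mem _ hx
      · exact extCol_mem _ hx
  · intro σ hσ
    simp only [Finset.mem_filter, Finset.mem_univ, true_and] at hσ
    obtain ⟨⟨h1, h2⟩, hQ⟩ := hσ
    refine Prod.ext ?_ ?_
    · apply Equiv.ext
      intro x
      simp only [Function.Involutive.coe_toPerm]
      by_cases hx : x ∈ s
      · rw [extFun_mem _ hx, (hQ x hx).1]
      · rw [extFun_notmem _ hx]
        simp [Equiv.Perm.subtypePerm_apply]
    · funext x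
      show extCol s H (fun y => σ.2 y.1) x = σ.2 x
      by_cases hx : x ∈ s
      · rw [extCol_mem _ hx, (hQ x hx).2]
      · rw [extCol_notmem _ hx]
  · intro τ hτ
    simp only [Finset.mem_filter, Finset.mem_univ, true_and] at hτ
    refine Prod.ext ?_ ?_
    · apply Equiv.ext
      rintro ⟨x1, hx⟩
      apply Subtype.ext
      simp only [Equiv.Perm.subtypePerm_apply, Function.Involutive.coe_toPerm]
      rw [extFun_notmem _ hx]
    · funext x
      obtain ⟨x1, hx⟩ := x
      exact extCol_notmem _ hx

lemma card_compl_subtype (s : Finset (Fin n)) :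
    Fintype.card {x : Fin n // x ∉ s} = n - s.card := by
  classical
  rw [Fintype.card_subtype_compl]
  simp [Fintype.card_coe]

end Master



section Counts

abbrev CP (c n : ℕ) := Equiv.Perm (Fin n) × (Fin n → Fin c)

/-- `r_m^{(c)}` as a `Nat.card`. -/
noncomputable def invCount (c m : ℕ) : ℕ := Nat.card
    {σ : Equiv.Perm (Fin m) × (Fin m → Fin c) //
      σ.1 * σ.1 = 1 ∧ ∀ i, ((σ.2 i : ℕ) + (σ.2 (σ.1 i) : ℕ)) % c = 0}

variable {c n : ℕ}

def negc (hc : 0 < c) (v : Fin c) : Fin c := ⟨(c - (v : ℕ)) % c, Nat.mod_lt _ hc⟩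

lemma negc_add (hc : 0 < c) (v : Fin c) : ((v : ℕ) + ((negc hc v : Fin c) : ℕ)) % c = 0 := by
  have hv : (v : ℕ) < c := v.2
  rcases Nat.eq_zero_or_pos (v : ℕ) with h | h
  · simp [negc, h, Nat.mod_self]
  · have h1 : c - (v : ℕ) < c := by omega
    have h2 : ((negc hc v : Fin c) : ℕ) = c - (v : ℕ) := Nat.mod_eq_of_lt h1
    rw [h2]
    have h3 : (v : ℕ) + (c - (v : ℕ)) = c := by omega
    rw [h3, Nat.mod_self]

lemma add_eq_negc (hc : 0 < c) {v w : Fin c} (h : ((v : ℕ) + (w : ℕ)) % c = 0) :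
    w = negc hc v := by
  have h2 := negc_add hc v
  have hmeq : ((v : ℕ) + (w : ℕ)) ≡ ((v : ℕ) + ((negc hc v : Fin c) : ℕ)) [MOD c] := by
    unfold Nat.ModEq
    rw [h, h2]
  have hw : (w : ℕ) % c = ((negc hc v : Fin c) : ℕ) % c := Nat.ModEq.add_left_cancel' (v : ℕ) hmeq
  rw [Nat.mod_eq_of_lt w.2, Nat.mod_eq_of_lt (negc hc v).2] at hw
  exact Fin.ext hw

lemma negc_add' (hc : 0 < c) (v : Fin c) :
    (((negc hc v : Fin c) : ℕ) + (v : ℕ)) % c = 0 := by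
  rw [Nat.add_comm]; exact negc_add hc v

lemma count_zero {Q : CP c n → Prop} [DecidablePred (fun σ : CP c n => PCI c σ ∧ Q σ)]
    (h : ∀ σ : CP c n, PCI c σ → ¬ Q σ) :
    (univ.filter (fun σ : CP c n => PCI c σ ∧ Q σ)).card = 0 := by
  rw [Finset.card_eq_zero, Finset.filter_eq_empty_iff]
  rintro σ - ⟨hP, hQ⟩
  exact h σ hP hQ

lemma masterCount (s : Finset (Fin n)) (G : Fin n → Fin n) (H : Fin n → Fin c)
    (hGs : ∀ x ∈ s, G x ∈ s) (hGG : ∀ x ∈ s, G (G x) = x)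
    (hH : ∀ x ∈ s, ((H x : ℕ) + (H (G x) : ℕ)) % c = 0) :
    (univ.filter (fun σ : CP c n =>
       PCI c σ ∧ ∀ x ∈ s, σ.1 x = G x ∧ σ.2 x = H x)).card
      = invCount c (n - s.card) := by
  rw [master s G H hGs hGG hH]
  exact cnt_card c (n - s.card) (card_compl_subtype s)

/-- single position: fixed point with color `v`, `2v ≡ 0`. -/
lemma count_fix1 (hc : 0 < c) {j : Fin n} {v : Fin c} (hv : ((v : ℕ) + (v : ℕ)) % c = 0) :
    (univ.filter (fun σ : CP c n => PCI c σ ∧ σ.1 j = j ∧ σ.2 j = v)).card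
      = invCount c (n - 1) := by
  have key : ∀ σ : CP c n, (PCI c σ ∧ σ.1 j = j ∧ σ.2 j = v)
      ↔ (PCI c σ ∧ ∀ x ∈ ({j} : Finset (Fin n)), σ.1 x = id x ∧ σ.2 x = (fun _ => v) x) := by
    intro σ
    constructor
    · rintro ⟨hP, h1, h2⟩
      refine ⟨hP, ?_⟩
      intro x hx
      rw [Finset.mem_singleton] at hx
      subst hx
      exact ⟨h1, h2⟩
    · rintro ⟨hP, hQ⟩
      have h := hQ j (Finset.mem_singleton_self j)
      exact ⟨hP, h.1, h.2⟩
  rw [Finset.filter_congr (fun σ _ => key σ)]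
  rw [masterCount ({j} : Finset (Fin n)) id (fun _ => v)
    (by intro x hx; simpa using hx) (by intro x hx; rfl)
    (by intro x hx; simpa using hv)]
  simp

lemma count_fix1_zero {j : Fin n} {v : Fin c} (hv : ((v : ℕ) + (v : ℕ)) % c ≠ 0) :
    (univ.filter (fun σ : CP c n => PCI c σ ∧ σ.1 j = j ∧ σ.2 j = v)).card = 0 := by
  apply count_zero
  rintro σ hP ⟨h1, h2⟩
  have := hP.2 j
  rw [h1, h2] at this
  exact hv this

/-- single position: in a 2-cycle `j ↦ l`, color `v` at `j`. -/
lemma count_1cyc (hc : 0 < c) {j l : Fin n} (hjl : j ≠ l) (v : Fin c) :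
    (univ.filter (fun σ : CP c n => PCI c σ ∧ σ.1 j = l ∧ σ.2 j = v)).card
      = invCount c (n - 2) := by
  have hlj := Ne.symm hjl
  set G : Fin n → Fin n := fun x => if x = j then l else j with hG
  set H : Fin n → Fin c := fun x => if x = j then v else negc hc v with hH
  have hGj : G j = l := by simp [hG]
  have hGl : G l = j := by simp [hG, hlj]
  have hHj : H j = v := by simp [hH]
  have hHl : H l = negc hc v := by simp [hH, hlj]
  have key : ∀ σ : CP c n, (PCI c σ ∧ σ.1 j = l ∧ σ.2 j = v)
      ↔ (PCI c σ ∧ ∀ x ∈ ({j, l} : Finset (Fin n)), σ.1 x = G x ∧ σ.2 x = H x) := by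
    intro σ
    constructor
    · rintro ⟨hP, h1, h2⟩
      have hl2 : σ.1 l = j := by rw [← h1, sq_apply hP.1]
      have hfl : σ.2 l = negc hc v := by
        have h3 := hP.2 j
        rw [h1, h2] at h3
        exact add_eq_negc hc h3
      refine ⟨hP, ?_⟩
      intro x hx
      rw [Finset.mem_insert, Finset.mem_singleton] at hx
      rcases hx with rfl | rfl
      · rw [hGj, hHj]; exact ⟨h1, h2⟩
      · rw [hGl, hHl]; exact ⟨hl2, hfl⟩
    · rintro ⟨hP, hQ⟩
      have h := hQ j (by simp)
      rw [hGj, hHj] at h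
      exact ⟨hP, h.1, h.2⟩
  rw [Finset.filter_congr (fun σ _ => key σ)]
  rw [masterCount ({j, l} : Finset (Fin n)) G H ?hGs ?hGG ?hH]
  case hGs =>
    intro x hx
    rw [Finset.mem_insert, Finset.mem_singleton] at hx
    rcases hx with rfl | rfl
    · rw [hGj]; simp
    · rw [hGl]; simp
  case hGG =>
    intro x hx
    rw [Finset.mem_insert, Finset.mem_singleton] at hx
    rcases hx with rfl | rfl
    · rw [hGj, hGl]
    · rw [hGl, hGj]
  case hH =>
    intro x hx
    rw [Finset.mem_insert, Finset.mem_singleton] at hx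
    rcases hx with rfl | rfl
    · rw [hGj, hHj, hHl]; exact negc_add hc v
    · rw [hGl, hHl, hHj]; exact negc_add' hc v
  rw [Finset.card_insert_of_notMem (by simp [hjl]), Finset.card_singleton]

/-- pair: 2-cycle `(i j)` with colors `u, v`, `u + v ≡ 0`. -/
lemma count_cc (hc : 0 < c) {i j : Fin n} (hij : i ≠ j) {u v : Fin c}
    (huv : ((u : ℕ) + (v : ℕ)) % c = 0) :
    (univ.filter (fun σ : CP c n =>
      PCI c σ ∧ σ.1 i = j ∧ σ.1 j = i ∧ σ.2 i = u ∧ σ.2 j = v)).card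
      = invCount c (n - 2) := by
  have hji := Ne.symm hij
  set G : Fin n → Fin n := fun x => if x = i then j else i with hG
  set H : Fin n → Fin c := fun x => if x = i then u else v with hH
  have hGi : G i = j := by simp [hG]
  have hGj : G j = i := by simp [hG, hji]
  have hHi : H i = u := by simp [hH]
  have hHj : H j = v := by simp [hH, hji]
  have key : ∀ σ : CP c n, (PCI c σ ∧ σ.1 i = j ∧ σ.1 j = i ∧ σ.2 i = u ∧ σ.2 j = v)
      ↔ (PCI c σ ∧ ∀ x ∈ ({i, j} : Finset (Fin n)), σ.1 x = G x ∧ σ.2 x = H x) := by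
    intro σ
    constructor
    · rintro ⟨hP, h1, h2, h3, h4⟩
      refine ⟨hP, ?_⟩
      intro x hx
      rw [Finset.mem_insert, Finset.mem_singleton] at hx
      rcases hx with rfl | rfl
      · rw [hGi, hHi]; exact ⟨h1, h3⟩
      · rw [hGj, hHj]; exact ⟨h2, h4⟩
    · rintro ⟨hP, hQ⟩
      have h := hQ i (by simp)
      have h' := hQ j (by simp)
      rw [hGi, hHi] at h
      rw [hGj, hHj] at h'
      exact ⟨hP, h.1, h'.1, h.2, h'.2⟩
  rw [Finset.filter_congr (fun σ _ => key σ)]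
  rw [masterCount ({i, j} : Finset (Fin n)) G H ?hGs ?hGG ?hH]
  case hGs =>
    intro x hx
    rw [Finset.mem_insert, Finset.mem_singleton] at hx
    rcases hx with rfl | rfl
    · rw [hGi]; simp
    · rw [hGj]; simp
  case hGG =>
    intro x hx
    rw [Finset.mem_insert, Finset.mem_singleton] at hx
    rcases hx with rfl | rfl
    · rw [hGi, hGj]
    · rw [hGj, hGi]
  case hH =>
    intro x hx
    rw [Finset.mem_insert, Finset.mem_singleton] at hx
    rcases hx with rfl | rfl
    · rw [hGi, hHi, hHj]; exact huv
    · rw [hGj, hHj, hHi]; rw [Nat.add_comm]; exact huv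
  rw [Finset.card_insert_of_notMem (by simp [hij]), Finset.card_singleton]

/-- pair: both fixed. -/
lemma count_ff (hc : 0 < c) {i j : Fin n} (hij : i ≠ j) {u v : Fin c}
    (hu : ((u : ℕ) + (u : ℕ)) % c = 0) (hv : ((v : ℕ) + (v : ℕ)) % c = 0) :
    (univ.filter (fun σ : CP c n =>
      PCI c σ ∧ σ.1 i = i ∧ σ.1 j = j ∧ σ.2 i = u ∧ σ.2 j = v)).card
      = invCount c (n - 2) := by
  have hji := Ne.symm hij
  set H : Fin n → Fin c := fun x => if x = i then u else v with hH
  have hHi : H i = u := by simp [hH]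
  have hHj : H j = v := by simp [hH, hji]
  have key : ∀ σ : CP c n, (PCI c σ ∧ σ.1 i = i ∧ σ.1 j = j ∧ σ.2 i = u ∧ σ.2 j = v)
      ↔ (PCI c σ ∧ ∀ x ∈ ({i, j} : Finset (Fin n)), σ.1 x = id x ∧ σ.2 x = H x) := by
    intro σ
    constructor
    · rintro ⟨hP, h1, h2, h3, h4⟩
      refine ⟨hP, ?_⟩
      intro x hx
      rw [Finset.mem_insert, Finset.mem_singleton] at hx
      rcases hx with rfl | rfl
      · rw [hHi]; exact ⟨h1, h3⟩
      · rw [hHj]; exact ⟨h2, h4⟩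
    · rintro ⟨hP, hQ⟩
      have h := hQ i (by simp)
      have h' := hQ j (by simp)
      rw [hHi] at h
      rw [hHj] at h'
      exact ⟨hP, h.1, h'.1, h.2, h'.2⟩
  rw [Finset.filter_congr (fun σ _ => key σ)]
  rw [masterCount ({i, j} : Finset (Fin n)) id H (by intro x hx; simpa using hx)
    (by intro x hx; rfl) ?hH]
  case hH =>
    intro x hx
    rw [Finset.mem_insert, Finset.mem_singleton] at hx
    rcases hx with rfl | rfl
    · show ((H x : ℕ) + (H x : ℕ)) % c = 0
      rw [hHi]; exact hu
    · show ((H x : ℕ) + (H x : ℕ)) % c = 0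
      rw [hHj]; exact hv
  rw [Finset.card_insert_of_notMem (by simp [hij]), Finset.card_singleton]

/-- pair: `i` fixed, `j ↦ l` a 2-cycle. -/
lemma count_fc (hc : 0 < c) {i j l : Fin n} (hij : i ≠ j) (hil : i ≠ l) (hjl : j ≠ l)
    {u : Fin c} (hu : ((u : ℕ) + (u : ℕ)) % c = 0) (v : Fin c) :
    (univ.filter (fun σ : CP c n =>
      PCI c σ ∧ σ.1 i = i ∧ σ.1 j = l ∧ σ.2 i = u ∧ σ.2 j = v)).card
      = invCount c (n - 3) := by
  have hji := Ne.symm hij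
  have hli := Ne.symm hil
  have hlj := Ne.symm hjl
  set G : Fin n → Fin n := fun x => if x = i then i else if x = j then l else j with hG
  set H : Fin n → Fin c := fun x => if x = i then u else if x = j then v else negc hc v with hH
  have hGi : G i = i := by simp [hG]
  have hGj : G j = l := by simp [hG, hji]
  have hGl : G l = j := by simp [hG, hli, hlj]
  have hHi : H i = u := by simp [hH]
  have hHj : H j = v := by simp [hH, hji]
  have hHl : H l = negc hc v := by simp [hH, hli, hlj]
  have key : ∀ σ : CP c n, (PCI c σ ∧ σ.1 i = i ∧ σ.1 j = l ∧ σ.2 i = u ∧ σ.2 j = v)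
      ↔ (PCI c σ ∧ ∀ x ∈ ({i, j, l} : Finset (Fin n)), σ.1 x = G x ∧ σ.2 x = H x) := by
    intro σ
    constructor
    · rintro ⟨hP, h1, h2, h3, h4⟩
      have hl2 : σ.1 l = j := by rw [← h2, sq_apply hP.1]
      have hfl : σ.2 l = negc hc v := by
        have h5 := hP.2 j
        rw [h2, h4] at h5
        exact add_eq_negc hc h5
      refine ⟨hP, ?_⟩
      intro x hx
      rw [Finset.mem_insert, Finset.mem_insert, Finset.mem_singleton] at hx
      rcases hx with rfl | rfl | rfl
      · rw [hGi, hHi]; exact ⟨h1, h3⟩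
      · rw [hGj, hHj]; exact ⟨h2, h4⟩
      · rw [hGl, hHl]; exact ⟨hl2, hfl⟩
    · rintro ⟨hP, hQ⟩
      have h := hQ i (by simp)
      have h' := hQ j (by simp)
      rw [hGi, hHi] at h
      rw [hGj, hHj] at h'
      exact ⟨hP, h.1, h'.1, h.2, h'.2⟩
  rw [Finset.filter_congr (fun σ _ => key σ)]
  rw [masterCount ({i, j, l} : Finset (Fin n)) G H ?hGs ?hGG ?hH]
  case hGs =>
    intro x hx
    rw [Finset.mem_insert, Finset.mem_insert, Finset.mem_singleton] at hx
    rcases hx with rfl | rfl | rfl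
    · rw [hGi]; simp
    · rw [hGj]; simp
    · rw [hGl]; simp
  case hGG =>
    intro x hx
    rw [Finset.mem_insert, Finset.mem_insert, Finset.mem_singleton] at hx
    rcases hx with rfl | rfl | rfl
    · rw [hGi, hGi]
    · rw [hGj, hGl]
    · rw [hGl, hGj]
  case hH =>
    intro x hx
    rw [Finset.mem_insert, Finset.mem_insert, Finset.mem_singleton] at hx
    rcases hx with rfl | rfl | rfl
    · rw [hGi, hHi]; exact hu
    · rw [hGj, hHj, hHl]; exact negc_add hc v
    · rw [hGl, hHl, hHj]; exact negc_add' hc v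
  rw [Finset.card_insert_of_notMem (by simp [hij, hil]),
    Finset.card_insert_of_notMem (by simp [hjl]), Finset.card_singleton]

/-- pair: `i ↦ k` a 2-cycle, `j` fixed. -/
lemma count_cf (hc : 0 < c) {i j k : Fin n} (hij : i ≠ j) (hik : i ≠ k) (hjk : j ≠ k)
    (u : Fin c) {v : Fin c} (hv : ((v : ℕ) + (v : ℕ)) % c = 0) :
    (univ.filter (fun σ : CP c n =>
      PCI c σ ∧ σ.1 i = k ∧ σ.1 j = j ∧ σ.2 i = u ∧ σ.2 j = v)).card
      = invCount c (n - 3) := by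
  have hji := Ne.symm hij
  have hki := Ne.symm hik
  have hkj := Ne.symm hjk
  set G : Fin n → Fin n := fun x => if x = j then j else if x = i then k else i with hG
  set H : Fin n → Fin c := fun x => if x = j then v else if x = i then u else negc hc u with hH
  have hGi : G i = k := by simp [hG, hij]
  have hGj : G j = j := by simp [hG]
  have hGk : G k = i := by simp [hG, hki, hkj]
  have hHi : H i = u := by simp [hH, hij]
  have hHj : H j = v := by simp [hH]
  have hHk : H k = negc hc u := by simp [hH, hki, hkj]
  have key : ∀ σ : CP c n, (PCI c σ ∧ σ.1 i = k ∧ σ.1 j = j ∧ σ.2 i = u ∧ σ.2 j = v)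
      ↔ (PCI c σ ∧ ∀ x ∈ ({i, j, k} : Finset (Fin n)), σ.1 x = G x ∧ σ.2 x = H x) := by
    intro σ
    constructor
    · rintro ⟨hP, h1, h2, h3, h4⟩
      have hk2 : σ.1 k = i := by rw [← h1, sq_apply hP.1]
      have hfk : σ.2 k = negc hc u := by
        have h5 := hP.2 i
        rw [h1, h3] at h5
        exact add_eq_negc hc h5
      refine ⟨hP, ?_⟩
      intro x hx
      rw [Finset.mem_insert, Finset.mem_insert, Finset.mem_singleton] at hx
      rcases hx with rfl | rfl | rfl
      · rw [hGi, hHi]; exact ⟨h1, h3⟩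
      · rw [hGj, hHj]; exact ⟨h2, h4⟩
      · rw [hGk, hHk]; exact ⟨hk2, hfk⟩
    · rintro ⟨hP, hQ⟩
      have h := hQ i (by simp)
      have h' := hQ j (by simp)
      rw [hGi, hHi] at h
      rw [hGj, hHj] at h'
      exact ⟨hP, h.1, h'.1, h.2, h'.2⟩
  rw [Finset.filter_congr (fun σ _ => key σ)]
  rw [masterCount ({i, j, k} : Finset (Fin n)) G H ?hGs ?hGG ?hH]
  case hGs =>
    intro x hx
    rw [Finset.mem_insert, Finset.mem_insert, Finset.mem_singleton] at hx
    rcases hx with rfl | rfl | rfl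
    · rw [hGi]; simp
    · rw [hGj]; simp
    · rw [hGk]; simp
  case hGG =>
    intro x hx
    rw [Finset.mem_insert, Finset.mem_insert, Finset.mem_singleton] at hx
    rcases hx with rfl | rfl | rfl
    · rw [hGi, hGk]
    · rw [hGj, hGj]
    · rw [hGk, hGi]
  case hH =>
    intro x hx
    rw [Finset.mem_insert, Finset.mem_insert, Finset.mem_singleton] at hx
    rcases hx with rfl | rfl | rfl
    · rw [hGi, hHi, hHk]; exact negc_add hc u
    · rw [hGj, hHj]; exact hv
    · rw [hGk, hHk, hHi]; exact negc_add' hc u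
  rw [Finset.card_insert_of_notMem (by simp [hij, hik]),
    Finset.card_insert_of_notMem (by simp [hjk]), Finset.card_singleton]

/-- pair: two disjoint 2-cycles `(i k)` and `(j l)`. -/
lemma count_free (hc : 0 < c) {i j k l : Fin n} (hij : i ≠ j) (hik : i ≠ k) (hil : i ≠ l)
    (hjk : j ≠ k) (hjl : j ≠ l) (hkl : k ≠ l) (u v : Fin c) :
    (univ.filter (fun σ : CP c n =>
      PCI c σ ∧ σ.1 i = k ∧ σ.1 j = l ∧ σ.2 i = u ∧ σ.2 j = v)).card
      = invCount c (n - 4) := by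
  have hji := Ne.symm hij
  have hki := Ne.symm hik
  have hli := Ne.symm hil
  have hkj := Ne.symm hjk
  have hlj := Ne.symm hjl
  have hlk := Ne.symm hkl
  set G : Fin n → Fin n :=
    fun x => if x = i then k else if x = k then i else if x = j then l else j with hG
  set H : Fin n → Fin c :=
    fun x => if x = i then u else if x = k then negc hc u else if x = j then v
      else negc hc v with hH
  have hGi : G i = k := by simp [hG]
  have hGk : G k = i := by simp [hG, hki]
  have hGj : G j = l := by simp [hG, hji, hjk]
  have hGl : G l = j := by simp [hG, hli, hlk, hlj]
  have hHi : H i = u := by simp [hH]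
  have hHk : H k = negc hc u := by simp [hH, hki]
  have hHj : H j = v := by simp [hH, hji, hjk]
  have hHl : H l = negc hc v := by simp [hH, hli, hlk, hlj]
  have key : ∀ σ : CP c n, (PCI c σ ∧ σ.1 i = k ∧ σ.1 j = l ∧ σ.2 i = u ∧ σ.2 j = v)
      ↔ (PCI c σ ∧ ∀ x ∈ ({i, j, k, l} : Finset (Fin n)), σ.1 x = G x ∧ σ.2 x = H x) := by
    intro σ
    constructor
    · rintro ⟨hP, h1, h2, h3, h4⟩
      have hk2 : σ.1 k = i := by rw [← h1, sq_apply hP.1]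
      have hl2 : σ.1 l = j := by rw [← h2, sq_apply hP.1]
      have hfk : σ.2 k = negc hc u := by
        have h5 := hP.2 i
        rw [h1, h3] at h5
        exact add_eq_negc hc h5
      have hfl : σ.2 l = negc hc v := by
        have h5 := hP.2 j
        rw [h2, h4] at h5
        exact add_eq_negc hc h5
      refine ⟨hP, ?_⟩
      intro x hx
      rw [Finset.mem_insert, Finset.mem_insert, Finset.mem_insert,
        Finset.mem_singleton] at hx
      rcases hx with rfl | rfl | rfl | rfl
      · rw [hGi, hHi]; exact ⟨h1, h3⟩
      · rw [hGj, hHj]; exact ⟨h2, h4⟩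
      · rw [hGk, hHk]; exact ⟨hk2, hfk⟩
      · rw [hGl, hHl]; exact ⟨hl2, hfl⟩
    · rintro ⟨hP, hQ⟩
      have h := hQ i (by simp)
      have h' := hQ j (by simp)
      rw [hGi, hHi] at h
      rw [hGj, hHj] at h'
      exact ⟨hP, h.1, h'.1, h.2, h'.2⟩
  rw [Finset.filter_congr (fun σ _ => key σ)]
  rw [masterCount ({i, j, k, l} : Finset (Fin n)) G H ?hGs ?hGG ?hH]
  case hGs =>
    intro x hx
    rw [Finset.mem_insert, Finset.mem_insert, Finset.mem_insert,
      Finset.mem_singleton] at hx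
    rcases hx with rfl | rfl | rfl | rfl
    · rw [hGi]; simp
    · rw [hGj]; simp
    · rw [hGk]; simp
    · rw [hGl]; simp
  case hGG =>
    intro x hx
    rw [Finset.mem_insert, Finset.mem_insert, Finset.mem_insert,
      Finset.mem_singleton] at hx
    rcases hx with rfl | rfl | rfl | rfl
    · rw [hGi, hGk]
    · rw [hGj, hGl]
    · rw [hGk, hGi]
    · rw [hGl, hGj]
  case hH =>
    intro x hx
    rw [Finset.mem_insert, Finset.mem_insert, Finset.mem_insert,
      Finset.mem_singleton] at hx
    rcases hx with rfl | rfl | rfl | rfl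
    · rw [hGi, hHi, hHk]; exact negc_add hc u
    · rw [hGj, hHj, hHl]; exact negc_add hc v
    · rw [hGk, hHk, hHi]; exact negc_add' hc u
    · rw [hGl, hHl, hHj]; exact negc_add' hc v
  rw [Finset.card_insert_of_notMem (by simp [hij, hik, hil]),
    Finset.card_insert_of_notMem (by simp [hjk, hjl]),
    Finset.card_insert_of_notMem (by simp [hkl]), Finset.card_singleton]


section Zeros

variable {c n : ℕ}

/-- bad color on a 2-cycle. -/
lemma z_cc {i j : Fin n} {u v : Fin c} (h : ((u : ℕ) + (v : ℕ)) % c ≠ 0) :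
    (univ.filter (fun σ : CP c n =>
      PCI c σ ∧ σ.1 i = j ∧ σ.1 j = i ∧ σ.2 i = u ∧ σ.2 j = v)).card = 0 := by
  apply count_zero
  rintro σ hP ⟨h1, h2, h3, h4⟩
  have h5 := hP.2 i
  rw [h1, h3, h4] at h5
  exact h h5

/-- `π i = j` but `π j ≠ i`. -/
lemma z_snd_bad {i j k l : Fin n} {u v : Fin c} (hk : k = j) (hl : l ≠ i) :
    (univ.filter (fun σ : CP c n =>
      PCI c σ ∧ σ.1 i = k ∧ σ.1 j = l ∧ σ.2 i = u ∧ σ.2 j = v)).card = 0 := by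
  subst hk
  apply count_zero
  rintro σ hP ⟨h1, h2, h3, h4⟩
  apply hl
  rw [← h2, ← h1, sq_apply hP.1]

/-- `π j = i` but `π i ≠ j`. -/
lemma z_fst_bad {i j k l : Fin n} {u v : Fin c} (hl : l = i) (hk : k ≠ j) :
    (univ.filter (fun σ : CP c n =>
      PCI c σ ∧ σ.1 i = k ∧ σ.1 j = l ∧ σ.2 i = u ∧ σ.2 j = v)).card = 0 := by
  subst hl
  apply count_zero
  rintro σ hP ⟨h1, h2, h3, h4⟩
  apply hk
  rw [← h1, ← h2, sq_apply hP.1]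

/-- `i` fixed with bad color. -/
lemma z_fix_i {i j l : Fin n} {u v : Fin c} (h : ((u : ℕ) + (u : ℕ)) % c ≠ 0) :
    (univ.filter (fun σ : CP c n =>
      PCI c σ ∧ σ.1 i = i ∧ σ.1 j = l ∧ σ.2 i = u ∧ σ.2 j = v)).card = 0 := by
  apply count_zero
  rintro σ hP ⟨h1, h2, h3, h4⟩
  have h5 := hP.2 i
  rw [h1, h3] at h5
  exact h h5

/-- `j` fixed with bad color. -/
lemma z_fix_j {i j k : Fin n} {u v : Fin c} (h : ((v : ℕ) + (v : ℕ)) % c ≠ 0) :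
    (univ.filter (fun σ : CP c n =>
      PCI c σ ∧ σ.1 i = k ∧ σ.1 j = j ∧ σ.2 i = u ∧ σ.2 j = v)).card = 0 := by
  apply count_zero
  rintro σ hP ⟨h1, h2, h3, h4⟩
  have h5 := hP.2 j
  rw [h2, h4] at h5
  exact h h5

end Zeros

section Keys

variable {c n : ℕ}

/-- Pointwise evaluation for the inversion statistic. -/
lemma Akey (hc : 0 < c) {i j : Fin n} (hij : i < j) (k l : Fin n) (u v : Fin c) :
    (if l < k then (univ.filter (fun σ : CP c n =>
        PCI c σ ∧ σ.1 i = k ∧ σ.1 j = l ∧ σ.2 i = u ∧ σ.2 j = v)).card else 0)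
    = (if (k = j ∧ l = i) ∧ ((u : ℕ) + (v : ℕ)) % c = 0 then invCount c (n - 2) else 0)
    + (if (k = i ∧ l < i) ∧ ((u : ℕ) + (u : ℕ)) % c = 0 then invCount c (n - 3) else 0)
    + (if (j < k ∧ l = j) ∧ ((v : ℕ) + (v : ℕ)) % c = 0 then invCount c (n - 3) else 0)
    + (if k ≠ i ∧ k ≠ j ∧ l ≠ i ∧ l ≠ j ∧ l < k then invCount c (n - 4) else 0) := by
  have hijne : i ≠ j := ne_of_lt hij
  have hjine : j ≠ i := Ne.symm hijne
  by_cases hlk : l < k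
  · rw [if_pos hlk]
    by_cases hkj : k = j
    · by_cases hli : l = i
      · simp only [hkj, hli]
        by_cases hcol : ((u : ℕ) + (v : ℕ)) % c = 0
        · rw [count_cc hc hijne hcol]
          simp [hcol, hjine, hijne, lt_irrefl]
        · rw [z_cc hcol]
          simp [hcol, hjine, lt_irrefl]
      · simp only [hkj]
        rw [z_snd_bad rfl hli]
        simp [hli, hjine, lt_irrefl]
    · by_cases hli : l = i
      · simp only [hli]
        rw [z_fst_bad rfl hkj]
        simp [hkj, hijne, lt_irrefl]
      · by_cases hki : k = i
        · have hli2 : l < i := hki ▸ hlk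
          have hlj : l ≠ j := ne_of_lt (lt_trans hli2 hij)
          simp only [hki]
          by_cases hu : ((u : ℕ) + (u : ℕ)) % c = 0
          · rw [count_fc hc hijne (Ne.symm hli) (Ne.symm hlj) hu v]
            simp [hu, hli2, hijne, hlj, lt_irrefl]
          · rw [z_fix_i hu]
            simp [hu, hijne, hlj, lt_irrefl]
        · by_cases hlj : l = j
          · have hjk : j < k := hlj ▸ hlk
            simp only [hlj]
            by_cases hv : ((v : ℕ) + (v : ℕ)) % c = 0
            · rw [count_cf hc hijne (fun h => hki h.symm) (fun h => hkj h.symm) u hv]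
              simp [hv, hjk, hki, hkj, hjine]
            · rw [z_fix_j hv]
              simp [hv, hki, hkj, hjine]
          · rw [count_free hc hijne (fun h => hki h.symm) (fun h => hli h.symm)
              (fun h => hkj h.symm) (fun h => hlj h.symm) (fun h => (ne_of_lt hlk) h.symm)
              u v]
            simp [hki, hkj, hli, hlj, hlk]
  · rw [if_neg hlk,
      if_neg (by rintro ⟨⟨rfl, rfl⟩, h3⟩; exact hlk hij),
      if_neg (by rintro ⟨⟨rfl, h2⟩, h3⟩; exact hlk h2),
      if_neg (by rintro ⟨⟨h1, rfl⟩, h3⟩; exact hlk h1),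
      if_neg (by rintro ⟨h1, h2, h3, h4, h5⟩; exact hlk h5)]

/-- Pointwise evaluation for the colored coinversion statistic. -/
lemma Ckey (hc : 0 < c) {i j : Fin n} (hij : i < j) (k l : Fin n) (u v : Fin c) :
    (if k < l ∧ (v : ℕ) ≠ 0 then (univ.filter (fun σ : CP c n =>
        PCI c σ ∧ σ.1 i = k ∧ σ.1 j = l ∧ σ.2 i = u ∧ σ.2 j = v)).card else 0)
    = (if (k = i ∧ l = j) ∧ (((u : ℕ) + (u : ℕ)) % c = 0 ∧ (((v : ℕ) + (v : ℕ)) % c = 0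
          ∧ (v : ℕ) ≠ 0)) then invCount c (n - 2) else 0)
    + (if (k = i ∧ (i < l ∧ l ≠ j)) ∧ (((u : ℕ) + (u : ℕ)) % c = 0 ∧ (v : ℕ) ≠ 0)
          then invCount c (n - 3) else 0)
    + (if ((k < j ∧ k ≠ i) ∧ l = j) ∧ ((((v : ℕ) + (v : ℕ)) % c = 0 ∧ (v : ℕ) ≠ 0))
          then invCount c (n - 3) else 0)
    + (if (k ≠ i ∧ k ≠ j ∧ l ≠ i ∧ l ≠ j ∧ k < l) ∧ (v : ℕ) ≠ 0
          then invCount c (n - 4) else 0) := by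
  have hijne : i ≠ j := ne_of_lt hij
  have hjine : j ≠ i := Ne.symm hijne
  by_cases hmain : k < l ∧ (v : ℕ) ≠ 0
  · obtain ⟨hkl, hv0⟩ := hmain
    rw [if_pos ⟨hkl, hv0⟩]
    by_cases hkj : k = j
    · have hil : i < l := lt_trans hij (hkj ▸ hkl)
      have hli : l ≠ i := Ne.symm (ne_of_lt hil)
      have hlj : l ≠ j := Ne.symm (ne_of_lt (hkj ▸ hkl))
      simp only [hkj]
      rw [z_snd_bad rfl hli]
      simp [hli, hlj, hjine, lt_irrefl]
    · by_cases hli : l = i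
      · have hki2 : k < i := hli ▸ hkl
        have hkj2 : k ≠ j := ne_of_lt (lt_trans hki2 hij)
        simp only [hli]
        rw [z_fst_bad rfl hkj2]
        simp [hijne, lt_irrefl]
      · by_cases hki : k = i
        · simp only [hki]
          have hil : i < l := hki ▸ hkl
          by_cases hlj : l = j
          · simp only [hlj]
            by_cases hu : ((u : ℕ) + (u : ℕ)) % c = 0
            · by_cases hv : ((v : ℕ) + (v : ℕ)) % c = 0
              · rw [count_ff hc hijne hu hv]
                simp [hu, hv, hv0, hijne, lt_irrefl]
              · rw [z_fix_j hv]
                simp [hv, hijne, lt_irrefl]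
            · rw [z_fix_i hu]
              simp [hu, hijne, lt_irrefl]
          · by_cases hu : ((u : ℕ) + (u : ℕ)) % c = 0
            · rw [count_fc hc hijne (Ne.symm hli) (fun h => hlj h.symm) hu v]
              simp [hu, hv0, hil, hli, hlj, hijne, lt_irrefl]
            · rw [z_fix_i hu]
              simp [hu, hli, hlj, hijne, lt_irrefl]
        · by_cases hlj : l = j
          · have hkjlt : k < j := hlj ▸ hkl
            simp only [hlj]
            by_cases hv : ((v : ℕ) + (v : ℕ)) % c = 0
            · rw [count_cf hc hijne (fun h => hki h.symm) (fun h => hkj h.symm) u hv]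
              simp [hv, hv0, hkjlt, hki, hkj, hjine, lt_irrefl]
            · rw [z_fix_j hv]
              simp [hv, hki, hkj, hjine, lt_irrefl]
          · rw [count_free hc hijne (fun h => hki h.symm) (fun h => hli h.symm)
              (fun h => hkj h.symm) (fun h => hlj h.symm) (ne_of_lt hkl) u v]
            simp [hki, hkj, hli, hlj, hkl, hv0]
  · rw [if_neg hmain,
      if_neg (by rintro ⟨⟨rfl, rfl⟩, h3, h4, h5⟩; exact hmain ⟨hij, h5⟩),
      if_neg (by rintro ⟨⟨rfl, h2, h3⟩, h4, h5⟩; exact hmain ⟨h2, h5⟩),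
      if_neg (by rintro ⟨⟨⟨h2, h3⟩, rfl⟩, h4, h5⟩; exact hmain ⟨h2, h5⟩),
      if_neg (by rintro ⟨⟨h1, h2, h3, h4, h5⟩, h6⟩; exact hmain ⟨h5, h6⟩)]

/-- Pointwise evaluation for the color-sum statistic. -/
lemma Bkey (hc : 0 < c) (j l : Fin n) (v : Fin c) :
    (v : ℕ) * (univ.filter (fun σ : CP c n =>
        PCI c σ ∧ σ.1 j = l ∧ σ.2 j = v)).card
    = (if l = j ∧ ((v : ℕ) + (v : ℕ)) % c = 0 then (v : ℕ) * invCount c (n - 1) else 0)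
    + (if l ≠ j then (v : ℕ) * invCount c (n - 2) else 0) := by
  by_cases hlj : l = j
  · simp only [hlj]
    by_cases hv : ((v : ℕ) + (v : ℕ)) % c = 0
    · rw [count_fix1 hc hv]
      simp [hv]
    · rw [count_fix1_zero hv]
      simp [hv]
  · rw [count_1cyc hc (Ne.symm hlj) v]
    simp [hlj]

end Keys
end Counts

section Sums

variable {c n : ℕ}

lemma hockey (N t : ℕ) : ∑ m ∈ Finset.range N, m.choose t = N.choose (t + 1) := by
  induction N with
  | zero => simp
  | succ N ih => rw [Finset.sum_range_succ, ih, Nat.choose_succ_succ N t]; simp [Nat.succ_eq_add_one]; omega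

lemma fiber_count {α γ : Type*} [DecidableEq γ] [Fintype γ] (T : Finset α) (φ : α → γ)
    (cond : γ → Prop) [DecidablePred cond] [DecidableEq α] :
    (T.filter (fun x => cond (φ x))).card
      = ∑ q : γ, if cond q then (T.filter (fun x => φ x = q)).card else 0 := by
  rw [Finset.card_eq_sum_card_fiberwise (f := φ) (t := univ) (fun x _ => mem_univ _)]
  apply Finset.sum_congr rfl
  intro q _
  rw [Finset.filter_filter]
  by_cases hq : cond q
  · rw [if_pos hq]
    congr 1
    apply Finset.filter_congr
    intro x _
    constructor
    · rintro ⟨_, h⟩; exact h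
    · intro h; exact ⟨h ▸ hq, h⟩
  · rw [if_neg hq, Finset.card_eq_zero, Finset.filter_eq_empty_iff]
    rintro x - ⟨hcond, heq⟩
    exact hq (heq ▸ hcond)

lemma fiber_sum {α γ : Type*} [DecidableEq γ] [Fintype γ] [DecidableEq α]
    (T : Finset α) (φ : α → γ) (w : γ → ℕ) :
    (∑ x ∈ T, w (φ x)) = ∑ q : γ, w q * (T.filter (fun x => φ x = q)).card := by
  rw [← Finset.sum_fiberwise T φ (fun x => w (φ x))]
  apply Finset.sum_congr rfl
  intro q _
  rw [Finset.sum_congr rfl (fun x hx => by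
    rw [Finset.mem_filter] at hx
    rw [hx.2] : ∀ x ∈ T.filter (fun x => φ x = q), w (φ x) = w q)]
  rw [Finset.sum_const, smul_eq_mul, mul_comm]

/-- the number of color pairs summing to `0 (mod c)` is `c`. -/
lemma sum_colpair (hc : 0 < c) (X : ℕ) :
    (∑ u : Fin c, ∑ v : Fin c, if ((u : ℕ) + (v : ℕ)) % c = 0 then X else 0) = c * X := by
  have h : ∀ u : Fin c, (univ.filter (fun v : Fin c => ((u : ℕ) + (v : ℕ)) % c = 0))
      = {negc hc u} := by
    intro u
    ext v
    simp only [Finset.mem_filter, Finset.mem_univ, true_and, Finset.mem_singleton]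
    constructor
    · exact fun hv => add_eq_negc hc hv
    · rintro rfl; exact negc_add hc u
  have h2 : ∀ u : Fin c, (∑ v : Fin c, if ((u : ℕ) + (v : ℕ)) % c = 0 then X else 0) = X := by
    intro u
    rw [← Finset.sum_filter, h u, Finset.sum_singleton]
  rw [Finset.sum_congr rfl (fun u _ => h2 u), Finset.sum_const, Finset.card_univ,
    Fintype.card_fin, smul_eq_mul]

def aCol (c : ℕ) : ℕ := ((univ : Finset (Fin c)).filter
  (fun v : Fin c => ((v : ℕ) + (v : ℕ)) % c = 0)).card

def a1Col (c : ℕ) : ℕ := ((univ : Finset (Fin c)).filter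
  (fun v : Fin c => (((v : ℕ) + (v : ℕ)) % c = 0 ∧ (v : ℕ) ≠ 0))).card

def svCol (c : ℕ) : ℕ := ∑ v ∈ (univ : Finset (Fin c)).filter
  (fun v : Fin c => ((v : ℕ) + (v : ℕ)) % c = 0), (v : ℕ)

lemma sum_if_self (X : ℕ) :
    (∑ v : Fin c, if ((v : ℕ) + (v : ℕ)) % c = 0 then X else 0) = aCol c * X := by
  rw [← Finset.sum_filter, Finset.sum_const, smul_eq_mul]
  rfl

lemma sum_if_self_ne (X : ℕ) :
    (∑ v : Fin c, if ((v : ℕ) + (v : ℕ)) % c = 0 ∧ (v : ℕ) ≠ 0 then X else 0)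
      = a1Col c * X := by
  rw [← Finset.sum_filter, Finset.sum_const, smul_eq_mul]
  rfl

lemma sum_if_ne (hc : 0 < c) (X : ℕ) :
    (∑ v : Fin c, if (v : ℕ) ≠ 0 then X else 0) = (c - 1) * X := by
  rw [← Finset.sum_filter, Finset.sum_const, smul_eq_mul]
  congr 1
  have h : (univ : Finset (Fin c)).filter (fun v : Fin c => (v : ℕ) ≠ 0)
      = univ.erase ⟨0, hc⟩ := by
    ext v
    simp only [Finset.mem_filter, Finset.mem_univ, true_and, Finset.mem_erase, and_true]
    constructor
    · intro hv h0
      exact hv (by rw [h0])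
    · intro hv h0
      exact hv (Fin.ext h0)
  rw [h, Finset.card_erase_of_mem (mem_univ _), Finset.card_univ, Fintype.card_fin]

lemma sum_val : (∑ v : Fin c, (v : ℕ)) = c.choose 2 := by
  rw [Fin.sum_univ_eq_sum_range (fun m => m) c]
  rw [Finset.sum_congr rfl (fun m _ => (Nat.choose_one_right m).symm), hockey]

lemma two_v_iff (hc : 0 < c) (v : Fin c) :
    ((v : ℕ) + (v : ℕ)) % c = 0 ↔ ((v : ℕ) = 0 ∨ (v : ℕ) + (v : ℕ) = c) := by
  constructor
  · intro h
    obtain ⟨t, ht⟩ := Nat.dvd_of_mod_eq_zero h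
    have hv := v.2
    match t with
    | 0 => left; omega
    | 1 => right; omega
    | (t + 2) =>
      exfalso
      have : c * 2 ≤ c * (t + 2) := Nat.mul_le_mul_left c (by omega)
      omega
  · rintro (h | h)
    · rw [h]; simp
    · rw [h, Nat.mod_self]

lemma filter_self_odd (hc : 0 < c) (hodd : c % 2 = 1) :
    (univ : Finset (Fin c)).filter (fun v : Fin c => ((v : ℕ) + (v : ℕ)) % c = 0)
      = {⟨0, hc⟩} := by
  ext v
  simp only [Finset.mem_filter, Finset.mem_univ, true_and, Finset.mem_singleton,
    two_v_iff hc, Fin.ext_iff]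
  omega

lemma filter_self_even {d : ℕ} (hd : 0 < d) (hcd : c = 2 * d) :
    (univ : Finset (Fin c)).filter (fun v : Fin c => ((v : ℕ) + (v : ℕ)) % c = 0)
      = {⟨0, by omega⟩, ⟨d, by omega⟩} := by
  ext v
  simp only [Finset.mem_filter, Finset.mem_univ, true_and, Finset.mem_insert,
    Finset.mem_singleton, two_v_iff (show 0 < c by omega), Fin.ext_iff]
  omega

lemma aCol_odd (hc : 0 < c) (hodd : c % 2 = 1) : aCol c = 1 := by
  rw [aCol, filter_self_odd hc hodd, Finset.card_singleton]

lemma svCol_odd (hc : 0 < c) (hodd : c % 2 = 1) : svCol c = 0 := by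
  rw [svCol, filter_self_odd hc hodd, Finset.sum_singleton]

lemma a1Col_odd (hc : 0 < c) (hodd : c % 2 = 1) : a1Col c = 0 := by
  rw [a1Col, Finset.card_eq_zero, Finset.filter_eq_empty_iff]
  intro v _
  rw [two_v_iff hc]
  omega

lemma aCol_even {d : ℕ} (hd : 0 < d) (hcd : c = 2 * d) : aCol c = 2 := by
  rw [aCol, filter_self_even hd hcd,
    Finset.card_insert_of_notMem (by simp [Fin.ext_iff]; omega), Finset.card_singleton]

lemma svCol_even {d : ℕ} (hd : 0 < d) (hcd : c = 2 * d) : svCol c = d := by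
  rw [svCol, filter_self_even hd hcd,
    Finset.sum_insert (by simp [Fin.ext_iff]; omega), Finset.sum_singleton]
  simp

lemma a1Col_even {d : ℕ} (hd : 0 < d) (hcd : c = 2 * d) : a1Col c = 1 := by
  have h : (univ : Finset (Fin c)).filter
      (fun v : Fin c => (((v : ℕ) + (v : ℕ)) % c = 0 ∧ (v : ℕ) ≠ 0)) = {⟨d, by omega⟩} := by
    ext v
    simp only [Finset.mem_filter, Finset.mem_univ, true_and, Finset.mem_singleton,
      two_v_iff (show 0 < c by omega), Fin.ext_iff]
    omega
  rw [a1Col, h, Finset.card_singleton]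

/-- number of positions below `i`. -/
lemma card_lt (i : Fin n) : ((univ : Finset (Fin n)).filter (fun l => l < i)).card = (i : ℕ) := by
  rw [show (univ : Finset (Fin n)).filter (fun l => l < i) = Finset.Iio i from by
    ext l; simp [Finset.mem_Iio]]
  exact Fin.card_Iio i

lemma sum_if_lt (i : Fin n) (X : ℕ) :
    (∑ l : Fin n, if l < i then X else 0) = (i : ℕ) * X := by
  rw [← Finset.sum_filter, Finset.sum_const, smul_eq_mul, card_lt]

end Sums

section Pos

variable {n : ℕ}

lemma pairs_sym (s : Finset (Fin n)) :
    ((s ×ˢ s).filter (fun p => p.1 < p.2)).card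
      = ((s ×ˢ s).filter (fun p => p.2 < p.1)).card := by
  refine Finset.card_bij' (fun p _ => p.swap) (fun p _ => p.swap) ?_ ?_ ?_ ?_
  · intro a ha
    simp only [Finset.mem_filter, Finset.mem_product] at ha ⊢
    exact ⟨⟨ha.1.2, ha.1.1⟩, ha.2⟩
  · intro a ha
    simp only [Finset.mem_filter, Finset.mem_product] at ha ⊢
    exact ⟨⟨ha.1.2, ha.1.1⟩, ha.2⟩
  · intro a _; simp
  · intro a _; simp

lemma choose2_mul_two (m : ℕ) : m.choose 2 * 2 = m * (m - 1) := by
  cases m with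
  | zero => simp
  | succ m =>
    have h := Nat.add_one_mul_choose_eq m 1
    rw [Nat.choose_one_right] at h
    norm_num at h
    rw [Nat.add_sub_cancel]
    omega

lemma pairs_lt_card (s : Finset (Fin n)) :
    ((s ×ˢ s).filter (fun p => p.1 < p.2)).card = s.card.choose 2 := by
  have hsym := pairs_sym s
  have hunion : (s ×ˢ s).filter (fun p => p.1 ≠ p.2)
      = (s ×ˢ s).filter (fun p => p.1 < p.2) ∪ (s ×ˢ s).filter (fun p => p.2 < p.1) := by
    rw [← Finset.filter_or]
    apply Finset.filter_congr
    intro p _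
    exact ne_iff_lt_or_gt
  have hdisj : Disjoint ((s ×ˢ s).filter (fun p => p.1 < p.2))
      ((s ×ˢ s).filter (fun p => p.2 < p.1)) := by
    rw [Finset.disjoint_left]
    intro p hp hp'
    rw [Finset.mem_filter] at hp hp'
    exact absurd hp'.2 (not_lt_of_gt hp.2)
  have hoff : s.offDiag = (s ×ˢ s).filter (fun p => p.1 ≠ p.2) := by
    ext p
    simp [Finset.mem_offDiag, Finset.mem_filter, Finset.mem_product]
    tauto
  have hcard : ((s ×ˢ s).filter (fun p => p.1 < p.2)).card
      + ((s ×ˢ s).filter (fun p => p.2 < p.1)).card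
      = s.card * s.card - s.card := by
    rw [← Finset.card_union_of_disjoint hdisj, ← hunion, ← hoff, Finset.offDiag_card]
  have h2 : s.card * (s.card - 1) = s.card * s.card - s.card := by
    rw [Nat.mul_sub, Nat.mul_one]
  rw [← hsym] at hcard
  have h3 := choose2_mul_two s.card
  rw [h2] at h3
  generalize hM : s.card * s.card - s.card = M at hcard h3
  omega

lemma pairs_gt_card (s : Finset (Fin n)) :
    ((s ×ˢ s).filter (fun p => p.2 < p.1)).card = s.card.choose 2 := by
  rw [← pairs_sym, pairs_lt_card]

lemma chains3_card : (((univ : Finset (Fin n × Fin n × Fin n))).filter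
    (fun t => t.1 < t.2.1 ∧ t.2.1 < t.2.2)).card = n.choose 3 := by
  rw [Finset.card_eq_sum_card_fiberwise (f := fun t => t.2.2) (t := univ)
    (fun x _ => mem_univ _)]
  have hfib : ∀ k : Fin n, ((((univ : Finset (Fin n × Fin n × Fin n))).filter
      (fun t => t.1 < t.2.1 ∧ t.2.1 < t.2.2)).filter (fun t => t.2.2 = k)).card
      = ((k : ℕ)).choose 2 := by
    intro k
    have h := pairs_lt_card (Finset.Iio k)
    rw [Fin.card_Iio] at h
    rw [← h]
    refine Finset.card_bij' (fun t _ => (t.1, t.2.1)) (fun p _ => (p.1, p.2, k)) ?_ ?_ ?_ ?_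
    · intro a ha
      simp only [Finset.mem_filter, Finset.mem_univ, true_and, Finset.mem_product,
        Finset.mem_Iio] at ha ⊢
      obtain ⟨⟨h1, h2⟩, h3⟩ := ha
      subst h3
      exact ⟨⟨lt_trans h1 h2, h2⟩, h1⟩
    · intro a ha
      simp only [Finset.mem_filter, Finset.mem_univ, true_and, Finset.mem_product,
        Finset.mem_Iio] at ha ⊢
      exact ⟨⟨ha.2, ha.1.2⟩, by trivial⟩
    · intro a ha
      simp only [Finset.mem_filter] at ha
      obtain ⟨-, h3⟩ := ha
      simp [← h3]
    · intro a _
      simp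
  rw [Finset.sum_congr rfl (fun k _ => hfib k)]
  rw [Fin.sum_univ_eq_sum_range (fun m => m.choose 2) n, hockey]

lemma sum_card_filter {α β : Type*} [Fintype β] [DecidableEq α] [DecidableEq β]
    (s : Finset α) (ψ : α → β → Prop) [∀ a, DecidablePred (ψ a)] :
    ∑ x ∈ s, ((univ : Finset β).filter (ψ x)).card
      = ((s ×ˢ univ).filter (fun z => ψ z.1 z.2)).card := by
  rw [Finset.card_eq_sum_card_fiberwise (f := Prod.fst) (t := s)
    (fun z hz => by
      rw [Finset.mem_coe, Finset.mem_filter, Finset.mem_product] at hz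
      exact hz.1.1)]
  apply Finset.sum_congr rfl
  intro x hx
  apply Eq.symm
  refine Finset.card_bij' (fun z _ => z.2) (fun m _ => (x, m)) ?_ ?_ ?_ ?_
  · intro z hz
    rw [Finset.mem_filter, Finset.mem_filter, Finset.mem_product] at hz
    rw [Finset.mem_filter]
    obtain ⟨⟨⟨-, -⟩, h2⟩, h3⟩ := hz
    exact ⟨mem_univ _, h3 ▸ h2⟩
  · intro m hm
    rw [Finset.mem_filter] at hm
    rw [Finset.mem_filter, Finset.mem_filter, Finset.mem_product]
    exact ⟨⟨⟨hx, mem_univ _⟩, hm.2⟩, rfl⟩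
  · intro z hz
    rw [Finset.mem_filter, Finset.mem_filter, Finset.mem_product] at hz
    obtain ⟨-, h3⟩ := hz
    exact Prod.ext h3.symm rfl
  · intro m _; rfl

def Plt (n : ℕ) : Finset (Fin n × Fin n) := univ.filter (fun p => p.1 < p.2)

lemma Plt_card : (Plt n).card = n.choose 2 := by
  have h := pairs_lt_card (univ : Finset (Fin n))
  rw [Finset.univ_product_univ] at h
  rw [Plt, h, Finset.card_univ, Fintype.card_fin]

lemma mem_Plt {p : Fin n × Fin n} : p ∈ Plt n ↔ p.1 < p.2 := by
  simp [Plt]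

lemma E1_card : (((Plt n) ×ˢ univ).filter
    (fun z : (Fin n × Fin n) × Fin n => z.2 < z.1.1)).card = n.choose 3 := by
  rw [← chains3_card (n := n)]
  refine Finset.card_bij' (fun z _ => (z.2, z.1.1, z.1.2))
    (fun t _ => ((t.2.1, t.2.2), t.1)) ?_ ?_ ?_ ?_
  · intro a ha
    rw [Finset.mem_filter, Finset.mem_product, mem_Plt] at ha
    rw [Finset.mem_filter]
    exact ⟨mem_univ _, ha.2, ha.1.1⟩
  · intro a ha
    rw [Finset.mem_filter] at ha
    rw [Finset.mem_filter, Finset.mem_product, mem_Plt]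
    exact ⟨⟨ha.2.2, mem_univ _⟩, ha.2.1⟩
  · intro a _; rfl
  · intro a _; rfl

lemma E2_card : (((Plt n) ×ˢ univ).filter
    (fun z : (Fin n × Fin n) × Fin n => z.1.1 < z.2 ∧ z.2 < z.1.2)).card = n.choose 3 := by
  rw [← chains3_card (n := n)]
  refine Finset.card_bij' (fun z _ => (z.1.1, z.2, z.1.2))
    (fun t _ => ((t.1, t.2.2), t.2.1)) ?_ ?_ ?_ ?_
  · intro a ha
    rw [Finset.mem_filter, Finset.mem_product, mem_Plt] at ha
    rw [Finset.mem_filter]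
    exact ⟨mem_univ _, ha.2⟩
  · intro a ha
    rw [Finset.mem_filter] at ha
    rw [Finset.mem_filter, Finset.mem_product, mem_Plt]
    exact ⟨⟨lt_trans ha.2.1 ha.2.2, mem_univ _⟩, ha.2⟩
  · intro a _; rfl
  · intro a _; rfl

lemma E3_card : (((Plt n) ×ˢ univ).filter
    (fun z : (Fin n × Fin n) × Fin n => z.1.2 < z.2)).card = n.choose 3 := by
  rw [← chains3_card (n := n)]
  refine Finset.card_bij' (fun z _ => (z.1.1, z.1.2, z.2))
    (fun t _ => ((t.1, t.2.1), t.2.2)) ?_ ?_ ?_ ?_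
  · intro a ha
    rw [Finset.mem_filter, Finset.mem_product, mem_Plt] at ha
    rw [Finset.mem_filter]
    exact ⟨mem_univ _, ha.1.1, ha.2⟩
  · intro a ha
    rw [Finset.mem_filter] at ha
    rw [Finset.mem_filter, Finset.mem_product, mem_Plt]
    exact ⟨⟨ha.2.1, mem_univ _⟩, ha.2.2⟩
  · intro a _; rfl
  · intro a _; rfl

lemma sum_fst_card : ∑ p ∈ Plt n, ((univ : Finset (Fin n)).filter
    (fun m => m < p.1)).card = n.choose 3 := by
  rw [sum_card_filter]
  exact E1_card

lemma sum_fst_val : ∑ p ∈ Plt n, ((p.1 : ℕ)) = n.choose 3 := by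
  rw [← sum_fst_card]
  exact Finset.sum_congr rfl (fun p _ => (card_lt p.1).symm)

lemma sum_mid_card : ∑ p ∈ Plt n, ((univ : Finset (Fin n)).filter
    (fun m => p.1 < m ∧ m < p.2)).card = n.choose 3 := by
  rw [sum_card_filter]
  exact E2_card

lemma sum_gt_card : ∑ p ∈ Plt n, ((univ : Finset (Fin n)).filter
    (fun m => p.2 < m)).card = n.choose 3 := by
  rw [sum_card_filter]
  exact E3_card

/-- positions below `j` other than `i`, summed over pairs. -/
lemma sum_lt_ne_card : ∑ p ∈ Plt n, ((univ : Finset (Fin n)).filter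
    (fun m => m < p.2 ∧ m ≠ p.1)).card = 2 * n.choose 3 := by
  have hsplit : ∀ p ∈ Plt n, ((univ : Finset (Fin n)).filter
      (fun m => m < p.2 ∧ m ≠ p.1)).card
      = ((univ : Finset (Fin n)).filter (fun m => m < p.1)).card
        + ((univ : Finset (Fin n)).filter (fun m => p.1 < m ∧ m < p.2)).card := by
    intro p hp
    rw [mem_Plt] at hp
    rw [← Finset.card_union_of_disjoint (by
      rw [Finset.disjoint_left]
      intro m hm hm'
      rw [Finset.mem_filter] at hm hm'
      exact absurd hm'.2.1 (not_lt_of_gt hm.2))]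
    congr 1
    rw [← Finset.filter_or]
    apply Finset.filter_congr
    intro m _
    constructor
    · rintro ⟨h1, h2⟩
      rcases lt_or_gt_of_ne h2 with h | h
      · exact Or.inl h
      · exact Or.inr ⟨h, h1⟩
    · rintro (h | ⟨h1, h2⟩)
      · exact ⟨lt_trans h hp, ne_of_lt h⟩
      · exact ⟨h2, Ne.symm (ne_of_lt h1)⟩
  rw [Finset.sum_congr rfl hsplit, Finset.sum_add_distrib, sum_fst_card, sum_mid_card]
  omega

/-- positions above `i` other than `j`, summed over pairs. -/
lemma sum_gt_ne_card : ∑ p ∈ Plt n, ((univ : Finset (Fin n)).filter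
    (fun m => p.1 < m ∧ m ≠ p.2)).card = 2 * n.choose 3 := by
  have hsplit : ∀ p ∈ Plt n, ((univ : Finset (Fin n)).filter
      (fun m => p.1 < m ∧ m ≠ p.2)).card
      = ((univ : Finset (Fin n)).filter (fun m => p.1 < m ∧ m < p.2)).card
        + ((univ : Finset (Fin n)).filter (fun m => p.2 < m)).card := by
    intro p hp
    rw [mem_Plt] at hp
    rw [← Finset.card_union_of_disjoint (by
      rw [Finset.disjoint_left]
      intro m hm hm'
      rw [Finset.mem_filter] at hm hm'
      exact absurd hm'.2 (not_lt_of_gt hm.2.2))]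
    congr 1
    rw [← Finset.filter_or]
    apply Finset.filter_congr
    intro m _
    constructor
    · rintro ⟨h1, h2⟩
      rcases lt_or_gt_of_ne h2 with h | h
      · exact Or.inl ⟨h1, h⟩
      · exact Or.inr h
    · rintro (⟨h1, h2⟩ | h)
      · exact ⟨h1, ne_of_lt h2⟩
      · exact ⟨lt_trans hp h, Ne.symm (ne_of_lt h)⟩
  rw [Finset.sum_congr rfl hsplit, Finset.sum_add_distrib, sum_mid_card, sum_gt_card]
  omega

/-- pairs distinct from `i,j`, with second smaller, counted. -/
lemma offpair_card {i j : Fin n} (hij : i ≠ j) :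
    (((univ : Finset (Fin n)) ×ˢ univ).filter
      (fun q : Fin n × Fin n => q.1 ≠ i ∧ q.1 ≠ j ∧ q.2 ≠ i ∧ q.2 ≠ j ∧ q.2 < q.1)).card
      = (n - 2).choose 2 := by
  have hs : (((univ : Finset (Fin n)).erase i).erase j).card = n - 2 := by
    rw [Finset.card_erase_of_mem (by rw [Finset.mem_erase]; exact ⟨Ne.symm hij, mem_univ _⟩),
      Finset.card_erase_of_mem (mem_univ _), Finset.card_univ, Fintype.card_fin]
    omega
  have hset : (((univ : Finset (Fin n)) ×ˢ univ).filter
      (fun q : Fin n × Fin n => q.1 ≠ i ∧ q.1 ≠ j ∧ q.2 ≠ i ∧ q.2 ≠ j ∧ q.2 < q.1))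
      = (((univ : Finset (Fin n)).erase i).erase j ×ˢ ((univ : Finset (Fin n)).erase i).erase j).filter
        (fun q => q.2 < q.1) := by
    ext q
    simp only [Finset.mem_filter, Finset.mem_product, Finset.mem_erase, Finset.mem_univ,
      and_true, true_and]
    tauto
  rw [hset, pairs_gt_card, hs]

lemma offpair_card' {i j : Fin n} (hij : i ≠ j) :
    (((univ : Finset (Fin n)) ×ˢ univ).filter
      (fun q : Fin n × Fin n => q.1 ≠ i ∧ q.1 ≠ j ∧ q.2 ≠ i ∧ q.2 ≠ j ∧ q.1 < q.2)).card
      = (n - 2).choose 2 := by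
  have hs : (((univ : Finset (Fin n)).erase i).erase j).card = n - 2 := by
    rw [Finset.card_erase_of_mem (by rw [Finset.mem_erase]; exact ⟨Ne.symm hij, mem_univ _⟩),
      Finset.card_erase_of_mem (mem_univ _), Finset.card_univ, Fintype.card_fin]
    omega
  have hset : (((univ : Finset (Fin n)) ×ˢ univ).filter
      (fun q : Fin n × Fin n => q.1 ≠ i ∧ q.1 ≠ j ∧ q.2 ≠ i ∧ q.2 ≠ j ∧ q.1 < q.2))
      = (((univ : Finset (Fin n)).erase i).erase j ×ˢ ((univ : Finset (Fin n)).erase i).erase j).filter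
        (fun q => q.1 < q.2) := by
    ext q
    simp only [Finset.mem_filter, Finset.mem_product, Finset.mem_erase, Finset.mem_univ,
      and_true, true_and]
    tauto
  rw [hset, pairs_lt_card, hs]

end Pos

section QSums

variable {c n : ℕ}

lemma sum_ite_card {α : Type*} [Fintype α] [DecidableEq α] (φ : α → Prop) [DecidablePred φ]
    (X : ℕ) : (∑ x : α, if φ x then X else 0) = (univ.filter φ).card * X := by
  rw [← Finset.sum_filter, Finset.sum_const, smul_eq_mul]

lemma sum_const_fin {γ : Type*} [Fintype γ] (C : ℕ) :
    (∑ _x : γ, C) = Fintype.card γ * C := by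
  rw [Finset.sum_const, Finset.card_univ, smul_eq_mul]

lemma sum_ite_and {δ : Type*} [Fintype δ] (p : Prop) [Decidable p] (Q : δ → Prop)
    [DecidablePred Q] (X : ℕ) :
    (∑ b : δ, if p ∧ Q b then X else 0) = if p then (∑ b : δ, if Q b then X else 0) else 0 := by
  by_cases hp : p <;> simp [hp]

lemma sum_ite_eq_pt {α : Type*} [Fintype α] [DecidableEq α] (b : α) (f : α → ℕ) :
    (∑ x : α, if x = b then f x else 0) = f b := by
  rw [Finset.sum_ite_eq' univ b f]
  simp

abbrev QT (c n : ℕ) := Fin n × Fin n × Fin c × Fin c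

def regroup (c n : ℕ) : QT c n ≃ (Fin n × Fin n) × (Fin c × Fin c) where
  toFun q := ((q.1, q.2.1), (q.2.2.1, q.2.2.2))
  invFun r := (r.1.1, r.1.2, r.2.1, r.2.2)
  left_inv _ := rfl
  right_inv _ := rfl

/-- the master splitting lemma for quadruple sums. -/
lemma qsplit (D : Fin n × Fin n → Prop) [DecidablePred D] (Ψ : Fin c × Fin c → Prop)
    [DecidablePred Ψ] (X : ℕ) :
    (∑ q : QT c n, if D (q.1, q.2.1) ∧ Ψ (q.2.2.1, q.2.2.2) then X else 0)
      = ((univ : Finset (Fin n × Fin n)).filter D).card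
        * (∑ w : Fin c × Fin c, if Ψ w then X else 0) := by
  calc (∑ q : QT c n, if D (q.1, q.2.1) ∧ Ψ (q.2.2.1, q.2.2.2) then X else 0)
      = ∑ z : (Fin n × Fin n) × (Fin c × Fin c), if D z.1 ∧ Ψ z.2 then X else 0 :=
        Equiv.sum_comp (regroup c n) (fun z => if D z.1 ∧ Ψ z.2 then X else 0)
    _ = ∑ kl : Fin n × Fin n, ∑ uv : Fin c × Fin c, if D kl ∧ Ψ uv then X else 0 :=
        Fintype.sum_prod_type _
    _ = ∑ kl : Fin n × Fin n, if D kl then (∑ w : Fin c × Fin c, if Ψ w then X else 0)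
          else 0 := Finset.sum_congr rfl (fun kl _ => sum_ite_and (D kl) Ψ X)
    _ = _ := sum_ite_card _ _

/-- no color condition. -/
lemma qsplit' (D : Fin n × Fin n → Prop) [DecidablePred D] (X : ℕ) :
    (∑ q : QT c n, if D (q.1, q.2.1) then X else 0)
      = ((univ : Finset (Fin n × Fin n)).filter D).card * (c * (c * X)) := by
  calc (∑ q : QT c n, if D (q.1, q.2.1) then X else 0)
      = ∑ q : QT c n, if D (q.1, q.2.1) ∧ (fun _ : Fin c × Fin c => True) (q.2.2.1, q.2.2.2)
          then X else 0 := Finset.sum_congr rfl (fun q _ => by simp)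
    _ = ((univ : Finset (Fin n × Fin n)).filter D).card
        * (∑ w : Fin c × Fin c, if (fun _ : Fin c × Fin c => True) w then X else 0) :=
        qsplit (c := c) D (fun _ : Fin c × Fin c => True) X
    _ = _ := by
        congr 1
        calc (∑ _w : Fin c × Fin c, X) = Fintype.card (Fin c × Fin c) * X := by
              rw [Finset.sum_const, Finset.card_univ, smul_eq_mul]
          _ = c * (c * X) := by simp [mul_assoc]

/-- Ψ-sums. -/
lemma w_col (hc : 0 < c) (X : ℕ) :
    (∑ w : Fin c × Fin c, if ((w.1 : ℕ) + (w.2 : ℕ)) % c = 0 then X else 0) = c * X := by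
  rw [Fintype.sum_prod_type]
  show (∑ u : Fin c, ∑ v : Fin c, if ((u : ℕ) + (v : ℕ)) % c = 0 then X else 0) = _
  exact sum_colpair hc X

lemma w_cu (X : ℕ) :
    (∑ w : Fin c × Fin c, if ((w.1 : ℕ) + (w.1 : ℕ)) % c = 0 then X else 0)
      = c * (aCol c * X) := by
  rw [Fintype.sum_prod_type]
  show (∑ u : Fin c, ∑ _v : Fin c, if ((u : ℕ) + (u : ℕ)) % c = 0 then X else 0) = _
  rw [Finset.sum_congr rfl (fun (u : Fin c) _ => sum_const_fin (γ := Fin c)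
    (if ((u : ℕ) + (u : ℕ)) % c = 0 then X else 0))]
  simp only [Fintype.card_fin]
  rw [← Finset.mul_sum, sum_if_self]

lemma w_cv (X : ℕ) :
    (∑ w : Fin c × Fin c, if ((w.2 : ℕ) + (w.2 : ℕ)) % c = 0 then X else 0)
      = c * (aCol c * X) := by
  rw [Fintype.sum_prod_type]
  show (∑ _u : Fin c, ∑ v : Fin c, if ((v : ℕ) + (v : ℕ)) % c = 0 then X else 0) = _
  rw [Finset.sum_congr rfl (fun (u : Fin c) _ => sum_if_self (c := c) X)]
  rw [Finset.sum_const, Finset.card_univ, Fintype.card_fin, smul_eq_mul]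

lemma w_cucv1 (X : ℕ) :
    (∑ w : Fin c × Fin c, if ((w.1 : ℕ) + (w.1 : ℕ)) % c = 0
        ∧ (((w.2 : ℕ) + (w.2 : ℕ)) % c = 0 ∧ (w.2 : ℕ) ≠ 0) then X else 0)
      = aCol c * (a1Col c * X) := by
  rw [Fintype.sum_prod_type]
  show (∑ u : Fin c, ∑ v : Fin c, if ((u : ℕ) + (u : ℕ)) % c = 0
      ∧ (((v : ℕ) + (v : ℕ)) % c = 0 ∧ (v : ℕ) ≠ 0) then X else 0) = _
  rw [Finset.sum_congr rfl (fun (u : Fin c) _ => sum_ite_and (((u : ℕ) + (u : ℕ)) % c = 0)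
    (fun v : Fin c => ((v : ℕ) + (v : ℕ)) % c = 0 ∧ (v : ℕ) ≠ 0) X)]
  rw [Finset.sum_congr rfl (fun (u : Fin c) _ => by rw [sum_if_self_ne (c := c) X])]
  rw [sum_if_self]

lemma w_cune (hc : 0 < c) (X : ℕ) :
    (∑ w : Fin c × Fin c, if ((w.1 : ℕ) + (w.1 : ℕ)) % c = 0 ∧ (w.2 : ℕ) ≠ 0 then X else 0)
      = aCol c * ((c - 1) * X) := by
  rw [Fintype.sum_prod_type]
  show (∑ u : Fin c, ∑ v : Fin c, if ((u : ℕ) + (u : ℕ)) % c = 0 ∧ (v : ℕ) ≠ 0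
      then X else 0) = _
  rw [Finset.sum_congr rfl (fun (u : Fin c) _ => sum_ite_and (((u : ℕ) + (u : ℕ)) % c = 0)
    (fun v : Fin c => (v : ℕ) ≠ 0) X)]
  rw [Finset.sum_congr rfl (fun (u : Fin c) _ => by rw [sum_if_ne hc X])]
  rw [sum_if_self]

lemma w_cvne (X : ℕ) :
    (∑ w : Fin c × Fin c, if ((w.2 : ℕ) + (w.2 : ℕ)) % c = 0 ∧ (w.2 : ℕ) ≠ 0 then X else 0)
      = c * (a1Col c * X) := by
  rw [Fintype.sum_prod_type]
  show (∑ _u : Fin c, ∑ v : Fin c, if ((v : ℕ) + (v : ℕ)) % c = 0 ∧ (v : ℕ) ≠ 0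
      then X else 0) = _
  rw [Finset.sum_congr rfl (fun (u : Fin c) _ => sum_if_self_ne (c := c) X)]
  rw [Finset.sum_const, Finset.card_univ, Fintype.card_fin, smul_eq_mul]

lemma w_ne (hc : 0 < c) (X : ℕ) :
    (∑ w : Fin c × Fin c, if (w.2 : ℕ) ≠ 0 then X else 0) = c * ((c - 1) * X) := by
  rw [Fintype.sum_prod_type]
  show (∑ _u : Fin c, ∑ v : Fin c, if (v : ℕ) ≠ 0 then X else 0) = _
  rw [Finset.sum_congr rfl (fun (u : Fin c) _ => sum_if_ne hc X)]
  rw [Finset.sum_const, Finset.card_univ, Fintype.card_fin, smul_eq_mul]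

/-- D-cards. -/
lemma d_pt (a b : Fin n) :
    ((univ : Finset (Fin n × Fin n)).filter (fun kl => kl.1 = a ∧ kl.2 = b)).card = 1 := by
  rw [show (univ : Finset (Fin n × Fin n)).filter (fun kl => kl.1 = a ∧ kl.2 = b)
      = {(a, b)} from by
    ext q
    simp [Prod.ext_iff]]
  exact Finset.card_singleton _

lemma d_fst_eq_snd (a : Fin n) (L : Fin n → Prop) [DecidablePred L] :
    ((univ : Finset (Fin n × Fin n)).filter (fun kl => kl.1 = a ∧ L kl.2)).card
      = ((univ : Finset (Fin n)).filter L).card := by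
  refine Finset.card_bij' (fun kl _ => kl.2) (fun m _ => (a, m)) ?_ ?_ ?_ ?_
  · intro kl hkl
    rw [Finset.mem_filter] at hkl ⊢
    exact ⟨mem_univ _, hkl.2.2⟩
  · intro m hm
    rw [Finset.mem_filter] at hm ⊢
    exact ⟨mem_univ _, rfl, hm.2⟩
  · intro kl hkl
    rw [Finset.mem_filter] at hkl
    exact Prod.ext hkl.2.1.symm rfl
  · intro m _
    rfl

lemma d_snd_eq_fst (b : Fin n) (K : Fin n → Prop) [DecidablePred K] :
    ((univ : Finset (Fin n × Fin n)).filter (fun kl => K kl.1 ∧ kl.2 = b)).card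
      = ((univ : Finset (Fin n)).filter K).card := by
  refine Finset.card_bij' (fun kl _ => kl.1) (fun m _ => (m, b)) ?_ ?_ ?_ ?_
  · intro kl hkl
    rw [Finset.mem_filter] at hkl ⊢
    exact ⟨mem_univ _, hkl.2.1⟩
  · intro m hm
    rw [Finset.mem_filter] at hm ⊢
    exact ⟨mem_univ _, hm.2, rfl⟩
  · intro kl hkl
    rw [Finset.mem_filter] at hkl
    exact Prod.ext rfl hkl.2.2.symm
  · intro m _
    rfl

end QSums

section Stats

variable {c n : ℕ}

lemma sum_ite_and' {δ : Type*} [Fintype δ] (p : Prop) [Decidable p] (Q : δ → Prop)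
    [DecidablePred Q] (f : δ → ℕ) :
    (∑ b : δ, if p ∧ Q b then f b else 0)
      = if p then (∑ b : δ, if Q b then f b else 0) else 0 := by
  by_cases hp : p <;> simp [hp]

lemma w_sv (X : ℕ) :
    (∑ v : Fin c, if ((v : ℕ) + (v : ℕ)) % c = 0 then (v : ℕ) * X else 0)
      = svCol c * X := by
  rw [← Finset.sum_filter, svCol, Finset.sum_mul]

lemma card_ne_fin (j : Fin n) :
    ((univ : Finset (Fin n)).filter (fun l => l ≠ j)).card = n - 1 := by
  have h : (univ : Finset (Fin n)).filter (fun l => l ≠ j) = univ.erase j := by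
    ext l
    simp [Finset.mem_erase, and_comm]
  rw [h, Finset.card_erase_of_mem (mem_univ _), Finset.card_univ, Fintype.card_fin]

/-- the inversion-statistic total. -/
lemma statA (hc : 0 < c) :
    ∑ σ ∈ (univ : Finset (CP c n)).filter (PCI c),
        ((Finset.univ : Finset (Fin n × Fin n)).filter
          (fun p => p.1 < p.2 ∧ σ.1 p.2 < σ.1 p.1)).card
      = n.choose 2 * (c * invCount c (n - 2))
        + 2 * n.choose 3 * (c * (aCol c * invCount c (n - 3)))
        + n.choose 2 * ((n - 2).choose 2 * (c * (c * invCount c (n - 4)))) := by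
  set T := (univ : Finset (CP c n)).filter (PCI c) with hT
  have step1 : ∀ σ : CP c n, ((Finset.univ : Finset (Fin n × Fin n)).filter
      (fun p => p.1 < p.2 ∧ σ.1 p.2 < σ.1 p.1)).card
      = ∑ p : Fin n × Fin n, if p.1 < p.2 ∧ σ.1 p.2 < σ.1 p.1 then 1 else 0 := by
    intro σ
    rw [Finset.card_filter]
  rw [Finset.sum_congr rfl (fun σ _ => step1 σ), Finset.sum_comm]
  have step2 : ∀ p : Fin n × Fin n, (∑ σ ∈ T, if p.1 < p.2 ∧ σ.1 p.2 < σ.1 p.1 then 1 else 0)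
      = if p.1 < p.2 then (T.filter (fun σ => σ.1 p.2 < σ.1 p.1)).card else 0 := by
    intro p
    by_cases hp : p.1 < p.2
    · rw [if_pos hp, Finset.card_filter]
      exact Finset.sum_congr rfl (fun σ _ => by simp [hp])
    · rw [if_neg hp]
      exact Finset.sum_eq_zero (fun σ _ => by simp [hp])
  rw [Finset.sum_congr rfl (fun p _ => step2 p), ← Finset.sum_filter]
  rw [show ((univ : Finset (Fin n × Fin n)).filter (fun a => a.1 < a.2)) = Plt n from rfl]
  have step3 : ∀ p : Fin n × Fin n, p ∈ Plt n →
      (T.filter (fun σ => σ.1 p.2 < σ.1 p.1)).card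
      = c * invCount c (n - 2)
        + ((p.1 : ℕ) * (c * (aCol c * invCount c (n - 3)))
          + ((univ : Finset (Fin n)).filter (fun m => p.2 < m)).card
            * (c * (aCol c * invCount c (n - 3))))
        + (n - 2).choose 2 * (c * (c * invCount c (n - 4))) := by
    intro p hp
    rw [mem_Plt] at hp
    have hshape : T.filter (fun σ => σ.1 p.2 < σ.1 p.1)
        = T.filter (fun σ => (fun q : QT c n => q.2.1 < q.1)
            (σ.1 p.1, σ.1 p.2, σ.2 p.1, σ.2 p.2)) :=
      Finset.filter_congr (fun σ _ => Iff.rfl)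
    rw [hshape, fiber_count T (fun σ => (σ.1 p.1, σ.1 p.2, σ.2 p.1, σ.2 p.2))
      (fun q : QT c n => q.2.1 < q.1)]
    have hNF : ∀ q : QT c n,
        (T.filter (fun σ => (σ.1 p.1, σ.1 p.2, σ.2 p.1, σ.2 p.2) = q)).card
        = (univ.filter (fun σ : CP c n => PCI c σ ∧ σ.1 p.1 = q.1 ∧ σ.1 p.2 = q.2.1
            ∧ σ.2 p.1 = q.2.2.1 ∧ σ.2 p.2 = q.2.2.2)).card := by
      intro q
      rw [hT, Finset.filter_filter]
      congr 1
      apply Finset.filter_congr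
      intro σ _
      constructor
      · rintro ⟨hP, he⟩
        rw [Prod.ext_iff, Prod.ext_iff, Prod.ext_iff] at he
        exact ⟨hP, he.1, he.2.1, he.2.2.1, he.2.2.2⟩
      · rintro ⟨hP, h1, h2, h3, h4⟩
        exact ⟨hP, by rw [Prod.ext_iff, Prod.ext_iff, Prod.ext_iff]; exact ⟨h1, h2, h3, h4⟩⟩
    rw [Finset.sum_congr rfl (fun q _ => by
      rw [hNF q, Akey hc hp q.1 q.2.1 q.2.2.1 q.2.2.2])]
    rw [Finset.sum_add_distrib, Finset.sum_add_distrib, Finset.sum_add_distrib]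
    have e1 : (∑ q : QT c n, if (q.1 = p.2 ∧ q.2.1 = p.1)
        ∧ ((q.2.2.1 : ℕ) + (q.2.2.2 : ℕ)) % c = 0 then invCount c (n - 2) else 0)
        = c * invCount c (n - 2) := by
      calc (∑ q : QT c n, if (q.1 = p.2 ∧ q.2.1 = p.1)
          ∧ ((q.2.2.1 : ℕ) + (q.2.2.2 : ℕ)) % c = 0 then invCount c (n - 2) else 0)
          = ((univ : Finset (Fin n × Fin n)).filter
              (fun kl => kl.1 = p.2 ∧ kl.2 = p.1)).card
            * (∑ w : Fin c × Fin c, if ((w.1 : ℕ) + (w.2 : ℕ)) % c = 0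
                then invCount c (n - 2) else 0) :=
            qsplit (fun kl => kl.1 = p.2 ∧ kl.2 = p.1)
              (fun w => ((w.1 : ℕ) + (w.2 : ℕ)) % c = 0) (invCount c (n - 2))
        _ = _ := by rw [d_pt, w_col hc, one_mul]
    have e2 : (∑ q : QT c n, if (q.1 = p.1 ∧ q.2.1 < p.1)
        ∧ ((q.2.2.1 : ℕ) + (q.2.2.1 : ℕ)) % c = 0 then invCount c (n - 3) else 0)
        = (p.1 : ℕ) * (c * (aCol c * invCount c (n - 3))) := by
      calc (∑ q : QT c n, if (q.1 = p.1 ∧ q.2.1 < p.1)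
          ∧ ((q.2.2.1 : ℕ) + (q.2.2.1 : ℕ)) % c = 0 then invCount c (n - 3) else 0)
          = ((univ : Finset (Fin n × Fin n)).filter
              (fun kl => kl.1 = p.1 ∧ kl.2 < p.1)).card
            * (∑ w : Fin c × Fin c, if ((w.1 : ℕ) + (w.1 : ℕ)) % c = 0
                then invCount c (n - 3) else 0) :=
            qsplit (fun kl => kl.1 = p.1 ∧ kl.2 < p.1)
              (fun w => ((w.1 : ℕ) + (w.1 : ℕ)) % c = 0) (invCount c (n - 3))
        _ = _ := by
            rw [d_fst_eq_snd p.1 (fun m => m < p.1), card_lt, w_cu]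
    have e3 : (∑ q : QT c n, if (p.2 < q.1 ∧ q.2.1 = p.2)
        ∧ ((q.2.2.2 : ℕ) + (q.2.2.2 : ℕ)) % c = 0 then invCount c (n - 3) else 0)
        = ((univ : Finset (Fin n)).filter (fun m => p.2 < m)).card
            * (c * (aCol c * invCount c (n - 3))) := by
      calc (∑ q : QT c n, if (p.2 < q.1 ∧ q.2.1 = p.2)
          ∧ ((q.2.2.2 : ℕ) + (q.2.2.2 : ℕ)) % c = 0 then invCount c (n - 3) else 0)
          = ((univ : Finset (Fin n × Fin n)).filter
              (fun kl => p.2 < kl.1 ∧ kl.2 = p.2)).card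
            * (∑ w : Fin c × Fin c, if ((w.2 : ℕ) + (w.2 : ℕ)) % c = 0
                then invCount c (n - 3) else 0) :=
            qsplit (fun kl => p.2 < kl.1 ∧ kl.2 = p.2)
              (fun w => ((w.2 : ℕ) + (w.2 : ℕ)) % c = 0) (invCount c (n - 3))
        _ = _ := by
            rw [d_snd_eq_fst p.2 (fun m => p.2 < m), w_cv]
    have e4 : (∑ q : QT c n, if q.1 ≠ p.1 ∧ q.1 ≠ p.2 ∧ q.2.1 ≠ p.1 ∧ q.2.1 ≠ p.2
        ∧ q.2.1 < q.1 then invCount c (n - 4) else 0)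
        = (n - 2).choose 2 * (c * (c * invCount c (n - 4))) := by
      calc (∑ q : QT c n, if q.1 ≠ p.1 ∧ q.1 ≠ p.2 ∧ q.2.1 ≠ p.1 ∧ q.2.1 ≠ p.2
          ∧ q.2.1 < q.1 then invCount c (n - 4) else 0)
          = ((univ : Finset (Fin n × Fin n)).filter
              (fun kl => kl.1 ≠ p.1 ∧ kl.1 ≠ p.2 ∧ kl.2 ≠ p.1 ∧ kl.2 ≠ p.2 ∧ kl.2 < kl.1)).card
            * (c * (c * invCount c (n - 4))) :=
            qsplit' (fun kl => kl.1 ≠ p.1 ∧ kl.1 ≠ p.2 ∧ kl.2 ≠ p.1 ∧ kl.2 ≠ p.2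
              ∧ kl.2 < kl.1) (invCount c (n - 4))
        _ = _ := by
            rw [show (univ : Finset (Fin n × Fin n)) = univ ×ˢ univ from
              Finset.univ_product_univ.symm, offpair_card (ne_of_lt hp)]
    rw [e1, e2, e3, e4]
    ring
  rw [Finset.sum_congr rfl step3]
  rw [Finset.sum_add_distrib, Finset.sum_add_distrib, Finset.sum_add_distrib]
  rw [Finset.sum_const, Finset.sum_const, ← Finset.sum_mul, ← Finset.sum_mul,
    sum_fst_val, sum_gt_card, Plt_card]
  simp only [smul_eq_mul]
  ring

/-- the color-sum-statistic total. -/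
lemma statB (hc : 0 < c) :
    ∑ σ ∈ (univ : Finset (CP c n)).filter (PCI c), (∑ j, ((σ.2 j : ℕ)))
      = n * (svCol c * invCount c (n - 1))
        + n * ((n - 1) * (c.choose 2 * invCount c (n - 2))) := by
  set T := (univ : Finset (CP c n)).filter (PCI c) with hT
  rw [Finset.sum_comm]
  have hper : ∀ j : Fin n, (∑ σ ∈ T, ((σ.2 j : ℕ)))
      = svCol c * invCount c (n - 1) + (n - 1) * (c.choose 2 * invCount c (n - 2)) := by
    intro j
    rw [show (∑ σ ∈ T, ((σ.2 j : ℕ)))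
        = ∑ σ ∈ T, (fun q : Fin n × Fin c => (q.2 : ℕ)) (σ.1 j, σ.2 j) from rfl]
    rw [fiber_sum T (fun σ => (σ.1 j, σ.2 j)) (fun q : Fin n × Fin c => (q.2 : ℕ))]
    have hNF : ∀ q : Fin n × Fin c, (T.filter (fun σ => (σ.1 j, σ.2 j) = q)).card
        = (univ.filter (fun σ : CP c n => PCI c σ ∧ σ.1 j = q.1 ∧ σ.2 j = q.2)).card := by
      intro q
      rw [hT, Finset.filter_filter]
      congr 1
      apply Finset.filter_congr
      intro σ _
      constructor
      · rintro ⟨hP, he⟩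
        rw [Prod.ext_iff] at he
        exact ⟨hP, he.1, he.2⟩
      · rintro ⟨hP, h1, h2⟩
        exact ⟨hP, by rw [Prod.ext_iff]; exact ⟨h1, h2⟩⟩
    rw [Finset.sum_congr rfl (fun q _ => by rw [hNF q, Bkey hc j q.1 q.2])]
    rw [Finset.sum_add_distrib]
    have p1 : (∑ q : Fin n × Fin c, if q.1 = j ∧ ((q.2 : ℕ) + (q.2 : ℕ)) % c = 0
        then (q.2 : ℕ) * invCount c (n - 1) else 0)
        = svCol c * invCount c (n - 1) := by
      rw [Fintype.sum_prod_type]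
      show (∑ l : Fin n, ∑ v : Fin c, if l = j ∧ ((v : ℕ) + (v : ℕ)) % c = 0
        then (v : ℕ) * invCount c (n - 1) else 0) = _
      rw [Finset.sum_congr rfl (fun (l : Fin n) _ => sum_ite_and' (l = j)
        (fun v : Fin c => ((v : ℕ) + (v : ℕ)) % c = 0)
        (fun v : Fin c => (v : ℕ) * invCount c (n - 1)))]
      rw [sum_ite_eq_pt j (fun _ => ∑ v : Fin c, if ((v : ℕ) + (v : ℕ)) % c = 0
        then (v : ℕ) * invCount c (n - 1) else 0)]
      exact w_sv _
    have p2 : (∑ q : Fin n × Fin c, if q.1 ≠ j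
        then (q.2 : ℕ) * invCount c (n - 2) else 0)
        = (n - 1) * (c.choose 2 * invCount c (n - 2)) := by
      rw [Fintype.sum_prod_type]
      show (∑ l : Fin n, ∑ v : Fin c, if l ≠ j
        then (v : ℕ) * invCount c (n - 2) else 0) = _
      have hin : ∀ l : Fin n, (∑ v : Fin c, if l ≠ j
          then (v : ℕ) * invCount c (n - 2) else 0)
          = if l ≠ j then c.choose 2 * invCount c (n - 2) else 0 := by
        intro l
        by_cases hl : l ≠ j
        · rw [if_pos hl]
          rw [Finset.sum_congr rfl (fun (v : Fin c) _ => if_pos hl)]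
          rw [← Finset.sum_mul, sum_val]
        · rw [if_neg hl]
          exact Finset.sum_eq_zero (fun v _ => if_neg hl)
      rw [Finset.sum_congr rfl (fun l _ => hin l)]
      rw [sum_ite_card (fun l : Fin n => l ≠ j), card_ne_fin]
    rw [p1, p2]
  rw [Finset.sum_congr rfl (fun j _ => hper j), Finset.sum_const, Finset.card_univ,
    Fintype.card_fin, smul_eq_mul]
  ring

/-- the colored-coinversion-statistic total. -/
lemma statC (hc : 0 < c) :
    ∑ σ ∈ (univ : Finset (CP c n)).filter (PCI c),
        ((Finset.univ : Finset (Fin n × Fin n)).filter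
          (fun p => p.1 < p.2 ∧ σ.1 p.1 < σ.1 p.2 ∧ ((σ.2 p.2 : ℕ)) ≠ 0)).card
      = n.choose 2 * (aCol c * (a1Col c * invCount c (n - 2)))
        + 2 * n.choose 3 * (aCol c * ((c - 1) * invCount c (n - 3)))
        + 2 * n.choose 3 * (c * (a1Col c * invCount c (n - 3)))
        + n.choose 2 * ((n - 2).choose 2 * (c * ((c - 1) * invCount c (n - 4)))) := by
  set T := (univ : Finset (CP c n)).filter (PCI c) with hT
  have step1 : ∀ σ : CP c n, ((Finset.univ : Finset (Fin n × Fin n)).filter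
      (fun p => p.1 < p.2 ∧ σ.1 p.1 < σ.1 p.2 ∧ ((σ.2 p.2 : ℕ)) ≠ 0)).card
      = ∑ p : Fin n × Fin n, if p.1 < p.2 ∧ σ.1 p.1 < σ.1 p.2 ∧ ((σ.2 p.2 : ℕ)) ≠ 0
          then 1 else 0 := by
    intro σ
    rw [Finset.card_filter]
  rw [Finset.sum_congr rfl (fun σ _ => step1 σ), Finset.sum_comm]
  have step2 : ∀ p : Fin n × Fin n,
      (∑ σ ∈ T, if p.1 < p.2 ∧ σ.1 p.1 < σ.1 p.2 ∧ ((σ.2 p.2 : ℕ)) ≠ 0 then 1 else 0)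
      = if p.1 < p.2 then (T.filter (fun σ => σ.1 p.1 < σ.1 p.2
          ∧ ((σ.2 p.2 : ℕ)) ≠ 0)).card else 0 := by
    intro p
    by_cases hp : p.1 < p.2
    · rw [if_pos hp, Finset.card_filter]
      exact Finset.sum_congr rfl (fun σ _ => by simp [hp])
    · rw [if_neg hp]
      exact Finset.sum_eq_zero (fun σ _ => by simp [hp])
  rw [Finset.sum_congr rfl (fun p _ => step2 p), ← Finset.sum_filter]
  rw [show ((univ : Finset (Fin n × Fin n)).filter (fun a => a.1 < a.2)) = Plt n from rfl]
  have step3 : ∀ p : Fin n × Fin n, p ∈ Plt n →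
      (T.filter (fun σ => σ.1 p.1 < σ.1 p.2 ∧ ((σ.2 p.2 : ℕ)) ≠ 0)).card
      = aCol c * (a1Col c * invCount c (n - 2))
        + (((univ : Finset (Fin n)).filter (fun m => p.1 < m ∧ m ≠ p.2)).card
            * (aCol c * ((c - 1) * invCount c (n - 3)))
          + ((univ : Finset (Fin n)).filter (fun m => m < p.2 ∧ m ≠ p.1)).card
            * (c * (a1Col c * invCount c (n - 3))))
        + (n - 2).choose 2 * (c * ((c - 1) * invCount c (n - 4))) := by
    intro p hp
    rw [mem_Plt] at hp
    have hshape : T.filter (fun σ => σ.1 p.1 < σ.1 p.2 ∧ ((σ.2 p.2 : ℕ)) ≠ 0)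
        = T.filter (fun σ => (fun q : QT c n => q.1 < q.2.1 ∧ (q.2.2.2 : ℕ) ≠ 0)
            (σ.1 p.1, σ.1 p.2, σ.2 p.1, σ.2 p.2)) :=
      Finset.filter_congr (fun σ _ => Iff.rfl)
    rw [hshape, fiber_count T (fun σ => (σ.1 p.1, σ.1 p.2, σ.2 p.1, σ.2 p.2))
      (fun q : QT c n => q.1 < q.2.1 ∧ (q.2.2.2 : ℕ) ≠ 0)]
    have hNF : ∀ q : QT c n,
        (T.filter (fun σ => (σ.1 p.1, σ.1 p.2, σ.2 p.1, σ.2 p.2) = q)).card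
        = (univ.filter (fun σ : CP c n => PCI c σ ∧ σ.1 p.1 = q.1 ∧ σ.1 p.2 = q.2.1
            ∧ σ.2 p.1 = q.2.2.1 ∧ σ.2 p.2 = q.2.2.2)).card := by
      intro q
      rw [hT, Finset.filter_filter]
      congr 1
      apply Finset.filter_congr
      intro σ _
      constructor
      · rintro ⟨hP, he⟩
        rw [Prod.ext_iff, Prod.ext_iff, Prod.ext_iff] at he
        exact ⟨hP, he.1, he.2.1, he.2.2.1, he.2.2.2⟩
      · rintro ⟨hP, h1, h2, h3, h4⟩
        exact ⟨hP, by rw [Prod.ext_iff, Prod.ext_iff, Prod.ext_iff]; exact ⟨h1, h2, h3, h4⟩⟩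
    rw [Finset.sum_congr rfl (fun q _ => by
      rw [hNF q, Ckey hc hp q.1 q.2.1 q.2.2.1 q.2.2.2])]
    rw [Finset.sum_add_distrib, Finset.sum_add_distrib, Finset.sum_add_distrib]
    have e1 : (∑ q : QT c n, if (q.1 = p.1 ∧ q.2.1 = p.2)
        ∧ (((q.2.2.1 : ℕ) + (q.2.2.1 : ℕ)) % c = 0 ∧ (((q.2.2.2 : ℕ) + (q.2.2.2 : ℕ)) % c = 0
          ∧ (q.2.2.2 : ℕ) ≠ 0)) then invCount c (n - 2) else 0)
        = aCol c * (a1Col c * invCount c (n - 2)) := by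
      calc (∑ q : QT c n, if (q.1 = p.1 ∧ q.2.1 = p.2)
          ∧ (((q.2.2.1 : ℕ) + (q.2.2.1 : ℕ)) % c = 0 ∧ (((q.2.2.2 : ℕ) + (q.2.2.2 : ℕ)) % c = 0
            ∧ (q.2.2.2 : ℕ) ≠ 0)) then invCount c (n - 2) else 0)
          = ((univ : Finset (Fin n × Fin n)).filter
              (fun kl => kl.1 = p.1 ∧ kl.2 = p.2)).card
            * (∑ w : Fin c × Fin c, if ((w.1 : ℕ) + (w.1 : ℕ)) % c = 0
                ∧ (((w.2 : ℕ) + (w.2 : ℕ)) % c = 0 ∧ (w.2 : ℕ) ≠ 0)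
                then invCount c (n - 2) else 0) :=
            qsplit (fun kl => kl.1 = p.1 ∧ kl.2 = p.2)
              (fun w => ((w.1 : ℕ) + (w.1 : ℕ)) % c = 0
                ∧ (((w.2 : ℕ) + (w.2 : ℕ)) % c = 0 ∧ (w.2 : ℕ) ≠ 0)) (invCount c (n - 2))
        _ = _ := by rw [d_pt, w_cucv1, one_mul]
    have e2 : (∑ q : QT c n, if (q.1 = p.1 ∧ (p.1 < q.2.1 ∧ q.2.1 ≠ p.2))
        ∧ (((q.2.2.1 : ℕ) + (q.2.2.1 : ℕ)) % c = 0 ∧ (q.2.2.2 : ℕ) ≠ 0)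
        then invCount c (n - 3) else 0)
        = ((univ : Finset (Fin n)).filter (fun m => p.1 < m ∧ m ≠ p.2)).card
            * (aCol c * ((c - 1) * invCount c (n - 3))) := by
      calc (∑ q : QT c n, if (q.1 = p.1 ∧ (p.1 < q.2.1 ∧ q.2.1 ≠ p.2))
          ∧ (((q.2.2.1 : ℕ) + (q.2.2.1 : ℕ)) % c = 0 ∧ (q.2.2.2 : ℕ) ≠ 0)
          then invCount c (n - 3) else 0)
          = ((univ : Finset (Fin n × Fin n)).filter
              (fun kl => kl.1 = p.1 ∧ (p.1 < kl.2 ∧ kl.2 ≠ p.2))).card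
            * (∑ w : Fin c × Fin c, if ((w.1 : ℕ) + (w.1 : ℕ)) % c = 0 ∧ (w.2 : ℕ) ≠ 0
                then invCount c (n - 3) else 0) :=
            qsplit (fun kl => kl.1 = p.1 ∧ (p.1 < kl.2 ∧ kl.2 ≠ p.2))
              (fun w => ((w.1 : ℕ) + (w.1 : ℕ)) % c = 0 ∧ (w.2 : ℕ) ≠ 0) (invCount c (n - 3))
        _ = _ := by
            rw [d_fst_eq_snd p.1 (fun m => p.1 < m ∧ m ≠ p.2), w_cune hc]
    have e3 : (∑ q : QT c n, if ((q.1 < p.2 ∧ q.1 ≠ p.1) ∧ q.2.1 = p.2)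
        ∧ ((((q.2.2.2 : ℕ) + (q.2.2.2 : ℕ)) % c = 0 ∧ (q.2.2.2 : ℕ) ≠ 0))
        then invCount c (n - 3) else 0)
        = ((univ : Finset (Fin n)).filter (fun m => m < p.2 ∧ m ≠ p.1)).card
            * (c * (a1Col c * invCount c (n - 3))) := by
      calc (∑ q : QT c n, if ((q.1 < p.2 ∧ q.1 ≠ p.1) ∧ q.2.1 = p.2)
          ∧ ((((q.2.2.2 : ℕ) + (q.2.2.2 : ℕ)) % c = 0 ∧ (q.2.2.2 : ℕ) ≠ 0))
          then invCount c (n - 3) else 0)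
          = ((univ : Finset (Fin n × Fin n)).filter
              (fun kl => (kl.1 < p.2 ∧ kl.1 ≠ p.1) ∧ kl.2 = p.2)).card
            * (∑ w : Fin c × Fin c, if ((w.2 : ℕ) + (w.2 : ℕ)) % c = 0 ∧ (w.2 : ℕ) ≠ 0
                then invCount c (n - 3) else 0) :=
            qsplit (fun kl => (kl.1 < p.2 ∧ kl.1 ≠ p.1) ∧ kl.2 = p.2)
              (fun w => ((w.2 : ℕ) + (w.2 : ℕ)) % c = 0 ∧ (w.2 : ℕ) ≠ 0) (invCount c (n - 3))
        _ = _ := by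
            rw [d_snd_eq_fst p.2 (fun m => m < p.2 ∧ m ≠ p.1), w_cvne]
    have e4 : (∑ q : QT c n, if (q.1 ≠ p.1 ∧ q.1 ≠ p.2 ∧ q.2.1 ≠ p.1 ∧ q.2.1 ≠ p.2
        ∧ q.1 < q.2.1) ∧ (q.2.2.2 : ℕ) ≠ 0 then invCount c (n - 4) else 0)
        = (n - 2).choose 2 * (c * ((c - 1) * invCount c (n - 4))) := by
      calc (∑ q : QT c n, if (q.1 ≠ p.1 ∧ q.1 ≠ p.2 ∧ q.2.1 ≠ p.1 ∧ q.2.1 ≠ p.2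
          ∧ q.1 < q.2.1) ∧ (q.2.2.2 : ℕ) ≠ 0 then invCount c (n - 4) else 0)
          = ((univ : Finset (Fin n × Fin n)).filter
              (fun kl => kl.1 ≠ p.1 ∧ kl.1 ≠ p.2 ∧ kl.2 ≠ p.1 ∧ kl.2 ≠ p.2
                ∧ kl.1 < kl.2)).card
            * (∑ w : Fin c × Fin c, if (w.2 : ℕ) ≠ 0 then invCount c (n - 4) else 0) :=
            qsplit (fun kl => kl.1 ≠ p.1 ∧ kl.1 ≠ p.2 ∧ kl.2 ≠ p.1 ∧ kl.2 ≠ p.2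
              ∧ kl.1 < kl.2) (fun w => (w.2 : ℕ) ≠ 0) (invCount c (n - 4))
        _ = _ := by
            rw [show (univ : Finset (Fin n × Fin n)) = univ ×ˢ univ from
              Finset.univ_product_univ.symm, offpair_card' (ne_of_lt hp), w_ne hc]
    rw [e1, e2, e3, e4]
    ring
  rw [Finset.sum_congr rfl step3]
  rw [Finset.sum_add_distrib, Finset.sum_add_distrib, Finset.sum_add_distrib]
  rw [Finset.sum_const, Finset.sum_const, ← Finset.sum_mul, ← Finset.sum_mul,
    sum_gt_ne_card, sum_lt_ne_card, Plt_card]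
  simp only [smul_eq_mul]
  ring

end Stats

section Grand

variable {c n : ℕ}

lemma invCount_eq (c k : ℕ) : invCount c k = involutionCountC c k := rfl

lemma grand (c n : ℕ) (hc : 0 < c) :
    totalInvCInvolution c n
      = (n.choose 2 * (c * invCount c (n - 2))
          + 2 * n.choose 3 * (c * (aCol c * invCount c (n - 3)))
          + n.choose 2 * ((n - 2).choose 2 * (c * (c * invCount c (n - 4)))))
        + (n * (svCol c * invCount c (n - 1))
          + n * ((n - 1) * (c.choose 2 * invCount c (n - 2))))
        + c * (n.choose 2 * (aCol c * (a1Col c * invCount c (n - 2)))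
          + 2 * n.choose 3 * (aCol c * ((c - 1) * invCount c (n - 3)))
          + 2 * n.choose 3 * (c * (a1Col c * invCount c (n - 3)))
          + n.choose 2 * ((n - 2).choose 2 * (c * ((c - 1) * invCount c (n - 4))))) := by
  rw [totalInvCInvolution]
  rw [show (univ.filter (fun σ : CP c n =>
      σ.1 * σ.1 = 1 ∧ ∀ i, ((σ.2 i : ℕ) + (σ.2 (σ.1 i) : ℕ)) % c = 0))
      = univ.filter (PCI c) from Finset.filter_congr (fun σ _ => Iff.rfl)]
  have hsummand : ∀ σ : CP c n, invC c σ
      = ((Finset.univ : Finset (Fin n × Fin n)).filter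
          (fun p => p.1 < p.2 ∧ σ.1 p.2 < σ.1 p.1)).card
        + (∑ j, (σ.2 j : ℕ))
        + c * ((Finset.univ : Finset (Fin n × Fin n)).filter
          (fun p => p.1 < p.2 ∧ σ.1 p.1 < σ.1 p.2 ∧ (σ.2 p.2 : ℕ) ≠ 0)).card :=
    fun σ => rfl
  rw [Finset.sum_congr rfl (fun σ _ => hsummand σ)]
  rw [Finset.sum_add_distrib, Finset.sum_add_distrib, ← Finset.mul_sum]
  rw [statA hc, statB hc, statC hc]

end Grand

end CIAux

set_option maxHeartbeats 1000000 in
/-- Explicit formula for `i_n^{(c)}`, as an equality of rational numbers. -/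
theorem totalInvCInvolution_formula (c n : ℕ) (hc : 1 ≤ c) (hn : 4 ≤ n) :
    (totalInvCInvolution c n : ℚ) =
      (n : ℚ) * (c : ℚ) * ((-1 : ℚ) ^ c + 1) / 4 * (involutionCountC c (n - 1) : ℚ) +
      (c : ℚ) * ((c : ℚ) + 1 + (-1 : ℚ) ^ c) * (n.choose 2 : ℚ) *
        (involutionCountC c (n - 2) : ℚ) +
      2 * (c : ℚ) ^ 2 * ((-1 : ℚ) ^ c + 2) * (n.choose 3 : ℚ) *
        (involutionCountC c (n - 3) : ℚ) +
      6 * (c : ℚ) ^ 3 * (n.choose 4 : ℚ) * (involutionCountC c (n - 4) : ℚ) := by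
  obtain ⟨m, rfl⟩ : ∃ m, n = m + 4 := ⟨n - 4, by omega⟩
  have hc0 : 0 < c := hc
  have e1 : m + 4 - 1 = m + 3 := by omega
  have e2 : m + 4 - 2 = m + 2 := by omega
  have e3 : m + 4 - 3 = m + 1 := by omega
  have e4 : m + 4 - 4 = m := by omega
  rw [e1, e2, e3, e4]
  have hg := CIAux.grand c (m + 4) hc0
  rw [e1, e2, e3, e4] at hg
  simp only [CIAux.invCount_eq] at hg
  rw [hg]
  -- choose identities over ℚ
  have h2 : (((m + 4).choose 2 : ℕ) : ℚ) = (m + 4) * (m + 3) / 2 := by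
    have hN : (m + 4).choose 2 * 2 = (m + 4) * (m + 3) := by
      have h := CIAux.choose2_mul_two (m + 4)
      rwa [show m + 4 - 1 = m + 3 from by omega] at h
    have hQ := congrArg (fun k : ℕ => (k : ℚ)) hN
    push_cast at hQ
    linarith
  have hB2 : (m + 3).choose 2 * 2 = (m + 3) * (m + 2) := by
    have h := CIAux.choose2_mul_two (m + 3)
    rwa [show m + 3 - 1 = m + 2 from by omega] at h
  have hA3 : (m + 4) * (m + 3).choose 2 = (m + 4).choose 3 * 3 := by
    have h := Nat.add_one_mul_choose_eq (m + 3) 2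
    simpa [Nat.succ_eq_add_one] using h
  have h3 : (((m + 4).choose 3 : ℕ) : ℚ) = (m + 4) * (m + 3) * (m + 2) / 6 := by
    have hN : (m + 4).choose 3 * 6 = (m + 4) * ((m + 3) * (m + 2)) := by
      calc (m + 4).choose 3 * 6 = ((m + 4).choose 3 * 3) * 2 := by ring
        _ = ((m + 4) * (m + 3).choose 2) * 2 := by rw [hA3]
        _ = (m + 4) * ((m + 3).choose 2 * 2) := by ring
        _ = (m + 4) * ((m + 3) * (m + 2)) := by rw [hB2]
    have hQ := congrArg (fun k : ℕ => (k : ℚ)) hN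
    push_cast at hQ
    linarith
  have hB2' : (m + 2).choose 2 * 2 = (m + 2) * (m + 1) := by
    have h := CIAux.choose2_mul_two (m + 2)
    rwa [show m + 2 - 1 = m + 1 from by omega] at h
  have hM : (((m + 2).choose 2 : ℕ) : ℚ) = (m + 2) * (m + 1) / 2 := by
    have hQ := congrArg (fun k : ℕ => (k : ℚ)) hB2'
    push_cast at hQ
    linarith
  have hA4 : (m + 4) * (m + 3).choose 3 = (m + 4).choose 4 * 4 := by
    have h := Nat.add_one_mul_choose_eq (m + 3) 3
    simpa [Nat.succ_eq_add_one] using h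
  have hA3' : (m + 3) * (m + 2).choose 2 = (m + 3).choose 3 * 3 := by
    have h := Nat.add_one_mul_choose_eq (m + 2) 2
    simpa [Nat.succ_eq_add_one] using h
  have h4 : (((m + 4).choose 4 : ℕ) : ℚ) = (m + 4) * (m + 3) * (m + 2) * (m + 1) / 24 := by
    have hN : (m + 4).choose 4 * 24 = (m + 4) * ((m + 3) * ((m + 2) * (m + 1))) := by
      calc (m + 4).choose 4 * 24 = ((m + 4).choose 4 * 4) * 6 := by ring
        _ = ((m + 4) * (m + 3).choose 3) * 6 := by rw [hA4]
        _ = (m + 4) * (((m + 3).choose 3 * 3) * 2) := by ring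
        _ = (m + 4) * (((m + 3) * (m + 2).choose 2) * 2) := by rw [hA3']
        _ = (m + 4) * ((m + 3) * ((m + 2).choose 2 * 2)) := by ring
        _ = (m + 4) * ((m + 3) * ((m + 2) * (m + 1))) := by rw [hB2']
    have hQ := congrArg (fun k : ℕ => (k : ℚ)) hN
    push_cast at hQ
    linarith
  rcases Nat.even_or_odd c with ⟨d, rfl⟩ | ⟨d, rfl⟩
  · -- even case, c = d + d
    obtain ⟨e, rfl⟩ : ∃ e, d = e + 1 := ⟨d - 1, by omega⟩
    have hval : (e + 1) + (e + 1) = 2 * (e + 1) := by ring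
    rw [CIAux.aCol_even (by omega : 0 < e + 1) hval,
      CIAux.a1Col_even (by omega : 0 < e + 1) hval,
      CIAux.svCol_even (by omega : 0 < e + 1) hval]
    rw [show (e + 1) + (e + 1) - 1 = 2 * e + 1 from by omega]
    have hcc : ((e + 1 + (e + 1)).choose 2 : ℚ) = (2 * e + 2) * (2 * e + 1) / 2 := by
      have hN : (e + 1 + (e + 1)).choose 2 * 2 = (2 * e + 2) * (2 * e + 1) := by
        have h := CIAux.choose2_mul_two (e + 1 + (e + 1))
        rw [show e + 1 + (e + 1) - 1 = 2 * e + 1 from by omega] at h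
        rw [h]
        ring_nf
      have hQ := congrArg (fun k : ℕ => (k : ℚ)) hN
      push_cast at hQ
      linarith
    have hpow : (-1 : ℚ) ^ (e + 1 + (e + 1)) = 1 := Even.neg_one_pow ⟨e + 1, rfl⟩
    rw [hpow]
    push_cast
    rw [h2, h3, h4, hM, hcc]
    field_simp
    ring
  · -- odd case, c = 2 * d + 1
    rw [CIAux.aCol_odd (by omega) (by omega), CIAux.a1Col_odd (by omega) (by omega),
      CIAux.svCol_odd (by omega) (by omega)]
    rw [show 2 * d + 1 - 1 = 2 * d from by omega]
    have hcc : ((2 * d + 1).choose 2 : ℚ) = (2 * d + 1) * (2 * d) / 2 := by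
      have hN : (2 * d + 1).choose 2 * 2 = (2 * d + 1) * (2 * d) := by
        have h := CIAux.choose2_mul_two (2 * d + 1)
        rwa [show 2 * d + 1 - 1 = 2 * d from by omega] at h
      have hQ := congrArg (fun k : ℕ => (k : ℚ)) hN
      push_cast at hQ
      linarith
    have hpow : (-1 : ℚ) ^ (2 * d + 1) = -1 := Odd.neg_one_pow ⟨d, rfl⟩
    rw [hpow]
    push_cast
    rw [h2, h3, h4, hM, hcc]
    field_simp
    ring
end

section
/- For all integers c ≥ 1, n ≥ 0, and k ≥ 0, the statistics inv_c and the modified statistic σ ↦ c·inv(π) + ∑_{j=1}^n f(j) are equidistributed on colored permutations of size n: the number of colored permutations σ = (π, f) of size n with inv_c(σ) = k equals the number of colored permutations σ = (π, f) of size n with c·inv(π) + ∑_{j=1}^n f(j) = k. -/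
open Finset

/-! Auxiliary development -/

lemma card_filter_pair {n : ℕ} (P : Fin n × Fin n → Prop) [DecidablePred P] :
    ((Finset.univ : Finset (Fin n × Fin n)).filter P).card
      = ∑ j : Fin n, ((Finset.univ : Finset (Fin n)).filter (fun i => P (i, j))).card := by
  rw [Finset.card_filter, Fintype.sum_prod_type, Finset.sum_comm]
  exact Finset.sum_congr rfl fun j _ => (Finset.card_filter _ _).symm

/-- Lehmer code of a permutation -/
def lcode {n : ℕ} (π : Equiv.Perm (Fin n)) (j : Fin n) : ℕ :=
  ((Finset.univ : Finset (Fin n)).filter (fun i => i < j ∧ π j < π i)).card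

lemma filter_lt_eq {n : ℕ} (j : Fin n) :
    ((Finset.univ : Finset (Fin n)).filter (fun i => i < j)) = Finset.Iio j := by
  ext i; simp

lemma card_lt {n : ℕ} (j : Fin n) :
    ((Finset.univ : Finset (Fin n)).filter (fun i => i < j)).card = j.val := by
  rw [filter_lt_eq, Fin.card_Iio]

lemma lcode_le {n : ℕ} (π : Equiv.Perm (Fin n)) (j : Fin n) : lcode π j ≤ j.val := by
  classical
  refine le_trans (Finset.card_le_card ?_) (le_of_eq (card_lt j))
  exact Finset.monotone_filter_right _ (fun i _ hi => hi.1)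

lemma acode_eq {n : ℕ} (π : Equiv.Perm (Fin n)) (j : Fin n) :
    ((Finset.univ : Finset (Fin n)).filter (fun i => i < j ∧ π i < π j)).card
      = j.val - lcode π j := by
  classical
  have hdisj : Disjoint
      ((Finset.univ : Finset (Fin n)).filter (fun i => i < j ∧ π i < π j))
      ((Finset.univ : Finset (Fin n)).filter (fun i => i < j ∧ π j < π i)) := by
    rw [Finset.disjoint_filter]
    rintro i _ ⟨_, h1⟩ ⟨_, h2⟩
    exact absurd (h1.trans h2) (lt_irrefl _)
  have hunion :
      ((Finset.univ : Finset (Fin n)).filter (fun i => i < j ∧ π i < π j)) ∪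
      ((Finset.univ : Finset (Fin n)).filter (fun i => i < j ∧ π j < π i))
      = (Finset.univ : Finset (Fin n)).filter (fun i => i < j) := by
    rw [← Finset.filter_or]
    refine Finset.filter_congr ?_
    intro i _
    constructor
    · rintro (⟨h, _⟩ | ⟨h, _⟩) <;> exact h
    · intro h
      rcases lt_trichotomy (π i) (π j) with h' | h' | h'
      · exact Or.inl ⟨h, h'⟩
      · exact absurd (π.injective h') (ne_of_lt h)
      · exact Or.inr ⟨h, h'⟩
  have := Finset.card_union_of_disjoint hdisj
  rw [hunion, card_lt] at this
  unfold lcode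
  omega

lemma lcode_injective {n : ℕ} : Function.Injective (fun π : Equiv.Perm (Fin n) => lcode π) := by
  classical
  intro π π' h
  by_contra hne
  -- set of positions where they differ
  have hne' : ∃ j, π j ≠ π' j := by
    by_contra hall
    push_neg at hall
    exact hne (Equiv.ext hall)
  set D : Finset (Fin n) := Finset.univ.filter (fun j => π j ≠ π' j) with hD
  have hDne : D.Nonempty := by
    obtain ⟨j, hj⟩ := hne'
    exact ⟨j, by simp [hD, hj]⟩
  set j := D.max' hDne with hj
  have hjD : π j ≠ π' j := by
    have := D.max'_mem hDne
    simpa [hD] using this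
  have htail : ∀ i, j < i → π i = π' i := by
    intro i hi
    by_contra hii
    have : i ∈ D := by simp [hD, hii]
    exact absurd (D.le_max' i this) (not_le.mpr hi)
  -- the images of {i | i ≤ j} under π and π' agree
  set S : Finset (Fin n) := (Finset.univ.filter (fun i => i ≤ j)).image π with hS
  have hSeq : S = (Finset.univ.filter (fun i => i ≤ j)).image π' := by
    have hcompl : (Finset.univ.filter (fun i => j < i)).image π
        = (Finset.univ.filter (fun i => j < i)).image π' := by
      refine Finset.image_congr ?_
      intro i hi
      exact htail i (by simpa using (Finset.mem_filter.mp hi).2)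
    have h1 : ∀ (ρ : Equiv.Perm (Fin n)),
        (Finset.univ.filter (fun i => i ≤ j)).image ρ
          = Finset.univ \ (Finset.univ.filter (fun i => j < i)).image ρ := by
      intro ρ
      have hsplit : (Finset.univ.filter (fun i => i ≤ j)) =
          Finset.univ \ (Finset.univ.filter (fun i => j < i)) := by
        ext i; simp [not_lt]
      rw [hsplit]
      rw [Finset.image_sdiff _ _ ρ.injective]
      congr 1
      rw [Finset.image_univ_equiv]
    rw [hS, h1 π, h1 π', hcompl]
  -- lcode at j is determined by S
  have hkey : ∀ (ρ : Equiv.Perm (Fin n)), ρ j ∈ S →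
      (Finset.univ.filter (fun i => i < j ∧ ρ j < ρ i)).card
        = (S.filter (fun v => ρ j < v)).card → True := fun _ _ _ => True.intro
  have hcard : ∀ (ρ : Equiv.Perm (Fin n)),
      (Finset.univ.filter (fun i => i ≤ j)).image ρ = S →
      lcode ρ j = (S.filter (fun v => ρ j < v)).card := by
    intro ρ hρ
    unfold lcode
    rw [← hρ]
    rw [← Finset.card_image_of_injective _ ρ.injective]
    congr 1
    ext v
    simp only [Finset.mem_image, Finset.mem_filter, Finset.mem_univ, true_and]
    constructor
    · rintro ⟨i, ⟨hij, hv⟩, rfl⟩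
      exact ⟨⟨i, le_of_lt hij, rfl⟩, hv⟩
    · rintro ⟨⟨i, hij, rfl⟩, hv⟩
      refine ⟨i, ⟨lt_of_le_of_ne hij ?_, hv⟩, rfl⟩
      rintro rfl
      exact absurd hv (lt_irrefl _)
  have hjS : π j ∈ S := by
    refine Finset.mem_image.mpr ⟨j, by simp, rfl⟩
  have hjS' : π' j ∈ S := by
    rw [hSeq]
    exact Finset.mem_image.mpr ⟨j, by simp, rfl⟩
  have e1 : lcode π j = (S.filter (fun v => π j < v)).card := hcard π rfl
  have e2 : lcode π' j = (S.filter (fun v => π' j < v)).card := hcard π' hSeq.symm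
  have hlt : ∀ u u' : Fin n, u < u' → u' ∈ S →
      (S.filter (fun v => u' < v)).card < (S.filter (fun v => u < v)).card := by
    intro u u' huu hu'
    refine Finset.card_lt_card ?_
    rw [Finset.ssubset_iff_of_subset
      (Finset.monotone_filter_right _ (fun v _ hv => lt_trans huu hv))]
    exact ⟨u', by simp [hu', huu], by simp⟩
  have hcode : lcode π j = lcode π' j := congrFun h j
  rcases lt_or_gt_of_ne hjD with hh | hh
  · have := hlt (π j) (π' j) hh hjS'
    rw [← e1, ← e2] at this; omega
  · have := hlt (π' j) (π j) hh hjS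
    rw [← e1, ← e2] at this; omega


def enc1 (c m b t : ℕ) : ℕ := if t = 0 then b else b + t + c * (m - b)

lemma enc1_lt {c m b t : ℕ} (hc : 1 ≤ c) (hb : b ≤ m) (ht : t < c) :
    enc1 c m b t < c * (m + 1) := by
  unfold enc1
  have e1 : c * (m - b) + c * b = c * m := by rw [← Nat.mul_add, Nat.sub_add_cancel hb]
  have e2 : b ≤ c * b := Nat.le_mul_of_pos_left b hc
  have e3 : c * (m + 1) = c * m + c := by ring
  split <;> omega

lemma enc1_case {c m b b' t t' : ℕ} (hc : 1 ≤ c) (hb : b ≤ m) (hb' : b' ≤ m)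
    (ht : t < c) (ht' : t' < c) (htne : t ≠ 0) (ht'ne : t' ≠ 0) (hbb : b < b')
    (heq : b + t + c * (m - b) = b' + t' + c * (m - b')) : False := by
  set d := b' - b with hd
  have hd1 : 1 ≤ d := by omega
  have e1 : c * (m - b) + c * b = c * m := by rw [← Nat.mul_add, Nat.sub_add_cancel hb]
  have e2 : c * (m - b') + c * b' = c * m := by rw [← Nat.mul_add, Nat.sub_add_cancel hb']
  have h5 : c * b' = c * b + c * d := by rw [← Nat.mul_add]; congr 1; omega
  have h6 : c + (d - 1) ≤ c * d := by
    have : c * d = c * 1 + c * (d - 1) := by rw [← Nat.mul_add]; congr 1; omega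
    have : d - 1 ≤ c * (d - 1) := Nat.le_mul_of_pos_left _ hc
    omega
  omega

lemma enc1_inj {c m b b' t t' : ℕ} (hc : 1 ≤ c) (hb : b ≤ m) (hb' : b' ≤ m)
    (ht : t < c) (ht' : t' < c)
    (heq : enc1 c m b t = enc1 c m b' t') : b = b' ∧ t = t' := by
  unfold enc1 at heq
  have key : ∀ b₀ t₀ : ℕ, b₀ ≤ m → t₀ ≠ 0 → t₀ < c → ¬ (m < b₀ + t₀ + c * (m - b₀)) → False := by
    intro b₀ t₀ hb₀ ht₀ ht₀c hlt
    have e1 : c * (m - b₀) + c * b₀ = c * m := by rw [← Nat.mul_add, Nat.sub_add_cancel hb₀]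
    have e2 : m - b₀ ≤ c * (m - b₀) := Nat.le_mul_of_pos_left _ hc
    omega
  split_ifs at heq with h1 h2 h2
  · exact ⟨heq, h1.trans h2.symm⟩
  · exfalso
    exact key b' t' hb' h2 ht' (by omega)
  · exfalso
    exact key b t hb h1 ht (by omega)
  · rcases lt_trichotomy b b' with hbb | hbb | hbb
    · exact absurd (enc1_case hc hb hb' ht ht' h1 h2 hbb heq) not_false
    · refine ⟨hbb, ?_⟩; subst hbb; omega
    · exact absurd (enc1_case hc hb' hb ht' ht h2 h1 hbb heq.symm) not_false

lemma enc2_lt {c m b t : ℕ} (hb : b ≤ m) (ht : t < c) : c * b + t < c * (m + 1) := by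
  have e1 : c * b ≤ c * m := Nat.mul_le_mul_left c hb
  have e3 : c * (m + 1) = c * m + c := by ring
  omega

lemma enc2_inj {c b b' t t' : ℕ} (ht : t < c) (ht' : t' < c)
    (heq : c * b + t = c * b' + t') : b = b' ∧ t = t' := by
  rcases lt_trichotomy b b' with hbb | hbb | hbb
  · exfalso
    have : c * (b + 1) ≤ c * b' := Nat.mul_le_mul_left c hbb
    have : c * (b + 1) = c * b + c := by ring
    omega
  · subst hbb; omega
  · exfalso
    have : c * (b' + 1) ≤ c * b := Nat.mul_le_mul_left c hbb
    have : c * (b' + 1) = c * b' + c := by ring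
    omega



section main
variable {c n : ℕ}

def code1 (hc : 1 ≤ c) (σ : Equiv.Perm (Fin n) × (Fin n → Fin c)) :
    ∀ j : Fin n, Fin (c * (j.val + 1)) :=
  fun j => ⟨enc1 c j.val (lcode σ.1 j) (σ.2 j : ℕ),
    enc1_lt hc (lcode_le σ.1 j) (σ.2 j).isLt⟩

def code2 (σ : Equiv.Perm (Fin n) × (Fin n → Fin c)) :
    ∀ j : Fin n, Fin (c * (j.val + 1)) :=
  fun j => ⟨c * lcode σ.1 j + (σ.2 j : ℕ),
    enc2_lt (lcode_le σ.1 j) (σ.2 j).isLt⟩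

lemma colored_eq (σ : Equiv.Perm (Fin n) × (Fin n → Fin c)) :
    ((Finset.univ : Finset (Fin n × Fin n)).filter
      (fun p => p.1 < p.2 ∧ σ.1 p.1 < σ.1 p.2 ∧ (σ.2 p.2 : ℕ) ≠ 0)).card
    = ∑ j : Fin n, if (σ.2 j : ℕ) = 0 then 0 else (j.val - lcode σ.1 j) := by
  rw [card_filter_pair]
  refine Finset.sum_congr rfl fun j _ => ?_
  by_cases h : (σ.2 j : ℕ) = 0
  · simp [h]
  · rw [if_neg h, ← acode_eq σ.1 j]
    congr 1
    ext i
    simp [h, and_assoc]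

lemma invNum_eq (π : Equiv.Perm (Fin n)) : invNum π = ∑ j : Fin n, lcode π j := by
  rw [invNum, card_filter_pair]
  rfl

lemma invC_eq_sum (hc : 1 ≤ c) (σ : Equiv.Perm (Fin n) × (Fin n → Fin c)) :
    invC c σ = ∑ j : Fin n, (code1 hc σ j : ℕ) := by
  rw [invC, invNum_eq, colored_eq, Finset.mul_sum, ← Finset.sum_add_distrib,
    ← Finset.sum_add_distrib]
  refine Finset.sum_congr rfl fun j _ => ?_
  show _ = enc1 c j.val (lcode σ.1 j) (σ.2 j : ℕ)
  unfold enc1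
  by_cases h : (σ.2 j : ℕ) = 0 <;> simp [h]

lemma stat2_eq_sum (σ : Equiv.Perm (Fin n) × (Fin n → Fin c)) :
    c * invNum σ.1 + ∑ j, (σ.2 j : ℕ) = ∑ j : Fin n, (code2 σ j : ℕ) := by
  rw [invNum_eq, Finset.mul_sum, ← Finset.sum_add_distrib]
  rfl

lemma card_eq (hc : 1 ≤ c) :
    Fintype.card (Equiv.Perm (Fin n) × (Fin n → Fin c))
      = Fintype.card (∀ j : Fin n, Fin (c * (j.val + 1))) := by
  rw [Fintype.card_prod, Fintype.card_perm, Fintype.card_fun, Fintype.card_pi]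
  simp only [Fintype.card_fin]
  rw [Finset.prod_mul_distrib, Finset.prod_const, Finset.card_univ, Fintype.card_fin,
    Fin.prod_univ_eq_prod_range (fun i => i + 1), Finset.prod_range_add_one_eq_factorial]
  ring

lemma code1_injective (hc : 1 ≤ c) :
    Function.Injective (code1 (c := c) (n := n) hc) := by
  intro σ σ' h
  have h' : ∀ j : Fin n, lcode σ.1 j = lcode σ'.1 j ∧ (σ.2 j : ℕ) = (σ'.2 j : ℕ) := by
    intro j
    have := congrFun h j
    exact enc1_inj hc (lcode_le σ.1 j) (lcode_le σ'.1 j) (σ.2 j).isLt (σ'.2 j).isLt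
      (congrArg Fin.val this)
  have h1 : σ.1 = σ'.1 := lcode_injective (funext fun j => (h' j).1)
  have h2 : σ.2 = σ'.2 := funext fun j => Fin.ext (h' j).2
  exact Prod.ext h1 h2

lemma code2_injective :
    Function.Injective (code2 (c := c) (n := n)) := by
  intro σ σ' h
  have h' : ∀ j : Fin n, lcode σ.1 j = lcode σ'.1 j ∧ (σ.2 j : ℕ) = (σ'.2 j : ℕ) := by
    intro j
    have := congrFun h j
    exact enc2_inj (σ.2 j).isLt (σ'.2 j).isLt (congrArg Fin.val this)
  have h1 : σ.1 = σ'.1 := lcode_injective (funext fun j => (h' j).1)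
  have h2 : σ.2 = σ'.2 := funext fun j => Fin.ext (h' j).2
  exact Prod.ext h1 h2

/-- The statistics `inv_c` and `σ = (π,f) ↦ c·inv(π) + ∑_j f(j)` are
equidistributed on colored permutations of size `n`. -/
theorem invC_equidistributed (c n k : ℕ) (hc : 1 ≤ c) :
    Nat.card {σ : Equiv.Perm (Fin n) × (Fin n → Fin c) // invC c σ = k} =
      Nat.card {σ : Equiv.Perm (Fin n) × (Fin n → Fin c) //
        c * invNum σ.1 + ∑ j, (σ.2 j : ℕ) = k} := by
  have hb1 : Function.Bijective (code1 (c := c) (n := n) hc) :=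
    (Fintype.bijective_iff_injective_and_card _).mpr ⟨code1_injective hc, card_eq hc⟩
  have hb2 : Function.Bijective (code2 (c := c) (n := n)) :=
    (Fintype.bijective_iff_injective_and_card _).mpr ⟨code2_injective, card_eq hc⟩
  have E1 := Equiv.ofBijective _ hb1
  have E2 := Equiv.ofBijective _ hb2
  have e1 : Nat.card {σ : Equiv.Perm (Fin n) × (Fin n → Fin c) // invC c σ = k}
      = Nat.card {g : ∀ j : Fin n, Fin (c * (j.val + 1)) // ∑ j, (g j : ℕ) = k} := by
    refine Nat.card_congr (Equiv.subtypeEquiv (Equiv.ofBijective _ hb1) fun σ => ?_)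
    rw [invC_eq_sum hc σ]
    rfl
  have e2 : Nat.card {σ : Equiv.Perm (Fin n) × (Fin n → Fin c) //
        c * invNum σ.1 + ∑ j, (σ.2 j : ℕ) = k}
      = Nat.card {g : ∀ j : Fin n, Fin (c * (j.val + 1)) // ∑ j, (g j : ℕ) = k} := by
    refine Nat.card_congr (Equiv.subtypeEquiv (Equiv.ofBijective _ hb2) fun σ => ?_)
    rw [stat2_eq_sum σ]
    rfl
  rw [e1, e2]

end main
end
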